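/- arXiv:math/0312453 — 8 statements merged into one kernel-verified Lean document; each statement's English description precedes it below -/
import Mathlib

section
/- Let n ≥ 1 be an integer, let a be a complex number with Re a > −1, and let f : ℝ^n → ℂ be a measurable function that is homogeneous of degree a − n on the positive orthant, i.e. f(λx) = λ^{a−n} f(x) for all λ > 0 and all x ∈ (0,∞)^n, where λ^{a−n} = exp((a−n)·log λ). Assume f is absolutely integrable on Ω_n. Then Γ(a+1) · ∫_{Ω_n} f(x) dx = ∫_{(0,∞)^n} f(y) · e^{−∑_{i=1}^n y_i} dy, both integrals being with respect to Lebesgue measure on ℝ^n and the right-hand integral converging. -/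
open MeasureTheory Finset Set Pointwise

namespace GammaHomAux

noncomputable section

variable {n : ℕ}

/-- scaled open simplex -/
def A (n : ℕ) (t : ℝ) : Set (Fin n → ℝ) := {y | (∀ i, 0 < y i) ∧ ∑ i, y i < t}

lemma measurableSet_pos : MeasurableSet {y : Fin n → ℝ | ∀ i, 0 < y i} := by
  have h : {y : Fin n → ℝ | ∀ i, 0 < y i} = ⋂ i, {y | 0 < y i} := by ext; simp
  rw [h]
  exact MeasurableSet.iInter fun i =>
    measurableSet_lt measurable_const (measurable_pi_apply i)

lemma measurableSet_A (t : ℝ) : MeasurableSet (A n t) :=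
  measurableSet_pos.inter (measurableSet_lt
    (Finset.measurable_sum univ fun i _ => measurable_pi_apply i) measurable_const)

lemma smul_A {t : ℝ} (ht : 0 < t) : t • A n 1 = A n t := by
  ext y
  rw [Set.mem_smul_set_iff_inv_smul_mem₀ ht.ne']
  simp only [A, Set.mem_setOf_eq, Pi.smul_apply, smul_eq_mul, ← Finset.mul_sum]
  constructor
  · rintro ⟨h1, h2⟩
    refine ⟨fun i => ?_, ?_⟩
    · have := h1 i
      have h0 : 0 < t⁻¹ := inv_pos.2 ht
      nlinarith [this, h0]
    · have := (inv_mul_lt_iff₀ ht).1 h2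
      linarith
  · rintro ⟨h1, h2⟩
    refine ⟨fun i => ?_, ?_⟩
    · have := h1 i; positivity
    · rw [inv_mul_lt_iff₀ ht, mul_one]; exact h2

lemma mem_A_smul_iff {t : ℝ} (ht : 0 < t) {x : Fin n → ℝ} :
    t • x ∈ A n t ↔ x ∈ A n 1 := by
  rw [← smul_A ht]; exact Set.smul_mem_smul_set_iff₀ ht.ne' _ _

lemma A_empty (hn : 1 ≤ n) {s : ℝ} (hs : s ≤ 0) : A n s = ∅ := by
  ext y
  simp only [A, Set.mem_setOf_eq, Set.mem_empty_iff_false, iff_false, not_and]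
  intro h1 h2
  have : (0:ℝ) < ∑ i, y i := Finset.sum_pos (fun i _ => h1 i) (by
    have : Nonempty (Fin n) := ⟨⟨0, hn⟩⟩
    exact Finset.univ_nonempty)
  linarith

lemma sum_hyperplane_null (hn : 1 ≤ n) (c : ℝ) :
    (volume : Measure (Fin n → ℝ)) {x | ∑ i, x i = c} = 0 := by
  classical
  set L : (Fin n → ℝ) →ₗ[ℝ] ℝ := ∑ i, LinearMap.proj i with hL
  have hLapp : ∀ x : Fin n → ℝ, L x = ∑ i, x i := by
    intro x
    simp [hL, LinearMap.sum_apply, LinearMap.proj_apply]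
  have hKne : LinearMap.ker L ≠ ⊤ := by
    intro h
    have h1 : (fun _ => (1:ℝ)) ∈ LinearMap.ker L := h ▸ Submodule.mem_top
    rw [LinearMap.mem_ker, hLapp] at h1
    simp at h1
    omega
  set v : Fin n → ℝ := fun _ => c / n with hv
  have hsv : ∑ i, v i = c := by
    rw [hv]
    simp
    field_simp
  have hset : {x : Fin n → ℝ | ∑ i, x i = c} =
      (fun x => (-v) + x) ⁻¹' (LinearMap.ker L : Set (Fin n → ℝ)) := by
    ext x
    simp only [Set.mem_setOf_eq, Set.mem_preimage, SetLike.mem_coe, LinearMap.mem_ker,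
      hLapp]
    simp only [Pi.add_apply, Pi.neg_apply]
    rw [Finset.sum_add_distrib, Finset.sum_neg_distrib, hsv]
    constructor
    · intro h; rw [h]; ring
    · intro h; linarith
  rw [hset, measure_preimage_add]
  exact Measure.addHaar_submodule _ _ hKne

lemma coord_zero_null (i : Fin n) :
    (volume : Measure (Fin n → ℝ)) {x | x i = 0} = 0 := by
  rw [MeasureTheory.volume_pi]
  exact MeasureTheory.Measure.pi_hyperplane _ i 0

lemma omega_ae_eq (hn : 1 ≤ n) :
    A n 1 =ᵐ[(volume : Measure (Fin n → ℝ))]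
      {x : Fin n → ℝ | (∀ i, 0 ≤ x i) ∧ ∑ i, x i ≤ 1} := by
  rw [MeasureTheory.ae_eq_set]
  constructor
  · rw [Set.diff_eq_empty.2]
    · exact measure_empty
    · intro x hx
      exact ⟨fun i => (hx.1 i).le, hx.2.le⟩
  · refine measure_mono_null (fun x hx => ?_)
      (measure_union_null (measure_iUnion_null fun i => coord_zero_null i)
        (sum_hyperplane_null hn 1))
    obtain ⟨⟨h0, h1⟩, h2⟩ := hx
    simp only [A, Set.mem_setOf_eq, not_and, not_lt, Set.mem_union, Set.mem_iUnion] at *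
    by_cases hall : ∀ i, 0 < x i
    · exact Or.inr (le_antisymm h1 (h2 hall))
    · push_neg at hall
      obtain ⟨i, hi⟩ := hall
      exact Or.inl ⟨i, le_antisymm hi (h0 i)⟩

variable (a : ℂ) (f : (Fin n → ℝ) → ℂ)
variable (hhom : ∀ l : ℝ, 0 < l → ∀ x : Fin n → ℝ, (∀ i, 0 < x i) →
      f (l • x) = (l : ℂ) ^ (a - (n : ℂ)) * f x)
  (h1 : IntegrableOn f (A n 1))

include hhom h1 in
lemma key1 {t : ℝ} (ht : 0 < t) : IntegrableOn f (A n t) := by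
  refine (integrable_indicator_iff (measurableSet_A t)).1 ?_
  rw [← integrable_comp_smul_iff volume ((A n t).indicator f) ht.ne']
  have heq : (fun x => (A n t).indicator f (t • x))
      = (A n 1).indicator (fun x => f (t • x)) := by
    funext x
    by_cases hx : x ∈ A n 1
    · rw [Set.indicator_of_mem hx, Set.indicator_of_mem ((mem_A_smul_iff ht).2 hx)]
    · rw [Set.indicator_of_notMem hx,
        Set.indicator_of_notMem (fun h => hx ((mem_A_smul_iff ht).1 h))]
  rw [heq, integrable_indicator_iff (measurableSet_A 1)]
  have h2 : IntegrableOn (fun x => (t : ℂ) ^ (a - (n : ℂ)) * f x) (A n 1) := h1.const_mul _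
  refine h2.congr_fun (fun x hx => ?_) (measurableSet_A 1)
  exact (hhom t ht x hx.1).symm

include hhom in
lemma key2 {t : ℝ} (ht : 0 < t) :
    ∫ x in A n t, f x = (t : ℂ) ^ a * ∫ x in A n 1, f x := by
  have h := Measure.setIntegral_comp_smul_of_pos volume f (A n 1) ht
  rw [Module.finrank_fin_fun ℝ, smul_A ht] at h
  have h2 : ∫ x in A n 1, f (t • x) = (t : ℂ) ^ (a - (n : ℂ)) * ∫ x in A n 1, f x := by
    rw [← integral_const_mul]
    exact setIntegral_congr_fun (measurableSet_A 1) fun x hx => hhom t ht x hx.1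
  rw [h2] at h
  have ht0 : (t : ℂ) ≠ 0 := Complex.ofReal_ne_zero.2 ht.ne'
  have hpow : (t : ℂ) ^ a = (t : ℂ) ^ (a - (n : ℂ)) * (t : ℂ) ^ (n : ℕ) := by
    rw [← Complex.cpow_natCast, ← Complex.cpow_add _ _ ht0]
    norm_num
  have htn : (0:ℝ) < t ^ n := pow_pos ht n
  rw [hpow]
  have h3 := congrArg (fun z => (t ^ n : ℝ) • z) h
  rw [smul_smul, mul_inv_cancel₀ htn.ne', one_smul] at h3
  rw [← h3, Complex.real_smul]
  push_cast
  ring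

include hhom in
lemma key3 {t : ℝ} (ht : 0 < t) :
    ∫ x in A n t, ‖f x‖ = t ^ a.re * ∫ x in A n 1, ‖f x‖ := by
  have h := Measure.setIntegral_comp_smul_of_pos volume (fun x => ‖f x‖) (A n 1) ht
  rw [Module.finrank_fin_fun ℝ, smul_A ht] at h
  have h2 : ∫ x in A n 1, ‖f (t • x)‖ = t ^ (a.re - n) * ∫ x in A n 1, ‖f x‖ := by
    rw [← integral_const_mul]
    refine setIntegral_congr_fun (measurableSet_A 1) fun x hx => ?_
    rw [hhom t ht x hx.1, norm_mul,
      Complex.norm_cpow_eq_rpow_re_of_pos ht]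
    simp [Complex.sub_re]
  rw [h2] at h
  have htn : (0:ℝ) < t ^ n := pow_pos ht n
  have h3 := congrArg (fun z => (t ^ n : ℝ) • z) h
  rw [smul_smul, mul_inv_cancel₀ htn.ne', one_smul] at h3
  rw [← h3, smul_eq_mul, ← mul_assoc]
  congr 1
  rw [← Real.rpow_natCast t n, ← Real.rpow_add ht]
  congr 1
  ring

end

end GammaHomAux

open GammaHomAux

/-- For `f` measurable and homogeneous of degree `a - n` on the positive orthant
(`Re a > -1`), integrable on the simplex `Ω_n`, we have
`Γ(a+1) ∫_{Ω_n} f(x) dx = ∫_{(0,∞)^n} f(y) e^{-∑ y_i} dy`,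
with the right-hand integral converging. -/
theorem gamma_homogeneous_simplex_integral (n : ℕ) (hn : 1 ≤ n) (a : ℂ)
    (ha : -1 < a.re) (f : (Fin n → ℝ) → ℂ) (hmeas : Measurable f)
    (hhom : ∀ l : ℝ, 0 < l → ∀ x : Fin n → ℝ, (∀ i, 0 < x i) →
      f (l • x) = (l : ℂ) ^ (a - (n : ℂ)) * f x)
    (hint : IntegrableOn f {x : Fin n → ℝ | (∀ i, 0 ≤ x i) ∧ ∑ i, x i ≤ 1}) :
    IntegrableOn (fun y => f y * Complex.exp (-∑ i, (y i : ℂ)))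
        {y : Fin n → ℝ | ∀ i, 0 < y i} ∧
      Complex.Gamma (a + 1) *
          ∫ x in {x : Fin n → ℝ | (∀ i, 0 ≤ x i) ∧ ∑ i, x i ≤ 1}, f x =
        ∫ y in {y : Fin n → ℝ | ∀ i, 0 < y i},
          f y * Complex.exp (-∑ i, (y i : ℂ)) := by
  classical
  have hA1sub : A n 1 ⊆ {x : Fin n → ℝ | (∀ i, 0 ≤ x i) ∧ ∑ i, x i ≤ 1} :=
    fun x hx => ⟨fun i => (hx.1 i).le, hx.2.le⟩
  have h1 : IntegrableOn f (A n 1) := hint.mono_set hA1sub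
  set C : ℂ := ∫ x in A n 1, f x with hC
  set C' : ℝ := ∫ x in A n 1, ‖f x‖ with hC'
  set S : Set (ℝ × (Fin n → ℝ)) := {p | (∀ i, 0 < p.2 i) ∧ ∑ i, p.2 i < p.1} with hS
  set F : ℝ × (Fin n → ℝ) → ℂ :=
    S.indicator (fun p => Complex.exp (-(p.1:ℂ)) * f p.2) with hF
  have hSm : MeasurableSet S := by
    have hrep : S = (⋂ i, {p : ℝ × (Fin n → ℝ) | 0 < p.2 i})
        ∩ {p : ℝ × (Fin n → ℝ) | ∑ i, p.2 i < p.1} := by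
      ext p; simp [hS]
    rw [hrep]
    exact (MeasurableSet.iInter fun i : Fin n => measurableSet_lt measurable_const
        (measurable_snd.eval)).inter
      (measurableSet_lt
        ((Finset.measurable_sum univ fun i _ => (measurable_snd.eval : Measurable fun p : ℝ × (Fin n → ℝ) => p.2 i)))
        measurable_fst)
  have hFm : Measurable F := by
    refine Measurable.indicator ?_ hSm
    exact ((Complex.measurable_exp.comp
      (Complex.measurable_ofReal.comp measurable_fst).neg).mul (hmeas.comp measurable_snd))
  -- slices
  have hslice : ∀ (s : ℝ) (y : Fin n → ℝ),
      F (s, y) = (A n s).indicator (fun y => Complex.exp (-(s:ℂ)) * f y) y := by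
    intro s y
    by_cases hy : y ∈ A n s
    · rw [Set.indicator_of_mem hy, hF, Set.indicator_of_mem]
      exact hy
    · rw [Set.indicator_of_notMem hy, hF, Set.indicator_of_notMem]
      exact hy
  have hslice_int : ∀ s : ℝ, Integrable (fun y => F (s, y)) := by
    intro s
    simp only [hslice]
    rcases lt_or_ge 0 s with hs | hs
    · rw [integrable_indicator_iff (measurableSet_A s)]
      exact (key1 a f hhom h1 hs).const_mul _
    · rw [A_empty hn hs]
      simp only [Set.indicator_empty]
      exact integrable_zero _ _ _
  -- norm of slices
  have hnorm_eq : (fun s : ℝ => ∫ y, ‖F (s, y)‖)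
      = (Ioi (0:ℝ)).indicator (fun s => Real.exp (-s) * (s ^ a.re * C')) := by
    funext s
    rcases lt_or_ge 0 s with hs | hs
    · rw [Set.indicator_of_mem (Set.mem_Ioi.2 hs)]
      simp only [hslice, norm_indicator_eq_indicator_norm]
      rw [integral_indicator (measurableSet_A s)]
      have hnm : ∀ y : Fin n → ℝ, ‖Complex.exp (-(s:ℂ)) * f y‖ = Real.exp (-s) * ‖f y‖ := by
        intro y
        rw [norm_mul, Complex.norm_exp]
        norm_num
      simp only [hnm]
      rw [integral_const_mul, key3 a f hhom hs]
    · rw [Set.indicator_of_notMem (by simpa using hs)]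
      simp only [hslice, A_empty hn hs, Set.indicator_empty]
      simp
  have hnorm_int : Integrable
      ((Ioi (0:ℝ)).indicator (fun s => Real.exp (-s) * (s ^ a.re * C'))) := by
    rw [integrable_indicator_iff measurableSet_Ioi]
    have h := Real.GammaIntegral_convergent (s := a.re + 1) (by linarith)
    simp only [add_sub_cancel_right] at h
    have h2 := h.mul_const C'
    exact IntegrableOn.congr_fun h2 (fun x _ => by ring) measurableSet_Ioi
  -- integrability of F on the product
  have hF_int : Integrable F ((volume : Measure ℝ).prod (volume : Measure (Fin n → ℝ))) := by
    refine (integrable_prod_iff hFm.aestronglyMeasurable).2 ⟨ae_of_all _ hslice_int, ?_⟩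
    rw [hnorm_eq]
    exact hnorm_int
  -- the marginal in y
  have hmarg : ∀ y : Fin n → ℝ, (∫ s : ℝ, F (s, y))
      = Set.indicator {y : Fin n → ℝ | ∀ i, 0 < y i}
          (fun y => f y * Complex.exp (-∑ i, (y i : ℂ))) y := by
    intro y
    by_cases hy : ∀ i, 0 < y i
    · have hset : (fun s => F (s, y))
          = (Ioi (∑ i, y i)).indicator (fun s => Complex.exp (-(s:ℂ)) * f y) := by
        funext s
        by_cases hs : ∑ i, y i < s
        · rw [Set.indicator_of_mem (Set.mem_Ioi.2 hs), hF,
            Set.indicator_of_mem (show (s, y) ∈ S from ⟨hy, hs⟩)]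
        · rw [Set.indicator_of_notMem (fun h => hs (Set.mem_Ioi.1 h)), hF,
            Set.indicator_of_notMem (show (s, y) ∉ S from fun h => hs h.2)]
      rw [hset, integral_indicator measurableSet_Ioi, integral_mul_const]
      have hexp : ∫ s in Ioi (∑ i, y i), Complex.exp (-(s:ℂ))
          = Complex.exp (-((∑ i, y i : ℝ) : ℂ)) := by
        have hc : ∀ s : ℝ, Complex.exp (-(s:ℂ)) = ((Real.exp (-s) : ℝ) : ℂ) := by
          intro s
          rw [Complex.ofReal_exp, Complex.ofReal_neg]
        have h0 : ∫ s in Ioi (∑ i, y i), Real.exp (-s) = Real.exp (-(∑ i, y i)) :=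
          integral_exp_neg_Ioi _
        calc ∫ s in Ioi (∑ i, y i), Complex.exp (-(s:ℂ))
            = ∫ s in Ioi (∑ i, y i), ((Real.exp (-s) : ℝ) : ℂ) := by simp only [hc]
          _ = ((∫ s in Ioi (∑ i, y i), Real.exp (-s) : ℝ) : ℂ) := integral_ofReal
          _ = Complex.exp (-((∑ i, y i : ℝ) : ℂ)) := by
              rw [h0, Complex.ofReal_exp, Complex.ofReal_neg]
      rw [hexp, Set.indicator_of_mem (show y ∈ {y : Fin n → ℝ | ∀ i, 0 < y i} from hy)]
      rw [mul_comm]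
      congr 1
      congr 1
      push_cast
      ring
    · have hzero : (fun s => F (s, y)) = fun _ => 0 := by
        funext s
        rw [hF, Set.indicator_of_notMem (show (s, y) ∉ S from fun h => hy h.1)]
      rw [hzero, integral_zero,
        Set.indicator_of_notMem (show y ∉ {y : Fin n → ℝ | ∀ i, 0 < y i} from hy)]
  -- conclusion 1 : integrability
  have hmargint : Integrable (fun y : Fin n → ℝ => ∫ s : ℝ, F (s, y)) :=
    hF_int.integral_prod_right
  have hconc1 : IntegrableOn (fun y => f y * Complex.exp (-∑ i, (y i : ℂ)))
      {y : Fin n → ℝ | ∀ i, 0 < y i} := by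
    rw [← integrable_indicator_iff measurableSet_pos]
    exact hmargint.congr (ae_of_all _ hmarg)
  refine ⟨hconc1, ?_⟩
  -- the inner integral in y for fixed s
  have hinner : ∀ s : ℝ, (∫ y : Fin n → ℝ, F (s, y))
      = (Ioi (0:ℝ)).indicator (fun s : ℝ => Complex.exp (-(s:ℂ)) * ((s:ℂ) ^ a * C)) s := by
    intro s
    rcases lt_or_ge 0 s with hs | hs
    · rw [Set.indicator_of_mem (Set.mem_Ioi.2 hs)]
      simp only [hslice]
      rw [integral_indicator (measurableSet_A s), integral_const_mul,
        key2 a f hhom hs]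
    · rw [Set.indicator_of_notMem (by simpa using hs)]
      simp only [hslice, A_empty hn hs, Set.indicator_empty]
      simp
  -- Gamma as an integral
  have hG : Complex.Gamma (a + 1) = ∫ s in Ioi (0:ℝ), Complex.exp (-(s:ℂ)) * (s:ℂ) ^ a := by
    rw [Complex.Gamma_eq_integral (by simp; linarith), Complex.GammaIntegral]
    refine setIntegral_congr_fun measurableSet_Ioi fun x _ => ?_
    rw [add_sub_cancel_right, Complex.ofReal_exp, Complex.ofReal_neg]
  -- assemble
  have hswap : (∫ y : Fin n → ℝ, ∫ s : ℝ, F (s, y)) = ∫ s : ℝ, ∫ y : Fin n → ℝ, F (s, y) :=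
    (integral_integral_swap (f := fun s y => F (s, y)) hF_int).symm
  have hLHSΩ : (∫ x in {x : Fin n → ℝ | (∀ i, 0 ≤ x i) ∧ ∑ i, x i ≤ 1}, f x) = C :=
    (setIntegral_congr_set (omega_ae_eq hn)).symm
  rw [hLHSΩ]
  calc Complex.Gamma (a + 1) * C
      = (∫ s in Ioi (0:ℝ), Complex.exp (-(s:ℂ)) * (s:ℂ) ^ a) * C := by rw [hG]
    _ = ∫ s in Ioi (0:ℝ), Complex.exp (-(s:ℂ)) * ((s:ℂ) ^ a * C) := by
        rw [← integral_mul_const]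
        simp only [mul_assoc]
    _ = ∫ s : ℝ, (Ioi (0:ℝ)).indicator
          (fun s : ℝ => Complex.exp (-(s:ℂ)) * ((s:ℂ) ^ a * C)) s := by
        rw [integral_indicator measurableSet_Ioi]
    _ = ∫ s : ℝ, ∫ y : Fin n → ℝ, F (s, y) := by
        simp only [hinner]
    _ = ∫ y : Fin n → ℝ, ∫ s : ℝ, F (s, y) := hswap.symm
    _ = ∫ y : Fin n → ℝ, Set.indicator {y : Fin n → ℝ | ∀ i, 0 < y i}
          (fun y => f y * Complex.exp (-∑ i, (y i : ℂ))) y := by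
        simp only [hmarg]
    _ = ∫ y in {y : Fin n → ℝ | ∀ i, 0 < y i},
          f y * Complex.exp (-∑ i, (y i : ℂ)) := integral_indicator measurableSet_pos
end

section
/- Let n ≥ 1 be an integer and let κ be a complex number with Re κ > 0. Then ∫_{(0,∞)^n} D_n(y²) · D_n(y) · ∏_{i=1}^n y_i^{κ−1} · e^{−∑_{i=1}^n y_i} dy = n! · det( (Γ(2i + j + κ − 3)) )_{i,j=1,…,n}, the determinant of the n×n matrix with (i,j) entry Γ(2i+j+κ−3). -/
open MeasureTheory Finset Set Equiv

lemma gamma_shift (κ : ℂ) (hκ : 0 < κ.re) (m : ℕ) :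
    (IntegrableOn (fun y : ℝ => (y:ℂ)^m * (y:ℂ)^(κ-1) * Complex.exp (-(y:ℂ))) (Ioi 0)) ∧
    ∫ y in Ioi (0:ℝ), (y:ℂ)^m * (y:ℂ)^(κ-1) * Complex.exp (-(y:ℂ)) = Complex.Gamma (κ + m) := by
  have hre : 0 < (κ + m).re := by
    simp only [Complex.add_re, Complex.natCast_re]
    positivity
  have heq : ∀ y ∈ Ioi (0:ℝ),
      (fun x : ℝ => ((-x).exp : ℂ) * (x:ℂ) ^ (κ + m - 1)) y
        = (y:ℂ)^m * (y:ℂ)^(κ-1) * Complex.exp (-(y:ℂ)) := by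
    intro y hy
    have hy0 : (y:ℂ) ≠ 0 := by
      exact_mod_cast ne_of_gt (mem_Ioi.mp hy)
    have h1 : κ + m - 1 = (m:ℂ) + (κ - 1) := by ring
    simp only [h1, Complex.cpow_add _ _ hy0, Complex.cpow_natCast,
      Complex.ofReal_exp, Complex.ofReal_neg]
    ring
  constructor
  · exact (Complex.GammaIntegral_convergent hre).congr_fun heq measurableSet_Ioi
  · rw [← setIntegral_congr_fun measurableSet_Ioi heq,
      ← Complex.GammaIntegral, Complex.Gamma_eq_integral hre]

lemma orthant_pi (n : ℕ) (g : Fin n → ℝ → ℂ) (hg : ∀ i, IntegrableOn (g i) (Ioi 0)) :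
    IntegrableOn (fun y : Fin n → ℝ => ∏ i, g i (y i)) {y | ∀ i, 0 < y i} ∧
    ∫ y in {y : Fin n → ℝ | ∀ i, 0 < y i}, ∏ i, g i (y i)
      = ∏ i, ∫ t in Ioi (0:ℝ), g i t := by
  have hS : MeasurableSet {y : Fin n → ℝ | ∀ i, 0 < y i} := by
    have : {y : Fin n → ℝ | ∀ i, 0 < y i} = Set.pi univ (fun _ => Ioi 0) := by
      ext y; simp [Set.mem_pi]
    rw [this]
    exact MeasurableSet.univ_pi (fun _ => measurableSet_Ioi)
  set G : Fin n → ℝ → ℂ := fun i => (Ioi (0:ℝ)).indicator (g i) with hG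
  have hGint : ∀ i, Integrable (G i) := fun i =>
    (integrable_indicator_iff measurableSet_Ioi).mpr (hg i)
  have hpt : ∀ y : Fin n → ℝ,
      ({y : Fin n → ℝ | ∀ i, 0 < y i}).indicator (fun y => ∏ i, g i (y i)) y
        = ∏ i, G i (y i) := by
    intro y
    by_cases h : ∀ i, 0 < y i
    · rw [Set.indicator_of_mem (show y ∈ {y : Fin n → ℝ | ∀ i, 0 < y i} from h)]
      exact Finset.prod_congr rfl fun i _ => (Set.indicator_of_mem (h i) _).symm
    · rw [Set.indicator_of_notMem (show y ∉ {y : Fin n → ℝ | ∀ i, 0 < y i} from h)]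
      push_neg at h
      obtain ⟨i, hi⟩ := h
      exact (Finset.prod_eq_zero (Finset.mem_univ i)
        (by simp [hG, Set.indicator_of_notMem, Set.mem_Ioi, not_lt.mpr hi])).symm
  have hprod : Integrable (fun y : Fin n → ℝ => ∏ i, G i (y i)) :=
    Integrable.fintype_prod hGint
  constructor
  · rw [← integrable_indicator_iff hS]
    exact hprod.congr (by filter_upwards with y using (hpt y).symm)
  · rw [← integral_indicator hS]
    simp_rw [hpt]
    rw [integral_fintype_prod_volume_eq_prod G]
    exact Finset.prod_congr rfl fun i _ => integral_indicator measurableSet_Ioi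

noncomputable def fκ (κ : ℂ) (m : ℕ) (t : ℝ) : ℂ :=
  (t:ℂ)^m * (t:ℂ)^(κ-1) * Complex.exp (-(t:ℂ))

lemma pointwise_expand (n : ℕ) (κ : ℂ) (y : Fin n → ℝ) :
    ((∏ i : Fin n, ∏ j ∈ Finset.Ioi i, ((y i) ^ 2 - (y j) ^ 2) : ℝ) : ℂ) *
          ((∏ i : Fin n, ∏ j ∈ Finset.Ioi i, (y i - y j) : ℝ) : ℂ) *
          (∏ i : Fin n, ((y i : ℂ) ^ (κ - 1))) *
          Complex.exp (-∑ i, (y i : ℂ)) =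
      ∑ σ : Perm (Fin n), ∑ τ : Perm (Fin n),
        (((Perm.sign σ : ℤ) * (Perm.sign τ : ℤ) : ℤ) : ℂ) *
          ∏ i, fκ κ (2 * ((σ⁻¹ i : Fin n) : ℕ) + ((τ⁻¹ i : Fin n) : ℕ)) (y i) := by
  -- step (a): product of the two Vandermonde-type products equals product of dets
  have ha : (∏ i : Fin n, ∏ j ∈ Finset.Ioi i, ((y i) ^ 2 - (y j) ^ 2)) *
      (∏ i : Fin n, ∏ j ∈ Finset.Ioi i, (y i - y j)) =
      (Matrix.vandermonde (fun i => (y i)^2)).det * (Matrix.vandermonde y).det := by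
    rw [Matrix.det_vandermonde, Matrix.det_vandermonde, ← Finset.prod_mul_distrib,
      ← Finset.prod_mul_distrib]
    simp_rw [← Finset.prod_mul_distrib]
    refine Finset.prod_congr rfl fun i _ => Finset.prod_congr rfl fun j _ => by ring
  have hcast : ∀ v : Fin n → ℝ,
      ((Matrix.vandermonde v).det : ℂ) = (Matrix.vandermonde (fun i => (v i : ℂ))).det := by
    intro v
    calc ((Matrix.vandermonde v).det : ℂ)
        = Complex.ofRealHom (Matrix.vandermonde v).det := rfl
      _ = Matrix.det (Complex.ofRealHom.mapMatrix (Matrix.vandermonde v)) :=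
          RingHom.map_det _ _
      _ = (Matrix.vandermonde (fun i => (v i : ℂ))).det := by
          congr 1
          ext i j
          simp [Matrix.vandermonde, RingHom.mapMatrix_apply, Matrix.map_apply]
  calc ((∏ i : Fin n, ∏ j ∈ Finset.Ioi i, ((y i) ^ 2 - (y j) ^ 2) : ℝ) : ℂ) *
          ((∏ i : Fin n, ∏ j ∈ Finset.Ioi i, (y i - y j) : ℝ) : ℂ) *
          (∏ i : Fin n, ((y i : ℂ) ^ (κ - 1))) *
          Complex.exp (-∑ i, (y i : ℂ))
      = (Matrix.vandermonde (fun i => ((y i : ℂ))^2)).det *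
          (Matrix.vandermonde (fun i => (y i : ℂ))).det *
          (∏ i : Fin n, ((y i : ℂ) ^ (κ - 1))) *
          (∏ i : Fin n, Complex.exp (-(y i : ℂ))) := by
        rw [← Complex.ofReal_mul, ha]
        push_cast [hcast]
        rw [← Complex.exp_sum]
        simp [Finset.sum_neg_distrib]
    _ = ∑ σ : Perm (Fin n), ∑ τ : Perm (Fin n),
        (((Perm.sign σ : ℤ) * (Perm.sign τ : ℤ) : ℤ) : ℂ) *
          ∏ i, fκ κ (2 * ((σ⁻¹ i : Fin n) : ℕ) + ((τ⁻¹ i : Fin n) : ℕ)) (y i) := by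
        have key : ∀ σ τ : Perm (Fin n),
            (∏ i, Matrix.vandermonde (fun i => ((y i : ℂ))^2) (σ i) i) *
            (∏ i, Matrix.vandermonde (fun i => (y i : ℂ)) (τ i) i) *
            (∏ i : Fin n, ((y i : ℂ) ^ (κ - 1))) *
            (∏ i : Fin n, Complex.exp (-(y i : ℂ)))
            = ∏ i, fκ κ (2 * ((σ⁻¹ i : Fin n) : ℕ) + ((τ⁻¹ i : Fin n) : ℕ)) (y i) := by
          intro σ τ
          have h1 : ∏ i, Matrix.vandermonde (fun i => ((y i : ℂ))^2) (σ i) i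
              = ∏ i, ((y i : ℂ))^(2*((σ⁻¹ i : Fin n) : ℕ)) := by
            rw [← Equiv.prod_comp σ (fun i => ((y i : ℂ))^(2*((σ⁻¹ i : Fin n) : ℕ)))]
            refine Finset.prod_congr rfl fun i _ => ?_
            simp [Matrix.vandermonde, ← pow_mul]
          have h2 : ∏ i, Matrix.vandermonde (fun i => (y i : ℂ)) (τ i) i
              = ∏ i, ((y i : ℂ))^(((τ⁻¹ i : Fin n) : ℕ)) := by
            rw [← Equiv.prod_comp τ (fun i => ((y i : ℂ))^(((τ⁻¹ i : Fin n) : ℕ)))]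
            refine Finset.prod_congr rfl fun i _ => ?_
            simp [Matrix.vandermonde]
          rw [h1, h2, ← Finset.prod_mul_distrib, ← Finset.prod_mul_distrib,
            ← Finset.prod_mul_distrib]
          refine Finset.prod_congr rfl fun i _ => ?_
          rw [fκ, pow_add]
        rw [Matrix.det_apply', Matrix.det_apply', Finset.sum_mul_sum]
        simp only [Finset.sum_mul]
        refine Finset.sum_congr rfl fun σ _ => Finset.sum_congr rfl fun τ _ => ?_
        rw [← key σ τ]
        push_cast
        ring

lemma sum_perm (n : ℕ) (G : ℕ → ℂ) :
    ∑ σ : Perm (Fin n), ∑ τ : Perm (Fin n),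
        (((Perm.sign σ : ℤ) * (Perm.sign τ : ℤ) : ℤ) : ℂ) *
          ∏ i, G (2 * ((σ⁻¹ i : Fin n) : ℕ) + ((τ⁻¹ i : Fin n) : ℕ))
      = (n.factorial : ℂ) * ∑ ρ : Perm (Fin n), ((Perm.sign ρ : ℤ) : ℂ) *
          ∏ i : Fin n, G (2 * (i : ℕ) + ((ρ i : Fin n) : ℕ)) := by
  set F : Perm (Fin n) → Perm (Fin n) → ℂ := fun σ τ =>
    (((Perm.sign σ : ℤ) * (Perm.sign τ : ℤ) : ℤ) : ℂ) *
      ∏ i, G (2 * ((σ i : Fin n) : ℕ) + ((τ i : Fin n) : ℕ)) with hF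
  calc ∑ σ : Perm (Fin n), ∑ τ : Perm (Fin n),
        (((Perm.sign σ : ℤ) * (Perm.sign τ : ℤ) : ℤ) : ℂ) *
          ∏ i, G (2 * ((σ⁻¹ i : Fin n) : ℕ) + ((τ⁻¹ i : Fin n) : ℕ))
      = ∑ σ : Perm (Fin n), ∑ τ : Perm (Fin n), F σ⁻¹ τ⁻¹ := by
        refine Finset.sum_congr rfl fun σ _ => Finset.sum_congr rfl fun τ _ => ?_
        simp [hF, Equiv.Perm.sign_inv]
    _ = ∑ σ : Perm (Fin n), ∑ τ : Perm (Fin n), F σ⁻¹ τ := by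
        refine Finset.sum_congr rfl fun σ _ => ?_
        exact Equiv.sum_comp (Equiv.inv (Perm (Fin n))) (fun τ => F σ⁻¹ τ)
    _ = ∑ σ : Perm (Fin n), ∑ τ : Perm (Fin n), F σ τ :=
        Equiv.sum_comp (Equiv.inv (Perm (Fin n))) (fun σ => ∑ τ, F σ τ)
    _ = ∑ σ : Perm (Fin n), ∑ ρ : Perm (Fin n), F σ (ρ * σ) := by
        refine Finset.sum_congr rfl fun σ _ => ?_
        exact (Equiv.sum_comp (Equiv.mulRight σ) (F σ)).symm
    _ = ∑ σ : Perm (Fin n), ∑ ρ : Perm (Fin n), ((Perm.sign ρ : ℤ) : ℂ) *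
          ∏ i : Fin n, G (2 * (i : ℕ) + ((ρ i : Fin n) : ℕ)) := by
        refine Finset.sum_congr rfl fun σ _ => Finset.sum_congr rfl fun ρ _ => ?_
        have hsgn : (Perm.sign σ) * (Perm.sign (ρ * σ)) = Perm.sign ρ := by
          rw [map_mul, mul_comm (Perm.sign ρ) (Perm.sign σ), ← mul_assoc,
            Int.units_mul_self, one_mul]
        have hprod : ∏ i, G (2 * ((σ i : Fin n) : ℕ) + (((ρ * σ) i : Fin n) : ℕ))
            = ∏ i : Fin n, G (2 * (i : ℕ) + ((ρ i : Fin n) : ℕ)) := by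
          rw [← Equiv.prod_comp σ (fun i => G (2 * (i : ℕ) + ((ρ i : Fin n) : ℕ)))]
          exact Finset.prod_congr rfl fun i _ => by simp [Perm.mul_apply]
        rw [hF]
        simp only []
        rw [hprod]
        congr 1
        rw [← hsgn]
        push_cast
        ring
    _ = (n.factorial : ℂ) * ∑ ρ : Perm (Fin n), ((Perm.sign ρ : ℤ) : ℂ) *
          ∏ i : Fin n, G (2 * (i : ℕ) + ((ρ i : Fin n) : ℕ)) := by
        rw [Finset.sum_const, nsmul_eq_mul]
        congr 1
        simp [Fintype.card_perm]

lemma det_sum (n : ℕ) (κ : ℂ) :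
    ∑ ρ : Perm (Fin n), ((Perm.sign ρ : ℤ) : ℂ) *
        ∏ i : Fin n, Complex.Gamma (κ + ((2 * (i : ℕ) + ((ρ i : Fin n) : ℕ) : ℕ) : ℂ))
      = Matrix.det (Matrix.of fun i j : Fin n =>
          Complex.Gamma (((2 * ((i : ℕ) + 1) + ((j : ℕ) + 1) : ℕ) : ℂ) + κ - 3)) := by
  set M : Matrix (Fin n) (Fin n) ℂ := Matrix.of fun i j : Fin n =>
    Complex.Gamma (((2 * ((i : ℕ) + 1) + ((j : ℕ) + 1) : ℕ) : ℂ) + κ - 3) with hM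
  rw [← Matrix.det_transpose M, Matrix.det_apply']
  refine Finset.sum_congr rfl fun ρ _ => ?_
  congr 1
  refine Finset.prod_congr rfl fun i _ => ?_
  show Complex.Gamma _ = M i (ρ i)
  rw [hM]
  simp only [Matrix.of_apply]
  congr 1
  push_cast
  ring
/-- `∫_{(0,∞)^n} D_n(y²) D_n(y) ∏ y_i^{κ-1} e^{-∑ y_i} dy
  = n! · det(Γ(2i + j + κ - 3))_{i,j=1,…,n}`. -/
theorem orthant_integral_eq_gamma_det (n : ℕ) (hn : 1 ≤ n) (κ : ℂ) (hκ : 0 < κ.re) :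
    ∫ y in {y : Fin n → ℝ | ∀ i, 0 < y i},
        ((∏ i : Fin n, ∏ j ∈ Finset.Ioi i, ((y i) ^ 2 - (y j) ^ 2) : ℝ) : ℂ) *
          ((∏ i : Fin n, ∏ j ∈ Finset.Ioi i, (y i - y j) : ℝ) : ℂ) *
          (∏ i : Fin n, ((y i : ℂ) ^ (κ - 1))) *
          Complex.exp (-∑ i, (y i : ℂ)) =
      (n.factorial : ℂ) *
        Matrix.det (Matrix.of fun i j : Fin n =>
          Complex.Gamma (((2 * ((i : ℕ) + 1) + ((j : ℕ) + 1) : ℕ) : ℂ) + κ - 3)) := by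
  have hfκ : ∀ m : ℕ, IntegrableOn (fκ κ m) (Set.Ioi 0) ∧
      ∫ t in Set.Ioi (0:ℝ), fκ κ m t = Complex.Gamma (κ + m) := fun m => gamma_shift κ hκ m
  -- integrability of each summand
  have hint : ∀ σ τ : Equiv.Perm (Fin n),
      IntegrableOn (fun y : Fin n → ℝ =>
          (((Equiv.Perm.sign σ : ℤ) * (Equiv.Perm.sign τ : ℤ) : ℤ) : ℂ) *
            ∏ i, fκ κ (2 * ((σ⁻¹ i : Fin n) : ℕ) + ((τ⁻¹ i : Fin n) : ℕ)) (y i))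
        {y : Fin n → ℝ | ∀ i, 0 < y i} := by
    intro σ τ
    exact ((orthant_pi n _ (fun i => (hfκ _).1)).1).const_mul _
  calc ∫ y in {y : Fin n → ℝ | ∀ i, 0 < y i},
        ((∏ i : Fin n, ∏ j ∈ Finset.Ioi i, ((y i) ^ 2 - (y j) ^ 2) : ℝ) : ℂ) *
          ((∏ i : Fin n, ∏ j ∈ Finset.Ioi i, (y i - y j) : ℝ) : ℂ) *
          (∏ i : Fin n, ((y i : ℂ) ^ (κ - 1))) *
          Complex.exp (-∑ i, (y i : ℂ))
      = ∫ y in {y : Fin n → ℝ | ∀ i, 0 < y i},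
          ∑ σ : Equiv.Perm (Fin n), ∑ τ : Equiv.Perm (Fin n),
            (((Equiv.Perm.sign σ : ℤ) * (Equiv.Perm.sign τ : ℤ) : ℤ) : ℂ) *
              ∏ i, fκ κ (2 * ((σ⁻¹ i : Fin n) : ℕ) + ((τ⁻¹ i : Fin n) : ℕ)) (y i) := by
        exact integral_congr_ae (Filter.Eventually.of_forall fun y => pointwise_expand n κ y)
    _ = ∑ σ : Equiv.Perm (Fin n), ∑ τ : Equiv.Perm (Fin n),
          ∫ y in {y : Fin n → ℝ | ∀ i, 0 < y i},
            (((Equiv.Perm.sign σ : ℤ) * (Equiv.Perm.sign τ : ℤ) : ℤ) : ℂ) *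
              ∏ i, fκ κ (2 * ((σ⁻¹ i : Fin n) : ℕ) + ((τ⁻¹ i : Fin n) : ℕ)) (y i) := by
        rw [integral_finset_sum _ (fun σ _ => integrable_finset_sum _ (fun τ _ => hint σ τ))]
        exact Finset.sum_congr rfl fun σ _ => integral_finset_sum _ (fun τ _ => hint σ τ)
    _ = ∑ σ : Equiv.Perm (Fin n), ∑ τ : Equiv.Perm (Fin n),
          (((Equiv.Perm.sign σ : ℤ) * (Equiv.Perm.sign τ : ℤ) : ℤ) : ℂ) *
            ∏ i : Fin n, Complex.Gamma
              (κ + ((2 * ((σ⁻¹ i : Fin n) : ℕ) + ((τ⁻¹ i : Fin n) : ℕ) : ℕ) : ℂ)) := by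
        refine Finset.sum_congr rfl fun σ _ => Finset.sum_congr rfl fun τ _ => ?_
        rw [integral_const_mul, (orthant_pi n _ (fun i => (hfκ _).1)).2]
        congr 1
        exact Finset.prod_congr rfl fun i _ => (hfκ _).2
    _ = (n.factorial : ℂ) * ∑ ρ : Equiv.Perm (Fin n), ((Equiv.Perm.sign ρ : ℤ) : ℂ) *
          ∏ i : Fin n, Complex.Gamma (κ + ((2 * (i : ℕ) + ((ρ i : Fin n) : ℕ) : ℕ) : ℂ)) :=
        sum_perm n (fun m => Complex.Gamma (κ + m))
    _ = (n.factorial : ℂ) *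
        Matrix.det (Matrix.of fun i j : Fin n =>
          Complex.Gamma (((2 * ((i : ℕ) + 1) + ((j : ℕ) + 1) : ℕ) : ℂ) + κ - 3)) := by
        rw [det_sum n κ]
end

section
/- Let n ≥ 1 be an integer and let κ be a complex number with Re κ > 0. Then ∫_{(0,∞)^n} D_n(y²) · D_n(y) · ∏_{i=1}^n y_i^{κ−1} · e^{−∑_{i=1}^n y_i} dy = n! · 2^{n(n−1)/2} · ∏_{i=0}^{n−1} i! · Γ(κ+2i). -/
open MeasureTheory Finset

section Aux

open Equiv Polynomial

noncomputable def Tfun (κ : ℂ) (a b : ℕ) (t : ℝ) : ℂ :=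
  (t:ℂ)^a * (t:ℂ)^(2*b) * (t:ℂ)^(κ-1) * Complex.exp (-t)

lemma Tfun_eq (κ : ℂ) (a b : ℕ) {t : ℝ} (ht : 0 < t) :
    Tfun κ a b t = ((Real.exp (-t) : ℝ) : ℂ) * (t:ℂ)^((κ + a + 2*b) - 1) := by
  have h0 : (t:ℂ) ≠ 0 := by exact_mod_cast ht.ne'
  have h1 : (t:ℂ)^a = (t:ℂ)^((a:ℕ):ℂ) := (Complex.cpow_natCast _ _).symm
  have h2 : (t:ℂ)^(2*b) = (t:ℂ)^(((2*b:ℕ)):ℂ) := (Complex.cpow_natCast _ _).symm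
  rw [Tfun, h1, h2, ← Complex.cpow_add _ _ h0, ← Complex.cpow_add _ _ h0,
    Complex.ofReal_exp, Complex.ofReal_neg]
  rw [mul_comm]
  congr 1
  push_cast
  ring

lemma Tfun_re_pos (κ : ℂ) (hκ : 0 < κ.re) (a b : ℕ) : 0 < (κ + a + 2*b).re := by
  simp only [Complex.add_re, Complex.natCast_re, Complex.mul_re]
  norm_num
  positivity

lemma Tfun_integrableOn (κ : ℂ) (hκ : 0 < κ.re) (a b : ℕ) :
    IntegrableOn (Tfun κ a b) (Set.Ioi 0) := by
  refine (Complex.GammaIntegral_convergent (Tfun_re_pos κ hκ a b)).congr_fun ?_ measurableSet_Ioi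
  intro t ht
  exact (Tfun_eq κ a b ht).symm

lemma Tfun_integral (κ : ℂ) (hκ : 0 < κ.re) (a b : ℕ) :
    ∫ t in Set.Ioi (0:ℝ), Tfun κ a b t = Complex.Gamma (κ + a + 2*b) := by
  rw [Complex.Gamma_eq_integral (Tfun_re_pos κ hκ a b), Complex.GammaIntegral]
  exact setIntegral_congr_fun measurableSet_Ioi fun t ht => Tfun_eq κ a b ht

lemma Gamma_shift (z : ℂ) (hz : 0 < z.re) (a : ℕ) :
    Complex.Gamma (z + a) = (∏ t ∈ range a, (z + t)) * Complex.Gamma z := by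
  induction a with
  | zero => simp
  | succ a ih =>
    have hne : z + a ≠ 0 := by
      intro h
      have h2 : (z + (a:ℂ)).re = 0 := by rw [h]; simp
      simp only [Complex.add_re, Complex.natCast_re] at h2
      have : (0:ℝ) < z.re + a := by positivity
      linarith
    have hc : ((a+1:ℕ) : ℂ) = (a:ℂ) + 1 := by push_cast; ring
    rw [hc, ← add_assoc, Complex.Gamma_add_one _ hne, ih, prod_range_succ]
    ring

lemma vandermonde_nat_det (n : ℕ) :
    (Matrix.vandermonde (fun i : Fin n => (i : ℂ))).det = ∏ i ∈ range n, (i.factorial : ℂ) := by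
  cases n with
  | zero => simp [Matrix.det_vandermonde]
  | succ m =>
    rw [Matrix.det_vandermonde_id_eq_superFactorial m, ← Nat.prod_range_succ_factorial m]
    push_cast
    rfl

lemma vandermonde_affine_det (n : ℕ) (κ : ℂ) :
    (Matrix.vandermonde (fun b : Fin n => κ + 2*(b:ℕ))).det
      = (2:ℂ) ^ (n*(n-1)/2) * ∏ i ∈ range n, (i.factorial : ℂ) := by
  rw [Matrix.det_vandermonde]
  have step1 : ∀ i j : Fin n, (κ + 2*(j:ℕ)) - (κ + 2*(i:ℕ)) = 2 * (((j:ℕ):ℂ) - ((i:ℕ):ℂ)) := by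
    intro i j; ring
  calc (∏ i : Fin n, ∏ j ∈ Ioi i, ((κ + 2*(j:ℕ)) - (κ + 2*(i:ℕ))))
      = ∏ i : Fin n, ∏ j ∈ Ioi i, ((2:ℂ) * (((j:ℕ):ℂ) - ((i:ℕ):ℂ))) := by
        simp_rw [step1]
    _ = (∏ i : Fin n, ∏ j ∈ Ioi i, (2:ℂ))
        * ∏ i : Fin n, ∏ j ∈ Ioi i, (((j:ℕ):ℂ) - ((i:ℕ):ℂ)) := by
        simp [Finset.prod_mul_distrib]
    _ = (2:ℂ) ^ (n*(n-1)/2) * ∏ i ∈ range n, (i.factorial : ℂ) := by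
        congr 1
        · simp only [Finset.prod_const, Finset.prod_pow_eq_pow_sum]
          congr 1
          simp only [Fin.card_Ioi]
          rw [Fin.sum_univ_eq_sum_range (fun i => n - 1 - i) n,
            Finset.sum_range_reflect (fun j => j) n, Finset.sum_range_id]
        · rw [← vandermonde_nat_det n, Matrix.det_vandermonde]

lemma det_key (n : ℕ) (κ : ℂ) (hκ : 0 < κ.re) :
    (Matrix.of fun a b : Fin n => Complex.Gamma (κ + (a:ℕ) + 2*(b:ℕ))).det
      = (2:ℂ) ^ (n*(n-1)/2) * (∏ i ∈ range n, (i.factorial : ℂ))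
        * ∏ i ∈ range n, Complex.Gamma (κ + 2*i) := by
  have hcol : ∀ a b : Fin n, Complex.Gamma (κ + (a:ℕ) + 2*(b:ℕ))
      = Complex.Gamma (κ + 2*(b:ℕ)) * (∏ t ∈ range (a:ℕ), ((κ + 2*(b:ℕ)) + t)) := by
    intro a b
    have hre : 0 < (κ + 2*((b:ℕ):ℂ)).re := by
      simp only [Complex.add_re, Complex.mul_re]
      norm_num
      positivity
    have h : κ + (a:ℕ) + 2*((b:ℕ):ℂ) = (κ + 2*(b:ℕ)) + (a:ℕ) := by ring
    rw [h, Gamma_shift _ hre, mul_comm]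
  set A : Matrix (Fin n) (Fin n) ℂ :=
    Matrix.of fun a b : Fin n => ∏ t ∈ range (a:ℕ), ((κ + 2*((b:ℕ):ℂ)) + t) with hA
  have h1 : (Matrix.of fun a b : Fin n => Complex.Gamma (κ + (a:ℕ) + 2*(b:ℕ))).det
      = (∏ b : Fin n, Complex.Gamma (κ + 2*((b:ℕ):ℂ))) * A.det := by
    rw [← Matrix.det_mul_row]
    congr 1
    ext a b
    exact hcol a b
  set p : Fin n → ℂ[X] := fun a => ∏ t ∈ range (a:ℕ), (X + C (t:ℂ)) with hp
  have hmonic : ∀ a : Fin n, (p a).Monic :=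
    fun a => monic_prod_of_monic _ _ fun t _ => monic_X_add_C _
  have hdeg : ∀ a : Fin n, (p a).natDegree = a := by
    intro a
    rw [hp]
    simp only
    rw [Polynomial.natDegree_prod_of_monic _ _ fun t _ => monic_X_add_C _]
    simp only [Polynomial.natDegree_X_add_C]
    simp
  have h2 : A.det = (Matrix.vandermonde (fun b : Fin n => κ + 2*((b:ℕ):ℂ))).det := by
    rw [← Matrix.det_transpose A]
    have hAt : A.transpose = Matrix.of fun i j : Fin n =>
        (p j).eval (κ + 2*((i:ℕ):ℂ)) := by
      ext i j
      simp [hA, hp, Matrix.transpose_apply, Polynomial.eval_prod]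
    rw [hAt, ← Matrix.det_eval_matrixOfPolynomials_eq_det_vandermonde
      (fun b : Fin n => κ + 2*((b:ℕ):ℂ)) p hdeg hmonic]
  rw [h1, h2, vandermonde_affine_det n κ,
    Fin.prod_univ_eq_prod_range (fun i => Complex.Gamma (κ + 2*(i:ℕ))) n]
  ring

lemma perm_sum (n : ℕ) (f : Fin n → Fin n → ℂ) :
    ∑ σ : Perm (Fin n), ∑ τ : Perm (Fin n),
      (((Perm.sign σ : ℤ):ℂ) * ((Perm.sign τ : ℤ):ℂ)) * ∏ i, f (τ⁻¹ i) (σ⁻¹ i)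
    = (n.factorial : ℂ) * (Matrix.of fun a b : Fin n => f a b).det := by
  have sgn_sq : ∀ σ : Perm (Fin n), ((Perm.sign σ : ℤ):ℂ) * ((Perm.sign σ : ℤ):ℂ) = 1 := by
    intro σ
    rw [← Int.cast_mul, ← Units.val_mul, Int.units_mul_self]
    norm_num
  have h1 : ∑ σ : Perm (Fin n), ∑ τ : Perm (Fin n),
      (((Perm.sign σ : ℤ):ℂ) * ((Perm.sign τ : ℤ):ℂ)) * ∏ i, f (τ⁻¹ i) (σ⁻¹ i)
      = ∑ σ : Perm (Fin n), ∑ τ : Perm (Fin n),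
      (((Perm.sign σ : ℤ):ℂ) * ((Perm.sign τ : ℤ):ℂ)) * ∏ i, f (τ i) (σ i) := by
    rw [← Equiv.sum_comp (Equiv.inv (Perm (Fin n)))
      (fun σ => ∑ τ : Perm (Fin n),
        (((Perm.sign σ : ℤ):ℂ) * ((Perm.sign τ : ℤ):ℂ)) * ∏ i, f (τ i) (σ i))]
    refine Finset.sum_congr rfl fun σ _ => ?_
    rw [← Equiv.sum_comp (Equiv.inv (Perm (Fin n)))
      (fun τ => (((Perm.sign ((Equiv.inv (Perm (Fin n))) σ) : ℤ):ℂ) * ((Perm.sign τ : ℤ):ℂ))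
        * ∏ i, f (τ i) ((Equiv.inv (Perm (Fin n)) σ) i))]
    refine Finset.sum_congr rfl fun τ _ => ?_
    simp [Equiv.inv_apply, Equiv.Perm.sign_inv]
  rw [h1]
  have h2 : ∀ σ : Perm (Fin n), ∑ τ : Perm (Fin n),
      (((Perm.sign σ : ℤ):ℂ) * ((Perm.sign τ : ℤ):ℂ)) * ∏ i, f (τ i) (σ i)
      = ∑ π : Perm (Fin n), ((Perm.sign π : ℤ):ℂ) * ∏ j, f (π j) j := by
    intro σ
    rw [← Equiv.sum_comp (Equiv.mulRight σ)
      (fun τ => (((Perm.sign σ : ℤ):ℂ) * ((Perm.sign τ : ℤ):ℂ)) * ∏ i, f (τ i) (σ i))]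
    refine Finset.sum_congr rfl fun π _ => ?_
    have hprod : ∏ i, f ((π * σ) i) (σ i) = ∏ j, f (π j) j := by
      rw [← Equiv.prod_comp σ (fun j => f (π j) j)]
      rfl
    have hsgn : ((Perm.sign σ : ℤ):ℂ) * ((Perm.sign (π * σ) : ℤ):ℂ) = ((Perm.sign π : ℤ):ℂ) := by
      rw [Equiv.Perm.sign_mul]
      push_cast
      rw [mul_comm ((Perm.sign π : ℤ):ℂ), ← mul_assoc, sgn_sq, one_mul]
    simp only [Equiv.coe_mulRight]
    rw [hprod, hsgn]
  simp_rw [h2]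
  rw [Finset.sum_const, card_univ, Fintype.card_perm, Fintype.card_fin, nsmul_eq_mul,
    Matrix.det_apply']
  simp [Matrix.of_apply]

lemma expand (n : ℕ) (κ : ℂ) (y : Fin n → ℝ) :
    (Matrix.vandermonde (fun i => ((y i : ℂ))^2)).det
      * (Matrix.vandermonde (fun i => (y i : ℂ))).det
      * (∏ i, (y i : ℂ)^(κ-1)) * Complex.exp (-∑ i, (y i : ℂ))
    = ∑ σ : Perm (Fin n), ∑ τ : Perm (Fin n),
        (((Perm.sign σ : ℤ):ℂ) * ((Perm.sign τ : ℤ):ℂ))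
          * ∏ i, Tfun κ ((τ⁻¹ i : Fin n) : ℕ) ((σ⁻¹ i : Fin n) : ℕ) (y i) := by
  rw [Matrix.det_apply', Matrix.det_apply', Finset.sum_mul, Finset.sum_mul, Finset.sum_mul]
  refine Finset.sum_congr rfl fun σ _ => ?_
  rw [Finset.mul_sum, Finset.sum_mul, Finset.sum_mul]
  refine Finset.sum_congr rfl fun τ _ => ?_
  have hsq : ∏ i, (Matrix.vandermonde (fun i => ((y i : ℂ))^2)) (σ i) i
      = ∏ k, (y k : ℂ)^(2*((σ⁻¹ k : Fin n) : ℕ)) := by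
    rw [← Equiv.prod_comp σ (fun k => (y k : ℂ)^(2*((σ⁻¹ k : Fin n) : ℕ)))]
    refine Finset.prod_congr rfl fun i _ => ?_
    rw [Matrix.vandermonde, Equiv.Perm.inv_def, Equiv.symm_apply_apply]
    rw [Matrix.of_apply, ← pow_mul]
  have hlin : ∏ i, (Matrix.vandermonde (fun i => (y i : ℂ))) (τ i) i
      = ∏ k, (y k : ℂ)^((τ⁻¹ k : Fin n) : ℕ) := by
    rw [← Equiv.prod_comp τ (fun k => (y k : ℂ)^((τ⁻¹ k : Fin n) : ℕ))]
    refine Finset.prod_congr rfl fun i _ => ?_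
    rw [Matrix.vandermonde, Equiv.Perm.inv_def, Equiv.symm_apply_apply, Matrix.of_apply]
  have hexp : Complex.exp (-∑ i, (y i : ℂ)) = ∏ i, Complex.exp (-(y i : ℂ)) := by
    rw [← Complex.exp_sum, ← Finset.sum_neg_distrib]
  rw [hsq, hlin, hexp]
  have hT : ∏ i, Tfun κ ((τ⁻¹ i : Fin n) : ℕ) ((σ⁻¹ i : Fin n) : ℕ) (y i)
      = (∏ k, (y k : ℂ)^((τ⁻¹ k : Fin n) : ℕ)) * (∏ k, (y k : ℂ)^(2*((σ⁻¹ k : Fin n) : ℕ)))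
        * (∏ i, (y i : ℂ)^(κ-1)) * ∏ i, Complex.exp (-(y i : ℂ)) := by
    rw [← Finset.prod_mul_distrib, ← Finset.prod_mul_distrib, ← Finset.prod_mul_distrib]
    rfl
  rw [hT]
  ring

lemma prod_flip (n : ℕ) (g h : Fin n → ℂ) :
    (∏ i : Fin n, ∏ j ∈ Ioi i, (g i - g j)) * (∏ i : Fin n, ∏ j ∈ Ioi i, (h i - h j))
    = (∏ i : Fin n, ∏ j ∈ Ioi i, (g j - g i)) * (∏ i : Fin n, ∏ j ∈ Ioi i, (h j - h i)) := by
  have key : ∀ f : Fin n → ℂ, (∏ i : Fin n, ∏ j ∈ Ioi i, (f i - f j))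
      = (∏ i : Fin n, ∏ j ∈ Ioi i, (-1:ℂ)) * ∏ i : Fin n, ∏ j ∈ Ioi i, (f j - f i) := by
    intro f
    rw [← Finset.prod_mul_distrib]
    refine Finset.prod_congr rfl fun i _ => ?_
    rw [← Finset.prod_mul_distrib]
    exact Finset.prod_congr rfl fun j _ => by ring
  have sq : (∏ i : Fin n, ∏ j ∈ Ioi i, (-1:ℂ)) * (∏ i : Fin n, ∏ j ∈ Ioi i, (-1:ℂ)) = 1 := by
    rw [← Finset.prod_mul_distrib]
    refine Finset.prod_eq_one fun i _ => ?_
    rw [← Finset.prod_mul_distrib]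
    exact Finset.prod_eq_one fun j _ => by ring
  rw [key g, key h, mul_mul_mul_comm, sq, one_mul]

lemma indicator_pi_prod (n : ℕ) (g : Fin n → ℝ → ℂ) :
    Set.indicator (Set.univ.pi fun _ : Fin n => Set.Ioi (0:ℝ)) (fun y => ∏ i, g i (y i))
    = fun y => ∏ i, Set.indicator (Set.Ioi (0:ℝ)) (g i) (y i) := by
  funext y
  by_cases h : y ∈ Set.univ.pi fun _ : Fin n => Set.Ioi (0:ℝ)
  · rw [Set.indicator_of_mem h]
    exact Finset.prod_congr rfl fun i _ =>
      (Set.indicator_of_mem (h i (Set.mem_univ i)) _).symm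
  · rw [Set.indicator_of_notMem h]
    obtain ⟨i, hi⟩ : ∃ i, y i ∉ Set.Ioi (0:ℝ) := by
      simpa [Set.mem_pi] using h
    exact (Finset.prod_eq_zero (mem_univ i) (by simp [Set.indicator_of_notMem hi])).symm

end Aux

/-- `∫_{(0,∞)^n} D_n(y²) D_n(y) ∏ y_i^{κ-1} e^{-∑ y_i} dy
  = n! · 2^{n(n-1)/2} · ∏_{i=0}^{n-1} i! Γ(κ+2i)`. -/
theorem orthant_integral_evaluated (n : ℕ) (hn : 1 ≤ n) (κ : ℂ) (hκ : 0 < κ.re) :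
    ∫ y in {y : Fin n → ℝ | ∀ i, 0 < y i},
        ((∏ i : Fin n, ∏ j ∈ Finset.Ioi i, ((y i) ^ 2 - (y j) ^ 2) : ℝ) : ℂ) *
          ((∏ i : Fin n, ∏ j ∈ Finset.Ioi i, (y i - y j) : ℝ) : ℂ) *
          (∏ i : Fin n, ((y i : ℂ) ^ (κ - 1))) *
          Complex.exp (-∑ i, (y i : ℂ)) =
      (n.factorial : ℂ) * (2 : ℂ) ^ (n * (n - 1) / 2) *
        ∏ i ∈ Finset.range n, (Nat.factorial i : ℂ) * Complex.Gamma (κ + 2 * i) := by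
  classical
  set S : Set (Fin n → ℝ) := Set.univ.pi fun _ : Fin n => Set.Ioi (0:ℝ) with hSdef
  have hSmeas : MeasurableSet S := MeasurableSet.univ_pi fun _ => measurableSet_Ioi
  have hSet : {y : Fin n → ℝ | ∀ i, 0 < y i} = S := by
    ext y
    simp [hSdef, Set.mem_pi]
  rw [hSet]
  -- rewrite integrand via the expansion
  have hintegrand : ∀ y : Fin n → ℝ,
      ((∏ i : Fin n, ∏ j ∈ Finset.Ioi i, ((y i) ^ 2 - (y j) ^ 2) : ℝ) : ℂ) *
          ((∏ i : Fin n, ∏ j ∈ Finset.Ioi i, (y i - y j) : ℝ) : ℂ) *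
          (∏ i : Fin n, ((y i : ℂ) ^ (κ - 1))) *
          Complex.exp (-∑ i, (y i : ℂ))
      = ∑ σ : Equiv.Perm (Fin n), ∑ τ : Equiv.Perm (Fin n),
        (((Equiv.Perm.sign σ : ℤ):ℂ) * ((Equiv.Perm.sign τ : ℤ):ℂ))
          * ∏ i, Tfun κ ((τ⁻¹ i : Fin n) : ℕ) ((σ⁻¹ i : Fin n) : ℕ) (y i) := by
    intro y
    rw [← expand n κ y]
    have hc : ((∏ i : Fin n, ∏ j ∈ Finset.Ioi i, ((y i) ^ 2 - (y j) ^ 2) : ℝ) : ℂ) *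
        ((∏ i : Fin n, ∏ j ∈ Finset.Ioi i, (y i - y j) : ℝ) : ℂ)
        = (∏ i : Fin n, ∏ j ∈ Finset.Ioi i, ((y i : ℂ)^2 - (y j : ℂ)^2)) *
          (∏ i : Fin n, ∏ j ∈ Finset.Ioi i, ((y i : ℂ) - (y j : ℂ))) := by
      push_cast
      rfl
    rw [hc, prod_flip n (fun i => (y i : ℂ)^2) (fun i => (y i : ℂ)),
      ← Matrix.det_vandermonde (fun i => ((y i : ℂ))^2),
      ← Matrix.det_vandermonde (fun i => (y i : ℂ))]
  simp only [hintegrand]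
  -- swap integral and sums
  have hterm_int : ∀ (a b : Fin n → Fin n),
      Integrable (fun y : Fin n → ℝ => ∏ i, Tfun κ (a i : ℕ) (b i : ℕ) (y i))
        (volume.restrict S) := by
    intro a b
    refine (integrable_indicator_iff hSmeas).1 ?_
    rw [hSdef, indicator_pi_prod n (fun i => Tfun κ (a i : ℕ) (b i : ℕ))]
    exact Integrable.fintype_prod
      (f := fun i => Set.indicator (Set.Ioi (0:ℝ)) (Tfun κ (a i : ℕ) (b i : ℕ)))
      fun i => (integrable_indicator_iff measurableSet_Ioi).2 (Tfun_integrableOn κ hκ _ _)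
  have hterm_val : ∀ (a b : Fin n → Fin n),
      ∫ y in S, (∏ i, Tfun κ (a i : ℕ) (b i : ℕ) (y i))
      = ∏ i, Complex.Gamma (κ + (a i : ℕ) + 2*(b i : ℕ)) := by
    intro a b
    rw [← integral_indicator hSmeas, hSdef,
      indicator_pi_prod n (fun i => Tfun κ (a i : ℕ) (b i : ℕ)), MeasureTheory.volume_pi]
    beta_reduce
    rw [MeasureTheory.integral_fintype_prod_eq_prod (ι := Fin n)
        (fun i => Set.indicator (Set.Ioi (0:ℝ)) (Tfun κ (a i : ℕ) (b i : ℕ)))]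
    refine Finset.prod_congr rfl fun i _ => ?_
    rw [integral_indicator measurableSet_Ioi]
    exact Tfun_integral κ hκ _ _
  rw [integral_finset_sum _ (fun σ _ => integrable_finset_sum _ (fun τ _ =>
    ((hterm_int (fun i => (τ⁻¹ i)) (fun i => (σ⁻¹ i))).const_mul _)))]
  have hswap : ∀ σ : Equiv.Perm (Fin n),
      ∫ y in S, (∑ τ : Equiv.Perm (Fin n),
        (((Equiv.Perm.sign σ : ℤ):ℂ) * ((Equiv.Perm.sign τ : ℤ):ℂ))
          * ∏ i, Tfun κ ((τ⁻¹ i : Fin n) : ℕ) ((σ⁻¹ i : Fin n) : ℕ) (y i))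
      = ∑ τ : Equiv.Perm (Fin n),
        (((Equiv.Perm.sign σ : ℤ):ℂ) * ((Equiv.Perm.sign τ : ℤ):ℂ))
          * ∏ i, Complex.Gamma (κ + ((τ⁻¹ i : Fin n) : ℕ) + 2*((σ⁻¹ i : Fin n) : ℕ)) := by
    intro σ
    rw [integral_finset_sum _ (fun τ _ =>
      ((hterm_int (fun i => (τ⁻¹ i)) (fun i => (σ⁻¹ i))).const_mul _))]
    refine Finset.sum_congr rfl fun τ _ => ?_
    rw [MeasureTheory.integral_const_mul, hterm_val (fun i => (τ⁻¹ i)) (fun i => (σ⁻¹ i))]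
  simp_rw [hswap]
  rw [perm_sum n (fun a b => Complex.Gamma (κ + (a:ℕ) + 2*(b:ℕ))), det_key n κ hκ]
  rw [Finset.prod_mul_distrib]
  ring
end

section
/- Let p, n be positive integers with 2n < p. If a polynomial function f on the space M_{p,n}(ℂ) of complex p×n matrices vanishes at every matrix A ∈ M_{p,n}(ℂ) satisfying Aᵀ A = 0 and rank A = n, then f vanishes at every matrix A ∈ M_{p,n}(ℂ) satisfying Aᵀ A = 0. (Equivalently, the full-rank locus of the null cone {A : AᵀA = 0} is Zariski dense in it.) -/
open Matrix



open Submodule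

noncomputable def dotL {p : ℕ} (x : Fin p → ℂ) : (Fin p → ℂ) →ₗ[ℂ] ℂ where
  toFun y := ∑ i, x i * y i
  map_add' y z := by simp [mul_add, Finset.sum_add_distrib]
  map_smul' c y := by simp [Finset.mul_sum, mul_left_comm]

lemma exists_isotropic_notmem {p : ℕ} (U W : Submodule ℂ (Fin p → ℂ))
    (hdim : Module.finrank ℂ W + 3 ≤ Module.finrank ℂ U) :
    ∃ v, v ∈ U ∧ v ∉ W ∧ ∑ i, v i * v i = 0 := by
  have hnle : ¬ U ≤ W := fun hle => by
    have := Submodule.finrank_mono hle; omega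
  obtain ⟨x, hxU, hxW⟩ := SetLike.not_le_iff_exists.mp hnle
  by_cases hqx : ∑ i, x i * x i = 0
  · exact ⟨x, hxU, hxW, hqx⟩
  have hx0 : x ≠ 0 := fun h => hxW (h ▸ W.zero_mem)
  set U' : Submodule ℂ (Fin p → ℂ) := U ⊓ LinearMap.ker (dotL x) with hU'
  set W' : Submodule ℂ (Fin p → ℂ) := W ⊔ span ℂ {x} with hW'
  have hkdim : Module.finrank ℂ (LinearMap.ker (dotL x)) + 1 ≥ p := by
    have h1 := LinearMap.finrank_range_add_finrank_ker (dotL x)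
    have h2 : Module.finrank ℂ (LinearMap.range (dotL x)) ≤ 1 := by
      simpa using Submodule.finrank_le (LinearMap.range (dotL x))
    simp [Module.finrank_pi] at h1
    omega
  have hU'dim : Module.finrank ℂ U' + 1 ≥ Module.finrank ℂ U := by
    rw [hU']
    have h1 := Submodule.finrank_sup_add_finrank_inf_eq U (LinearMap.ker (dotL x))
    have h2 : Module.finrank ℂ ↥(U ⊔ LinearMap.ker (dotL x)) ≤ p := by
      simpa [Module.finrank_pi] using Submodule.finrank_le (U ⊔ LinearMap.ker (dotL x))
    omega
  have hW'dim : Module.finrank ℂ W' ≤ Module.finrank ℂ W + 1 := by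
    rw [hW']
    have h1 := Submodule.finrank_sup_add_finrank_inf_eq W (span ℂ {x})
    have h2 : Module.finrank ℂ (span ℂ ({x} : Set (Fin p → ℂ))) = 1 :=
      finrank_span_singleton hx0
    omega
  have hnle' : ¬ U' ≤ W' := fun hle => by
    have := Submodule.finrank_mono hle; omega
  obtain ⟨y, hyU', hyW'⟩ := SetLike.not_le_iff_exists.mp hnle'
  have hyU : y ∈ U := hyU'.1
  have hxy : ∑ i, x i * y i = 0 := hyU'.2
  by_cases hqy : ∑ i, y i * y i = 0
  · exact ⟨y, hyU, fun hw => hyW' (Submodule.mem_sup_left hw), hqy⟩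
  obtain ⟨c, hc⟩ := IsAlgClosed.exists_pow_nat_eq (k := ℂ)
    (-(∑ i, x i * x i) / (∑ i, y i * y i)) (n := 2) (by norm_num)
  have hc0 : c ≠ 0 := by
    have h2 : c ^ 2 ≠ 0 := by rw [hc]; exact div_ne_zero (neg_ne_zero.mpr hqx) hqy
    exact fun h => h2 (by simp [h])
  refine ⟨x + c • y, U.add_mem hxU (U.smul_mem c hyU), ?_, ?_⟩
  · intro hvW
    apply hyW'
    have hxy' : x + c • y - x ∈ W' := by
      exact W'.sub_mem (Submodule.mem_sup_left hvW)
        (Submodule.mem_sup_right (Submodule.mem_span_singleton_self x))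
    have : c • y ∈ W' := by simpa using hxy'
    have := W'.smul_mem c⁻¹ this
    rwa [smul_smul, inv_mul_cancel₀ hc0, one_smul] at this
  · calc ∑ i, (x + c • y) i * (x + c • y) i
        = ∑ i, (x i * x i + (2*c) * (x i * y i) + c^2 * (y i * y i)) := by
          apply Finset.sum_congr rfl; intros; simp [Pi.add_apply, Pi.smul_apply,
            smul_eq_mul]; ring
      _ = (∑ i, x i * x i) + (2*c) * (∑ i, x i * y i) + c^2 * (∑ i, y i * y i) := by
          rw [Finset.sum_add_distrib, Finset.sum_add_distrib, ← Finset.mul_sum,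
            ← Finset.mul_sum]
      _ = 0 := by rw [hxy, hc, div_mul_cancel₀ _ hqy]; ring

open Matrix Submodule

section main

variable {p n : ℕ}

-- key perturbation step
lemma step_lemma (p n : ℕ) (h : 2 * n < p) (A : Matrix (Fin p) (Fin n) ℂ)
    (h0 : Aᵀ * A = 0) (hrlt : A.rank < n) :
    ∃ B : Matrix (Fin p) (Fin n) ℂ, ∀ t : ℂ, t ≠ 0 →
      (A + t • B)ᵀ * (A + t • B) = 0 ∧ A.rank + 1 ≤ (A + t • B).rank := by
  classical
  -- column space and kernel
  set W : Submodule ℂ (Fin p → ℂ) := span ℂ (Set.range Aᵀ) with hW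
  have hWrank : A.rank = Module.finrank ℂ W := A.rank_eq_finrank_span_cols
  have hUdim : Module.finrank ℂ (LinearMap.ker Aᵀ.mulVecLin) + A.rank = p := by
    have h1 := LinearMap.finrank_range_add_finrank_ker Aᵀ.mulVecLin
    have h2 : Module.finrank ℂ (LinearMap.range Aᵀ.mulVecLin) = A.rank := by
      rw [← Matrix.rank_transpose A]; rfl
    simp [Module.finrank_pi] at h1
    omega
  obtain ⟨v, hvU, hvW, hvv⟩ := exists_isotropic_notmem (LinearMap.ker Aᵀ.mulVecLin) W
    (by rw [← hWrank]; omega)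
  -- orthogonality of v to columns of A
  have hAv : ∀ k, ∑ i, A i k * v i = 0 := by
    intro k
    have h1 : Aᵀ.mulVecLin v = 0 := hvU
    have h2 := congrFun h1 k
    simp only [Matrix.mulVecLin_apply, Matrix.mulVec, dotProduct, Matrix.transpose_apply,
      Pi.zero_apply] at h2
    exact h2
  have hAA : ∀ k l, ∑ i, A i k * A i l = 0 := by
    intro k l
    have h2 := congrFun (congrFun h0 k) l
    simpa [Matrix.mul_apply, Matrix.transpose_apply] using h2
  -- find a dependent column
  have hdep : ∃ j, Aᵀ j ∈ span ℂ (Aᵀ '' (Set.univ \ {j})) := by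
    by_contra hind
    push_neg at hind
    have hli : LinearIndependent ℂ (fun k : Fin n => Aᵀ k) :=
      linearIndependent_iff_notMem_span.mpr hind
    have hcard := finrank_span_eq_card hli
    rw [hWrank] at hrlt
    rw [hW] at hrlt
    simp [hcard] at hrlt
  obtain ⟨j, hj⟩ := hdep
  -- the perturbation matrix
  set E : Matrix (Fin p) (Fin n) ℂ := Matrix.of (fun i k => if k = j then v i else 0) with hE
  refine ⟨E, fun t ht => ⟨?_, ?_⟩⟩
  · -- null cone
    have hAE : Aᵀ * E = 0 := by
      ext k l
      by_cases hl : l = j <;>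
        simp [Matrix.mul_apply, hE, hl, Matrix.transpose_apply, hAv k]
    have hEA : Eᵀ * A = 0 := by
      ext k l
      by_cases hk : k = j <;>
        simp [Matrix.mul_apply, hE, hk, Matrix.transpose_apply, mul_comm, hAv l]
    have hEE : Eᵀ * E = 0 := by
      ext k l
      by_cases hk : k = j <;> by_cases hl : l = j <;>
        simp [Matrix.mul_apply, hE, hk, hl, Matrix.transpose_apply, hvv]
    simp [Matrix.transpose_add, Matrix.transpose_smul, Matrix.add_mul, Matrix.mul_add,
      Matrix.smul_mul, Matrix.mul_smul, h0, hAE, hEA, hEE, smul_smul]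
  · -- rank
    set A' := A + t • E with hA'
    have hcol : ∀ k, k ≠ j → A'ᵀ k = Aᵀ k := by
      intro k hk
      funext i
      simp [hA', hE, Matrix.transpose_apply, hk]
    have hsub : W ≤ span ℂ (Set.range A'ᵀ) := by
      rw [hW, Submodule.span_le]
      rintro _ ⟨k, rfl⟩
      by_cases hk : k = j
      · subst hk
        refine Submodule.span_mono ?_ hj
        rintro _ ⟨w, ⟨_, hw2⟩, rfl⟩
        exact ⟨w, hcol w hw2⟩
      · exact Submodule.subset_span ⟨k, hcol k hk⟩
    have hvmem : v ∈ span ℂ (Set.range A'ᵀ) := by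
      have h1 : A'ᵀ j ∈ span ℂ (Set.range A'ᵀ) := Submodule.subset_span ⟨j, rfl⟩
      have h2 : Aᵀ j ∈ span ℂ (Set.range A'ᵀ) := hsub (Submodule.subset_span ⟨j, rfl⟩)
      have h3 : A'ᵀ j - Aᵀ j = t • v := by
        funext i
        simp [hA', hE, Matrix.transpose_apply]
      have h4 := Submodule.smul_mem _ t⁻¹ (Submodule.sub_mem _ h1 h2)
      rw [h3, smul_smul, inv_mul_cancel₀ ht, one_smul] at h4
      exact h4
    have hlt : W < W ⊔ span ℂ {v} := by
      refine lt_of_le_of_ne le_sup_left (fun hEqn => hvW ?_)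
      rw [hEqn]
      exact Submodule.mem_sup_right (Submodule.mem_span_singleton_self v)
    have h5 : Module.finrank ℂ W < Module.finrank ℂ ↥(W ⊔ span ℂ {v}) :=
      Submodule.finrank_lt_finrank_of_lt hlt
    have h6 : W ⊔ span ℂ {v} ≤ span ℂ (Set.range A'ᵀ) := by
      refine sup_le hsub ?_
      rw [Submodule.span_le, Set.singleton_subset_iff]
      exact hvmem
    have h7 := Submodule.finrank_mono h6
    rw [hWrank, A'.rank_eq_finrank_span_cols]
    have h8 : Module.finrank ℂ (span ℂ (Set.range A'ᵀ)) =
        Module.finrank ℂ (span ℂ (Set.range A'.col)) := rfl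
    omega

end main


/-- If a polynomial function on `M_{p,n}(ℂ)` (with `2n < p`) vanishes on the full-rank
locus of the null cone `{A : AᵀA = 0}`, then it vanishes on the whole null cone. -/
theorem nullcone_full_rank_locus_dense (p n : ℕ) (hp : 0 < p) (hn : 0 < n)
    (h : 2 * n < p) (f : MvPolynomial (Fin p × Fin n) ℂ)
    (hf : ∀ A : Matrix (Fin p) (Fin n) ℂ, Aᵀ * A = 0 → A.rank = n →
      MvPolynomial.eval (fun v => A v.1 v.2) f = 0) :
    ∀ A : Matrix (Fin p) (Fin n) ℂ, Aᵀ * A = 0 →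
      MvPolynomial.eval (fun v => A v.1 v.2) f = 0 := by
  suffices key : ∀ m : ℕ, ∀ A : Matrix (Fin p) (Fin n) ℂ, Aᵀ * A = 0 → n ≤ A.rank + m →
      MvPolynomial.eval (fun v => A v.1 v.2) f = 0 by
    intro A h0
    exact key n A h0 (Nat.le_add_left n _)
  intro m
  induction m with
  | zero =>
    intro A h0 hr
    exact hf A h0 (le_antisymm (Matrix.rank_le_width A) (by omega))
  | succ m ih =>
    intro A h0 hr
    by_cases hcase : n ≤ A.rank + m
    · exact ih A h0 hcase
    push_neg at hcase
    have hrlt : A.rank < n := by omega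
    obtain ⟨B, hB⟩ := step_lemma p n h A h0 hrlt
    -- the one-parameter polynomial
    set g : Polynomial ℂ := MvPolynomial.aeval
      (fun q : Fin p × Fin n => Polynomial.C (A q.1 q.2) + Polynomial.X * Polynomial.C (B q.1 q.2)) f
      with hg
    have heval : ∀ t : ℂ, g.eval t =
        MvPolynomial.eval (fun q => (A + t • B) q.1 q.2) f := by
      intro t
      have hcomp := congrFun (congrArg DFunLike.coe
        (MvPolynomial.comp_aeval (R := ℂ) (Polynomial.aeval t)
          (f := fun q : Fin p × Fin n =>
            Polynomial.C (A q.1 q.2) + Polynomial.X * Polynomial.C (B q.1 q.2)))) f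
      simp only [AlgHom.coe_comp, Function.comp_apply] at hcomp
      have h1 : (Polynomial.aeval t) g = g.eval t := by
        rw [Polynomial.coe_aeval_eq_eval]
      have h2 : (MvPolynomial.aeval fun q : Fin p × Fin n =>
          (Polynomial.aeval t) (Polynomial.C (A q.1 q.2) + Polynomial.X * Polynomial.C (B q.1 q.2))) f
          = MvPolynomial.eval (fun q => (A + t • B) q.1 q.2) f := by
        have h3 : (fun q : Fin p × Fin n =>
            (Polynomial.aeval t) (Polynomial.C (A q.1 q.2) + Polynomial.X * Polynomial.C (B q.1 q.2)))
            = fun q => (A + t • B) q.1 q.2 := by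
          funext q
          simp only [map_add, _root_.map_mul, Polynomial.aeval_C, Polynomial.aeval_X,
            Algebra.algebraMap_self_apply, RingHom.id_apply, Matrix.add_apply, Matrix.smul_apply,
            smul_eq_mul]
        rw [h3]
        have h4 := congrFun (congrArg DFunLike.coe (MvPolynomial.coe_aeval_eq_eval
          (fun q : Fin p × Fin n => (A + t • B) q.1 q.2))) f
        exact h4
      rw [← h1, hg, hcomp, h2]
    have hg0 : g = 0 := by
      apply Polynomial.eq_zero_of_infinite_isRoot
      apply Set.Infinite.mono (s := {t : ℂ | t ≠ 0})
      · intro t ht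
        have ⟨hnull, hrank⟩ := hB t ht
        have := ih (A + t • B) hnull (by omega)
        simp only [Set.mem_setOf_eq, Polynomial.IsRoot, heval t]
        exact this
      · exact Set.Finite.infinite_compl (Set.finite_singleton (0 : ℂ))
    have h5 := heval 0
    rw [hg0] at h5
    simp only [Polynomial.eval_zero] at h5
    have h6 : (fun q : Fin p × Fin n => (A + (0:ℂ) • B) q.1 q.2) = fun q => A q.1 q.2 := by
      funext q; simp
    rw [h6] at h5
    exact h5.symm
end

section
/- Let p, n be positive integers with 2n < p, and let A, A' ∈ M_{p,n}(ℂ) satisfy AᵀA = 0, A'ᵀA' = 0 and rank A = rank A'. Then there exist a complex orthogonal matrix k ∈ O(p,ℂ) (i.e. k ∈ M_p(ℂ) with kᵀk = 1_p) and g ∈ GL_n(ℂ) such that A' = k A gᵀ. (That is, the O(p,ℂ) × GL_n(ℂ)-orbits in the null cone {A : AᵀA = 0} under the action (k,g)·A = kAgᵀ are exactly classified by rank.) -/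
open Matrix

open Matrix Module LinearMap

/-- A matrix of full row rank has a right inverse. -/
lemma exists_right_inv' {l m : Type*} [Fintype l] [Fintype m] [DecidableEq l] [DecidableEq m]
    (K : Matrix l m ℂ) (hK : K.rank = Fintype.card l) : ∃ L : Matrix m l ℂ, K * L = 1 := by
  have hsurj : LinearMap.range K.mulVecLin = ⊤ := by
    apply Submodule.eq_top_of_finrank_eq
    rw [Module.finrank_pi ℂ]
    exact hK
  obtain ⟨g, hg⟩ := K.mulVecLin.exists_rightInverse_of_surjective hsurj
  refine ⟨LinearMap.toMatrix' g, ?_⟩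
  have h1 : (K * LinearMap.toMatrix' g).mulVecLin = (1 : Matrix l l ℂ).mulVecLin := by
    rw [Matrix.mulVecLin_mul, Matrix.mulVecLin_one,
      show (LinearMap.toMatrix' g).mulVecLin = g from LinearMap.toMatrix'.symm_apply_apply g]
    exact hg
  exact LinearMap.toMatrix'.symm.injective h1

/-- A square matrix whose associated linear map is injective is a unit. -/
lemma isUnit_of_mulVecLin_inj {ι : Type*} [Fintype ι] [DecidableEq ι]
    (F : Matrix ι ι ℂ) (h : Function.Injective F.mulVecLin) : IsUnit F := by
  have hr : F.rank = Fintype.card ι := by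
    have := LinearMap.finrank_range_of_inj h
    rw [Module.finrank_pi ℂ] at this
    exact this
  obtain ⟨L, hL⟩ := exists_right_inv' F hr
  rw [Matrix.isUnit_iff_isUnit_det]
  exact IsUnit.of_mul_eq_one L.det (by rw [← Matrix.det_mul, hL, Matrix.det_one])

/-- Any submodule of `ι → ℂ` of finrank `r` is the range of an injective `ι × r` matrix. -/
lemma exists_basis_matrix {ι : Type*} [Fintype ι] [DecidableEq ι] (W : Submodule ℂ (ι → ℂ))
    {r : ℕ} (hW : finrank ℂ W = r) :
    ∃ B : Matrix ι (Fin r) ℂ, LinearMap.range B.mulVecLin = W ∧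
      Function.Injective B.mulVecLin := by
  let b : Basis (Fin r) ℂ W := finBasisOfFinrankEq ℂ W hW
  let f : (Fin r → ℂ) →ₗ[ℂ] ι → ℂ :=
    W.subtype ∘ₗ (b.equivFun.symm : (Fin r → ℂ) ≃ₗ[ℂ] W).toLinearMap
  have hf : (LinearMap.toMatrix' f).mulVecLin = f := LinearMap.toMatrix'.symm_apply_apply f
  refine ⟨LinearMap.toMatrix' f, ?_, ?_⟩
  · rw [hf]
    simp only [f, LinearMap.range_comp, LinearEquiv.range, Submodule.map_top,
      Submodule.range_subtype]
  · rw [hf]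
    exact W.injective_subtype.comp (LinearEquiv.injective _)
open Matrix Module LinearMap

/-- Rank factorization. -/
lemma rank_factorization {p n r : ℕ} (A : Matrix (Fin p) (Fin n) ℂ) (hr : A.rank = r) :
    ∃ (B : Matrix (Fin p) (Fin r) ℂ) (K : Matrix (Fin r) (Fin n) ℂ),
      A = B * K ∧ Function.Injective B.mulVecLin ∧ K.rank = r := by
  obtain ⟨B, hBrange, hBinj⟩ := exists_basis_matrix (LinearMap.range A.mulVecLin) hr
  obtain ⟨hmap, hh⟩ := B.mulVecLin.exists_leftInverse_of_injective (LinearMap.ker_eq_bot.mpr hBinj)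
  have key : B.mulVecLin ∘ₗ (hmap ∘ₗ A.mulVecLin) = A.mulVecLin := by
    refine LinearMap.ext fun v => ?_
    show B.mulVecLin (hmap (A.mulVecLin v)) = A.mulVecLin v
    obtain ⟨u, hu⟩ : A.mulVecLin v ∈ LinearMap.range B.mulVecLin := by
      rw [hBrange]; exact LinearMap.mem_range_self _ v
    rw [← hu, show hmap (B.mulVecLin u) = u from DFunLike.congr_fun hh u]
  have hK : (LinearMap.toMatrix' (hmap ∘ₗ A.mulVecLin)).mulVecLin = hmap ∘ₗ A.mulVecLin :=
    LinearMap.toMatrix'.symm_apply_apply _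
  refine ⟨B, LinearMap.toMatrix' (hmap ∘ₗ A.mulVecLin), ?_, hBinj, ?_⟩
  · apply LinearMap.toMatrix'.symm.injective
    show A.mulVecLin = (B * LinearMap.toMatrix' (hmap ∘ₗ A.mulVecLin)).mulVecLin
    rw [Matrix.mulVecLin_mul, hK, key]
  · unfold Matrix.rank
    rw [hK]
    have h1 : LinearMap.range A.mulVecLin
        = Submodule.map B.mulVecLin (LinearMap.range (hmap ∘ₗ A.mulVecLin)) := by
      rw [← LinearMap.range_comp, key]
    have h2 := (Submodule.equivMapOfInjective _ hBinj
      (LinearMap.range (hmap ∘ₗ A.mulVecLin))).finrank_eq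
    rw [h2, ← h1]
    exact hr
open Matrix Module LinearMap

/-- Two full row rank matrices of the same shape are column-equivalent. -/
lemma column_equiv {r n : ℕ} (K K' : Matrix (Fin r) (Fin n) ℂ)
    (hK : K.rank = r) (hK' : K'.rank = r) :
    ∃ M : Matrix (Fin n) (Fin n) ℂ, IsUnit M ∧ K' = K * M := by
  obtain ⟨L, hL⟩ := exists_right_inv' K (by simpa using hK)
  obtain ⟨L', hL'⟩ := exists_right_inv' K' (by simpa using hK')
  have hsL : K.mulVecLin ∘ₗ L.mulVecLin = LinearMap.id := by
    rw [← Matrix.mulVecLin_mul, hL, Matrix.mulVecLin_one]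
  have hsL' : K'.mulVecLin ∘ₗ L'.mulVecLin = LinearMap.id := by
    rw [← Matrix.mulVecLin_mul, hL', Matrix.mulVecLin_one]
  -- kernels have the same finrank
  have hker : finrank ℂ (LinearMap.ker K'.mulVecLin) = finrank ℂ (LinearMap.ker K.mulVecLin) := by
    have e1 := K.mulVecLin.finrank_range_add_finrank_ker
    have e2 := K'.mulVecLin.finrank_range_add_finrank_ker
    have : (K.rank : ℕ) + finrank ℂ (LinearMap.ker K.mulVecLin)
        = K'.rank + finrank ℂ (LinearMap.ker K'.mulVecLin) := by
      show finrank ℂ (LinearMap.range K.mulVecLin) + _ = finrank ℂ (LinearMap.range K'.mulVecLin) + _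
      rw [e1, e2]
    rw [hK, hK'] at this
    omega
  let e : (LinearMap.ker K'.mulVecLin) ≃ₗ[ℂ] (LinearMap.ker K.mulVecLin) :=
    LinearEquiv.ofFinrankEq _ _ hker
  -- projection onto ker K' along the section L'
  have hproj : ∀ x, K'.mulVecLin (x - L'.mulVecLin (K'.mulVecLin x)) = 0 := by
    intro x
    rw [map_sub, show K'.mulVecLin (L'.mulVecLin (K'.mulVecLin x))
      = (K'.mulVecLin ∘ₗ L'.mulVecLin) (K'.mulVecLin x) from rfl, hsL']
    simp
  let π : (Fin n → ℂ) →ₗ[ℂ] (LinearMap.ker K'.mulVecLin) :=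
    (LinearMap.id - L'.mulVecLin ∘ₗ K'.mulVecLin).codRestrict _ (fun x => hproj x)
  let φ : (Fin n → ℂ) →ₗ[ℂ] (Fin n → ℂ) :=
    L.mulVecLin ∘ₗ K'.mulVecLin + (LinearMap.ker K.mulVecLin).subtype ∘ₗ e.toLinearMap ∘ₗ π
  have hKφ : K.mulVecLin ∘ₗ φ = K'.mulVecLin := by
    refine LinearMap.ext fun x => ?_
    show K.mulVecLin (L.mulVecLin (K'.mulVecLin x) + ((e (π x)) : Fin n → ℂ)) = K'.mulVecLin x
    rw [map_add, show K.mulVecLin (L.mulVecLin (K'.mulVecLin x))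
      = (K.mulVecLin ∘ₗ L.mulVecLin) (K'.mulVecLin x) from rfl, hsL,
      show K.mulVecLin ((e (π x)) : Fin n → ℂ) = 0 from (e (π x)).2]
    simp
  have hφinj : Function.Injective φ := by
    rw [← LinearMap.ker_eq_bot, LinearMap.ker_eq_bot']
    intro x hx
    have hx' : L.mulVecLin (K'.mulVecLin x) + ((e (π x)) : Fin n → ℂ) = 0 := hx
    have h1 : K'.mulVecLin x = 0 := by
      have := congrArg K.mulVecLin hx'
      rw [map_add, show K.mulVecLin (L.mulVecLin (K'.mulVecLin x))
        = (K.mulVecLin ∘ₗ L.mulVecLin) (K'.mulVecLin x) from rfl, hsL,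
        show K.mulVecLin ((e (π x)) : Fin n → ℂ) = 0 from (e (π x)).2, map_zero] at this
      simpa using this
    have h2 : ((e (π x)) : Fin n → ℂ) = 0 := by
      rw [h1, map_zero] at hx'; simpa using hx'
    have h3 : π x = 0 := by
      apply e.injective
      rw [map_zero]
      exact Subtype.ext h2
    have h4 : x - L'.mulVecLin (K'.mulVecLin x) = 0 := congrArg Subtype.val h3
    simpa [h1] using h4
  have hφbij : Function.Bijective φ :=
    ⟨hφinj, (LinearMap.injective_iff_surjective).mp hφinj⟩
  let φe := LinearEquiv.ofBijective φ hφbij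
  refine ⟨LinearMap.toMatrix' φ, ?_, ?_⟩
  · rw [Matrix.isUnit_iff_isUnit_det]
    refine IsUnit.of_mul_eq_one (LinearMap.toMatrix' (φe.symm : (Fin n → ℂ) →ₗ[ℂ] (Fin n → ℂ))).det ?_
    rw [← Matrix.det_mul, ← LinearMap.toMatrix'_comp]
    have : φ ∘ₗ (φe.symm : (Fin n → ℂ) →ₗ[ℂ] (Fin n → ℂ)) = LinearMap.id := by
      refine LinearMap.ext fun x => ?_
      show φe (φe.symm x) = x
      simp
    rw [this, LinearMap.toMatrix'_id, Matrix.det_one]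
  · apply LinearMap.toMatrix'.symm.injective
    show K'.mulVecLin = (K * LinearMap.toMatrix' φ).mulVecLin
    have hφm : (LinearMap.toMatrix' φ).mulVecLin = φ := LinearMap.toMatrix'.symm_apply_apply φ
    rw [Matrix.mulVecLin_mul, hφm, hKφ]
open Matrix Module LinearMap

/-- A symmetric invertible complex matrix is congruent to the identity. -/
lemma exists_congr_one {m : ℕ} (F : Matrix (Fin m) (Fin m) ℂ) (hsym : Fᵀ = F)
    (hF : IsUnit F) : ∃ Q : Matrix (Fin m) (Fin m) ℂ, IsUnit Q ∧ Qᵀ * F * Q = 1 := by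
  set Bf : LinearMap.BilinForm ℂ (Fin m → ℂ) := LinearMap.mk₂ ℂ (fun x y => x ⬝ᵥ F *ᵥ y)
    (fun a b c => by simp [add_dotProduct]) (fun a b c => by simp [smul_dotProduct])
    (fun a b c => by simp [Matrix.mulVec_add, dotProduct_add])
    (fun a b c => by simp [Matrix.mulVec_smul, dotProduct_smul]) with hBf
  have hBfapp : ∀ x y, Bf x y = x ⬝ᵥ (F *ᵥ y) := fun x y => rfl
  have hBsymm : Bf.IsSymm := by
    rw [LinearMap.BilinForm.isSymm_def]
    intro x y
    simp only [RingHom.id_apply, hBfapp]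
    rw [Matrix.dotProduct_mulVec]
    nth_rewrite 1 [← hsym]
    rw [Matrix.vecMul_transpose, dotProduct_comm]
  obtain ⟨v, hv⟩ := LinearMap.BilinForm.exists_orthogonal_basis (LinearMap.BilinForm.isSymm_iff.mp hBsymm)
  have hcard : finrank ℂ (Fin m → ℂ) = m := by
    rw [Module.finrank_pi ℂ]; exact Fintype.card_fin m
  let v' : Basis (Fin m) ℂ (Fin m → ℂ) := v.reindex (finCongr hcard)
  have hv' : ∀ i j, i ≠ j → Bf (v' i) (v' j) = 0 := by
    intro i j hij
    rw [show v' i = v ((finCongr hcard).symm i) from v.reindex_apply (finCongr hcard) i,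
        show v' j = v ((finCongr hcard).symm j) from v.reindex_apply (finCongr hcard) j]
    exact hv (fun hh => hij (by simpa using congrArg (finCongr hcard) hh))
  let Q₀ : Matrix (Fin m) (Fin m) ℂ := (Pi.basisFun ℂ (Fin m)).toMatrix v'
  have hQ₀ : ∀ i j, Q₀ i j = v' j i := by
    intro i j
    simp [Q₀, Basis.toMatrix_apply]
  have hQ₀unit : IsUnit Q₀ := by
    have := (Pi.basisFun ℂ (Fin m)).invertibleToMatrix v'
    exact isUnit_of_invertible Q₀
  set D := Q₀ᵀ * F * Q₀ with hD
  have hDentry : ∀ i j, D i j = Bf (v' i) (v' j) := by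
    intro i j
    rw [hBfapp]
    simp only [hD, Matrix.mul_apply, Matrix.transpose_apply, hQ₀,
      dotProduct, Matrix.mulVec, dotProduct, Finset.sum_mul, Finset.mul_sum]
    rw [Finset.sum_comm]
    refine Finset.sum_congr rfl fun x _ => Finset.sum_congr rfl fun y _ => by ring
  have hDdiag : D = Matrix.diagonal (fun i => D i i) := by
    ext i j
    by_cases hij : i = j
    · subst hij; simp
    · rw [Matrix.diagonal_apply_ne _ hij, hDentry, hv' i j hij]
  have hQ₀t : IsUnit Q₀ᵀ := by
    rw [Matrix.isUnit_iff_isUnit_det, Matrix.det_transpose, ← Matrix.isUnit_iff_isUnit_det]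
    exact hQ₀unit
  have hDunit : IsUnit D := (hQ₀t.mul hF).mul hQ₀unit
  have hdne : ∀ i, D i i ≠ 0 := by
    have hdet : IsUnit D.det := (Matrix.isUnit_iff_isUnit_det D).mp hDunit
    rw [hDdiag, Matrix.det_diagonal] at hdet
    intro i
    exact Finset.prod_ne_zero_iff.mp hdet.ne_zero i (Finset.mem_univ i)
  choose c hc using fun i => IsAlgClosed.exists_pow_nat_eq (k := ℂ) (D i i)⁻¹ (n := 2) (by norm_num)
  have hcne : ∀ i, c i ≠ 0 := by
    intro i hc0
    have h0 := hc i
    rw [hc0] at h0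
    norm_num at h0
    exact hdne i h0.symm
  have hdiagc : IsUnit (Matrix.diagonal c) := by
    rw [Matrix.isUnit_iff_isUnit_det, Matrix.det_diagonal]
    exact (Finset.prod_ne_zero_iff.mpr fun i _ => hcne i).isUnit
  refine ⟨Q₀ * Matrix.diagonal c, hQ₀unit.mul hdiagc, ?_⟩
  rw [Matrix.transpose_mul, Matrix.diagonal_transpose]
  calc Matrix.diagonal c * Q₀ᵀ * F * (Q₀ * Matrix.diagonal c)
      = Matrix.diagonal c * (Q₀ᵀ * F * Q₀) * Matrix.diagonal c := by
        noncomm_ring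
    _ = Matrix.diagonal c * Matrix.diagonal (fun i => D i i) * Matrix.diagonal c := by
        rw [← hD, ← hDdiag]
    _ = Matrix.diagonal (fun i => c i * D i i * c i) := by
        rw [Matrix.diagonal_mul_diagonal, Matrix.diagonal_mul_diagonal]
    _ = 1 := by
        rw [show (fun i => c i * D i i * c i) = fun _ => (1:ℂ) from funext fun i => by
          rw [show c i * D i i * c i = c i ^ 2 * D i i by ring, hc i,
            inv_mul_cancel₀ (hdne i)], Matrix.diagonal_one]
open Matrix Module LinearMap

/-- A rectangular matrix with square-index count and invertible Gram matrix is invertible. -/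
lemma exists_two_sided_inv {p : ℕ} {ι : Type*} [Fintype ι] [DecidableEq ι]
    (C : Matrix (Fin p) ι ℂ) (hcard : Fintype.card ι = p) (G : Matrix ι ι ℂ)
    (hG : Cᵀ * C = G) (hGu : IsUnit G) :
    ∃ Cinv : Matrix ι (Fin p) ℂ, Cinv * C = 1 ∧ C * Cinv = 1 := by
  have hGdet : IsUnit G.det := (Matrix.isUnit_iff_isUnit_det G).mp hGu
  have hGinv : G⁻¹ * G = 1 := Matrix.nonsing_inv_mul G hGdet
  have hCinj : Function.Injective C.mulVecLin := by
    rw [← LinearMap.ker_eq_bot, Matrix.ker_mulVecLin_eq_bot_iff]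
    intro v hv
    have h1 : G *ᵥ v = 0 := by
      rw [← hG, ← Matrix.mulVec_mulVec, hv, Matrix.mulVec_zero]
    calc v = (G⁻¹ * G) *ᵥ v := by rw [hGinv, Matrix.one_mulVec]
    _ = G⁻¹ *ᵥ (G *ᵥ v) := by rw [Matrix.mulVec_mulVec]
    _ = 0 := by rw [h1, Matrix.mulVec_zero]
  have hrC : C.rank = Fintype.card (Fin p) := by
    unfold Matrix.rank
    rw [LinearMap.finrank_range_of_inj hCinj, Module.finrank_pi ℂ, hcard, Fintype.card_fin]
  obtain ⟨R, hR⟩ := exists_right_inv' C hrC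
  have hCinvC : (G⁻¹ * Cᵀ) * C = 1 := by rw [Matrix.mul_assoc, hG, hGinv]
  have hReq : G⁻¹ * Cᵀ = R := by
    calc G⁻¹ * Cᵀ = (G⁻¹ * Cᵀ) * (C * R) := by rw [hR, Matrix.mul_one]
    _ = ((G⁻¹ * Cᵀ) * C) * R := by simp only [Matrix.mul_assoc]
    _ = R := by rw [hCinvC, Matrix.one_mul]
  exact ⟨G⁻¹ * Cᵀ, hCinvC, by rw [hReq, hR]⟩

/-- Extension of a full-rank isotropic matrix to a matrix with standard Gram matrix. -/
lemma extend_isotropic {p r : ℕ} (hpr : 2 * r ≤ p) (B : Matrix (Fin p) (Fin r) ℂ)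
    (hB : Bᵀ * B = 0) (hinj : Function.Injective B.mulVecLin) :
    ∃ C : Matrix (Fin p) ((Fin r ⊕ Fin r) ⊕ Fin (p - 2 * r)) ℂ,
      Cᵀ * C = Matrix.fromBlocks (Matrix.fromBlocks 0 1 1 0) 0 0 1 ∧
      C * Matrix.fromRows (Matrix.fromRows 1 0) 0 = B := by
  -- dual frame D
  have hrB : B.rank = r := by
    unfold Matrix.rank
    rw [LinearMap.finrank_range_of_inj hinj, Module.finrank_pi ℂ, Fintype.card_fin]
  obtain ⟨D₀, hD₀⟩ := exists_right_inv' Bᵀ (by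
    rw [Matrix.rank_transpose, hrB, Fintype.card_fin])
  have hD₀B : D₀ᵀ * B = 1 := by
    have := congrArg Matrix.transpose hD₀
    rwa [Matrix.transpose_mul, Matrix.transpose_transpose, Matrix.transpose_one] at this
  set S := D₀ᵀ * D₀ with hS
  have hSsymm : Sᵀ = S := by rw [hS, Matrix.transpose_mul, Matrix.transpose_transpose]
  set D := D₀ - (1/2 : ℂ) • (B * S) with hDdef
  have hBD : Bᵀ * D = 1 := by
    rw [hDdef, Matrix.mul_sub, Matrix.mul_smul, ← Matrix.mul_assoc, hB, Matrix.zero_mul,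
      smul_zero, sub_zero, hD₀]
  have hDB : Dᵀ * B = 1 := by
    have := congrArg Matrix.transpose hBD
    rwa [Matrix.transpose_mul, Matrix.transpose_transpose, Matrix.transpose_one] at this
  have hDt : Dᵀ = D₀ᵀ - (1/2 : ℂ) • (S * Bᵀ) := by
    rw [hDdef, Matrix.transpose_sub, Matrix.transpose_smul, Matrix.transpose_mul, hSsymm]
  have hDD : Dᵀ * D = 0 := by
    have h1 : D₀ᵀ * D = S - (1/2 : ℂ) • S := by
      rw [hDdef, Matrix.mul_sub, Matrix.mul_smul, ← Matrix.mul_assoc, hD₀B, Matrix.one_mul]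
    have h2 : (S * Bᵀ) * D = S := by
      rw [Matrix.mul_assoc, hBD, Matrix.mul_one]
    rw [hDt, Matrix.sub_mul, Matrix.smul_mul, h1, h2, sub_sub, ← add_smul]
    norm_num
  -- the hyperbolic block
  set M := Matrix.fromCols B D with hM
  set H : Matrix (Fin r ⊕ Fin r) (Fin r ⊕ Fin r) ℂ := Matrix.fromBlocks 0 1 1 0 with hHdef
  have hMM : Mᵀ * M = H := by
    rw [hM, Matrix.transpose_fromCols, Matrix.fromRows_mul_fromCols,
      hB, hBD, hDB, hDD, hHdef]
  have hHH : H * H = 1 := by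
    rw [hHdef, Matrix.fromBlocks_multiply]
    simp [Matrix.fromBlocks_one]
  have hMkill : ∀ v, (Mᵀ * M) *ᵥ v = 0 → v = 0 := by
    intro v hv
    rw [hMM] at hv
    calc v = (H * H) *ᵥ v := by rw [hHH, Matrix.one_mulVec]
    _ = 0 := by rw [← Matrix.mulVec_mulVec, hv, Matrix.mulVec_zero]
  have hMinj : Function.Injective M.mulVecLin := by
    rw [← LinearMap.ker_eq_bot, Matrix.ker_mulVecLin_eq_bot_iff]
    intro v hv
    exact hMkill v (by rw [← Matrix.mulVec_mulVec, hv, Matrix.mulVec_zero])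
  have hrM : finrank ℂ (LinearMap.range M.mulVecLin) = r + r := by
    rw [LinearMap.finrank_range_of_inj hMinj, Module.finrank_pi ℂ, Fintype.card_sum,
      Fintype.card_fin]
  have hrMt : finrank ℂ (LinearMap.range Mᵀ.mulVecLin) = r + r := by
    have h1 : Mᵀ.rank = M.rank := Matrix.rank_transpose M
    unfold Matrix.rank at h1
    rw [h1, hrM]
  have hkerMt : finrank ℂ (LinearMap.ker Mᵀ.mulVecLin) = p - 2 * r := by
    have h1 := Mᵀ.mulVecLin.finrank_range_add_finrank_ker
    rw [hrMt, Module.finrank_pi ℂ, Fintype.card_fin] at h1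
    omega
  obtain ⟨W, hWrange, hWinj⟩ := exists_basis_matrix (LinearMap.ker Mᵀ.mulVecLin) hkerMt
  have hMWmap : Mᵀ.mulVecLin ∘ₗ W.mulVecLin = 0 := by
    refine LinearMap.ext fun v => ?_
    have hv : W.mulVecLin v ∈ LinearMap.ker Mᵀ.mulVecLin := by
      rw [← hWrange]; exact LinearMap.mem_range_self _ v
    exact LinearMap.mem_ker.mp hv
  have hMW : Mᵀ * W = 0 := by
    apply LinearMap.toMatrix'.symm.injective
    show (Mᵀ * W).mulVecLin = (0 : Matrix _ _ ℂ).mulVecLin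
    rw [Matrix.mulVecLin_mul, Matrix.mulVecLin_zero, hMWmap]
  -- the Gram matrix of W is symmetric and invertible
  have hFsymm : (Wᵀ * W)ᵀ = Wᵀ * W := by
    rw [Matrix.transpose_mul, Matrix.transpose_transpose]
  have hinf : LinearMap.range M.mulVecLin ⊓ LinearMap.ker Mᵀ.mulVecLin = ⊥ := by
    rw [Submodule.eq_bot_iff]
    rintro x ⟨⟨a, ha⟩, hx2⟩
    have hMt : Mᵀ *ᵥ x = 0 := hx2
    have ha' : M *ᵥ a = x := ha
    have h0 : a = 0 := hMkill a (by rw [← Matrix.mulVec_mulVec, ha', hMt])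
    rw [← ha', h0, Matrix.mulVec_zero]
  have hsup : LinearMap.range M.mulVecLin ⊔ LinearMap.ker Mᵀ.mulVecLin = ⊤ := by
    apply Submodule.eq_top_of_finrank_eq
    have h1 := Submodule.finrank_sup_add_finrank_inf_eq
      (LinearMap.range M.mulVecLin) (LinearMap.ker Mᵀ.mulVecLin)
    rw [hinf, finrank_bot, hrM, hkerMt] at h1
    rw [Module.finrank_pi ℂ, Fintype.card_fin]
    omega
  have hFu : IsUnit (Wᵀ * W) := by
    apply isUnit_of_mulVecLin_inj
    rw [← LinearMap.ker_eq_bot, Matrix.ker_mulVecLin_eq_bot_iff]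
    intro c hc
    set x := W *ᵥ c with hx
    have hWx : Wᵀ *ᵥ x = 0 := by rw [hx, Matrix.mulVec_mulVec]; exact hc
    have hMx : Mᵀ *ᵥ x = 0 := by
      have : W.mulVecLin c ∈ LinearMap.ker Mᵀ.mulVecLin := by
        rw [← hWrange]; exact LinearMap.mem_range_self _ c
      exact LinearMap.mem_ker.mp this
    have hxzero : x = 0 := by
      funext i
      have hi : (Pi.single i 1 : Fin p → ℂ) ∈
          LinearMap.range M.mulVecLin ⊔ LinearMap.ker Mᵀ.mulVecLin := by
        rw [hsup]; trivial
      obtain ⟨y, hy, z, hz, hyz⟩ := Submodule.mem_sup.mp hi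
      obtain ⟨a, ha⟩ := hy
      obtain ⟨b, hb⟩ := by rw [← hWrange] at hz; exact hz
      have hdot : x ⬝ᵥ (Pi.single i 1 : Fin p → ℂ) = 0 := by
        rw [← hyz, dotProduct_add, ← ha, ← hb]
        show x ⬝ᵥ M *ᵥ a + x ⬝ᵥ W *ᵥ b = 0
        rw [Matrix.dotProduct_mulVec x M a, Matrix.dotProduct_mulVec x W b,
          ← Matrix.mulVec_transpose M x, ← Matrix.mulVec_transpose W x, hMx, hWx]
        simp
      simpa using hdot
    have : W.mulVecLin c = W.mulVecLin 0 := by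
      rw [Matrix.mulVecLin_apply, Matrix.mulVecLin_apply, Matrix.mulVec_zero, ← hx, hxzero]
    exact hWinj this
  obtain ⟨Q, hQu, hQ⟩ := exists_congr_one (Wᵀ * W) hFsymm hFu
  set E := W * Q with hE
  have hME : Mᵀ * E = 0 := by rw [hE, ← Matrix.mul_assoc, hMW, Matrix.zero_mul]
  have hEM : Eᵀ * M = 0 := by
    have := congrArg Matrix.transpose hME
    rwa [Matrix.transpose_mul, Matrix.transpose_transpose, Matrix.transpose_zero] at this
  have hEE : Eᵀ * E = 1 := by
    rw [hE, Matrix.transpose_mul, Matrix.mul_assoc, ← Matrix.mul_assoc Wᵀ W Q,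
      ← Matrix.mul_assoc, ← Matrix.mul_assoc] at *
    exact hQ
  refine ⟨Matrix.fromCols M E, ?_, ?_⟩
  · rw [Matrix.transpose_fromCols, Matrix.fromRows_mul_fromCols, hMM, hME, hEM, hEE]
  · refine (Matrix.fromCols_mul_fromRows _ _ _ _).trans ?_
    rw [Matrix.mul_zero, add_zero, hM,
      Matrix.fromCols_mul_fromRows, Matrix.mul_one, Matrix.mul_zero, add_zero]
open Matrix Module LinearMap

/-- In the stable range `2n < p`, two matrices in the null cone
`{A ∈ M_{p,n}(ℂ) : AᵀA = 0}` of the same rank lie in the same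
`O(p,ℂ) × GL_n(ℂ)`-orbit under the action `(k,g)·A = kAgᵀ`. -/
theorem nullConeO_orbits_classified_by_rank (p n : ℕ) (hp : 0 < p) (hn : 0 < n)
    (h : 2 * n < p) (A A' : Matrix (Fin p) (Fin n) ℂ)
    (hA : Aᵀ * A = 0) (hA' : A'ᵀ * A' = 0) (hrank : A.rank = A'.rank) :
    ∃ (k : Matrix (Fin p) (Fin p) ℂ) (g : Matrix (Fin n) (Fin n) ℂ),
      kᵀ * k = 1 ∧ IsUnit g ∧ A' = k * A * gᵀ := by
  obtain ⟨r, hr⟩ : ∃ r, A.rank = r := ⟨_, rfl⟩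
  have hrn : r ≤ n := hr ▸ A.rank_le_width
  have hpr : 2 * r ≤ p := by omega
  obtain ⟨B, K, hAf, hBinj, hKr⟩ := rank_factorization A hr
  obtain ⟨B', K', hA'f, hB'inj, hK'r⟩ := rank_factorization A' (hrank.symm.trans hr)
  -- the Gram matrices of B and B' vanish
  have isotropic : ∀ (B₀ : Matrix (Fin p) (Fin r) ℂ) (K₀ : Matrix (Fin r) (Fin n) ℂ)
      (A₀ : Matrix (Fin p) (Fin n) ℂ), A₀ = B₀ * K₀ → A₀ᵀ * A₀ = 0 → K₀.rank = r →
      B₀ᵀ * B₀ = 0 := by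
    intro B₀ K₀ A₀ hf hiso hKr₀
    obtain ⟨L, hKL⟩ := exists_right_inv' K₀ (by rw [hKr₀, Fintype.card_fin])
    have hLK : Lᵀ * K₀ᵀ = 1 := by rw [← Matrix.transpose_mul, hKL, Matrix.transpose_one]
    rw [hf, Matrix.transpose_mul] at hiso
    calc B₀ᵀ * B₀ = (Lᵀ * K₀ᵀ) * B₀ᵀ * (B₀ * (K₀ * L)) := by
          rw [hLK, hKL, Matrix.one_mul, Matrix.mul_one]
    _ = Lᵀ * (K₀ᵀ * B₀ᵀ * (B₀ * K₀)) * L := by simp only [Matrix.mul_assoc]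
    _ = 0 := by rw [hiso, Matrix.mul_zero, Matrix.zero_mul]
  have hBB : Bᵀ * B = 0 := isotropic B K A hAf hA hKr
  have hB'B' : B'ᵀ * B' = 0 := isotropic B' K' A' hA'f hA' hK'r
  obtain ⟨C, hCg, hCB⟩ := extend_isotropic hpr B hBB hBinj
  obtain ⟨C', hC'g, hC'B⟩ := extend_isotropic hpr B' hB'B' hB'inj
  have hcard : Fintype.card ((Fin r ⊕ Fin r) ⊕ Fin (p - 2 * r)) = p := by
    simp only [Fintype.card_sum, Fintype.card_fin]
    omega
  set G₀ : Matrix ((Fin r ⊕ Fin r) ⊕ Fin (p - 2 * r)) ((Fin r ⊕ Fin r) ⊕ Fin (p - 2 * r)) ℂ :=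
    Matrix.fromBlocks (Matrix.fromBlocks 0 1 1 0) 0 0 1 with hG₀
  have hGG : G₀ * G₀ = 1 := by
    rw [hG₀, Matrix.fromBlocks_multiply]
    simp [Matrix.fromBlocks_multiply, ← Matrix.fromBlocks_one]
  have hGu : IsUnit G₀ := by
    rw [Matrix.isUnit_iff_isUnit_det]
    exact IsUnit.of_mul_eq_one G₀.det (by rw [← Matrix.det_mul, hGG, Matrix.det_one])
  obtain ⟨Cinv, hCinvC, hCCinv⟩ := exists_two_sided_inv C hcard G₀ hCg hGu
  obtain ⟨Mg, hMgu, hKM⟩ := column_equiv K K' hKr hK'r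
  refine ⟨C' * Cinv, Mgᵀ, ?_, ?_, ?_⟩
  · rw [Matrix.transpose_mul]
    calc Cinvᵀ * C'ᵀ * (C' * Cinv) = Cinvᵀ * ((C'ᵀ * C') * Cinv) := by
          simp only [Matrix.mul_assoc]
    _ = Cinvᵀ * ((Cᵀ * C) * Cinv) := by rw [hC'g, hCg]
    _ = (C * Cinv)ᵀ * (C * Cinv) := by rw [Matrix.transpose_mul]; simp only [Matrix.mul_assoc]
    _ = 1 := by rw [hCCinv, Matrix.transpose_one, Matrix.one_mul]
  · rw [Matrix.isUnit_iff_isUnit_det, Matrix.det_transpose, ← Matrix.isUnit_iff_isUnit_det]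
    exact hMgu
  · rw [Matrix.transpose_transpose, hA'f, hKM, ← hC'B, hAf, ← hCB]
    set J₀ : Matrix ((Fin r ⊕ Fin r) ⊕ Fin (p - 2 * r)) (Fin r) ℂ :=
      Matrix.fromRows (Matrix.fromRows 1 0) 0 with hJ₀
    symm
    calc C' * Cinv * (C * J₀ * K) * Mg = C' * ((Cinv * C) * (J₀ * (K * Mg))) := by
          simp only [Matrix.mul_assoc]
    _ = C' * (J₀ * (K * Mg)) := by rw [hCinvC, Matrix.one_mul]
    _ = C' * J₀ * (K * Mg) := by simp only [Matrix.mul_assoc]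
end

section
/- Let p, n be positive integers with 2n < p, and let A, A' ∈ M_{p,n}(ℂ) satisfy AᵀA = 0, A'ᵀA' = 0 and rank A = rank A' = n. Then there exists a complex orthogonal matrix k ∈ O(p,ℂ) (i.e. kᵀk = 1_p) such that A' = kA. (That is, the full-rank locus of the null cone is a single orbit already under left multiplication by O(p,ℂ).) -/
open Matrix

namespace NullConeAux

variable {p : ℕ}

/-- Given a matrix `M` with "orthonormal" columns (w.r.t. the bilinear form `xᵀy`)
and fewer columns than `p`, there is a unit vector orthogonal to all columns. -/
lemma exists_orth_vector {ι : Type} [Fintype ι] [DecidableEq ι]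
    (hcard : Fintype.card ι < p) (M : Matrix (Fin p) ι ℂ) (hM : Mᵀ * M = 1) :
    ∃ v : Fin p → ℂ, Mᵀ.mulVec v = 0 ∧ v ⬝ᵥ v = 1 := by
  set L := Mᵀ.mulVecLin with hL
  have hker : LinearMap.ker L ≠ ⊥ := by
    intro hbot
    have h1 := LinearMap.finrank_range_add_finrank_ker L
    have h2 : Module.finrank ℂ (LinearMap.range L) ≤ Fintype.card ι :=
      (Submodule.finrank_le _).trans_eq (Module.finrank_fintype_fun_eq_card ℂ)
    rw [hbot, finrank_bot, add_zero, Module.finrank_fintype_fun_eq_card,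
      Fintype.card_fin] at h1
    omega
  -- membership in the kernel means orthogonality to all columns
  have hmem : ∀ w : Fin p → ℂ, w ∈ LinearMap.ker L ↔ Mᵀ.mulVec w = 0 := fun w => by
    simp [hL, LinearMap.mem_ker, Matrix.mulVec_transpose]
  by_cases hall : ∀ w ∈ LinearMap.ker L, w ⬝ᵥ w = 0
  · -- the kernel would be totally isotropic; derive a contradiction
    exfalso
    have hpolar : ∀ w ∈ LinearMap.ker L, ∀ w' ∈ LinearMap.ker L, w ⬝ᵥ w' = 0 := by
      intro w hw w' hw'
      have hsum := hall (w + w') (Submodule.add_mem _ hw hw')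
      have hww := hall w hw
      have hw'w' := hall w' hw'
      have hcomm : w' ⬝ᵥ w = w ⬝ᵥ w' := dotProduct_comm w' w
      rw [add_dotProduct, dotProduct_add, dotProduct_add, hww, hw'w', hcomm] at hsum
      have : (2 : ℂ) * (w ⬝ᵥ w') = 0 := by ring_nf; ring_nf at hsum; linear_combination hsum
      have h2 : (2 : ℂ) ≠ 0 := two_ne_zero
      exact (mul_eq_zero.mp this).resolve_left h2
    obtain ⟨w, hwmem, hwne⟩ := Submodule.exists_mem_ne_zero_of_ne_bot hker
    have hworth : Mᵀ.mulVec w = 0 := (hmem w).mp hwmem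
    -- show w is orthogonal to everything, hence zero
    have hzero : ∀ x : Fin p → ℂ, w ⬝ᵥ x = 0 := by
      intro x
      set y := x - M.mulVec (Mᵀ.mulVec x) with hy
      have hymem : y ∈ LinearMap.ker L := by
        rw [hmem]
        have hh : Mᵀ.mulVec (M.mulVec (Mᵀ.mulVec x)) = Mᵀ.mulVec x := by
          rw [mulVec_mulVec, hM, one_mulVec]
        simp only [hy, mulVec_sub, hh, sub_self]
      have h1 : w ⬝ᵥ y = 0 := hpolar w hwmem y hymem
      have h2 : w ⬝ᵥ M.mulVec (Mᵀ.mulVec x) = 0 := by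
        rw [dotProduct_mulVec, ← mulVec_transpose, hworth, zero_dotProduct]
      have : w ⬝ᵥ x = w ⬝ᵥ M.mulVec (Mᵀ.mulVec x) + w ⬝ᵥ y := by
        rw [hy, dotProduct_sub]; ring
      rw [this, h1, h2, add_zero]
    apply hwne
    funext i
    have := hzero (Pi.single i 1)
    simpa [dotProduct_single] using this
  · push_neg at hall
    obtain ⟨w, hwmem, hww⟩ := hall
    obtain ⟨c, hc⟩ := IsAlgClosed.exists_pow_nat_eq (k := ℂ) (w ⬝ᵥ w) two_pos
    have hcne : c ≠ 0 := by
      intro h0; rw [h0] at hc; simp at hc; exact hww hc.symm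
    refine ⟨c⁻¹ • w, ?_, ?_⟩
    · rw [mulVec_smul, (hmem w).mp hwmem, smul_zero]
    · rw [smul_dotProduct, dotProduct_smul, smul_smul, ← hc]
      field_simp
      rw [smul_eq_mul, one_div, inv_mul_cancel₀ (pow_ne_zero 2 hcne)]

/-- Two matrices with "orthonormal" columns (same index type) are related by
a complex orthogonal matrix. -/
lemma exists_orthogonal_map : ∀ (d : ℕ) (ι : Type) [Fintype ι] [DecidableEq ι],
    Fintype.card ι + d = p →
    ∀ M M' : Matrix (Fin p) ι ℂ, Mᵀ * M = 1 → M'ᵀ * M' = 1 →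
    ∃ k : Matrix (Fin p) (Fin p) ℂ, kᵀ * k = 1 ∧ k * M = M' := by
  intro d
  induction d with
  | zero =>
    intro ι _ _ hcard M M' hM hM'
    have e : ι ≃ Fin p := Fintype.equivOfCardEq (by simpa using hcard)
    have hMMt : M * Mᵀ = 1 := (mul_eq_one_comm_of_equiv e).mp hM
    have hMMt' : M' * M'ᵀ = 1 := (mul_eq_one_comm_of_equiv e).mp hM'
    refine ⟨M' * Mᵀ, ?_, ?_⟩
    · calc (M' * Mᵀ)ᵀ * (M' * Mᵀ) = M * (M'ᵀ * M') * Mᵀ := by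
            rw [transpose_mul, transpose_transpose]
            rw [Matrix.mul_assoc, Matrix.mul_assoc, Matrix.mul_assoc]
        _ = 1 := by rw [hM', Matrix.mul_one, hMMt]
    · rw [Matrix.mul_assoc, hM, Matrix.mul_one]
  | succ d ih =>
    intro ι _ _ hcard M M' hM hM'
    have hlt : Fintype.card ι < p := by omega
    obtain ⟨v, hv0, hv1⟩ := exists_orth_vector hlt M hM
    obtain ⟨v', hv0', hv1'⟩ := exists_orth_vector hlt M' hM'
    set N : Matrix (Fin p) (Option ι) ℂ :=
      Matrix.of fun a j => j.elim (v a) (fun i => M a i) with hNdef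
    set N' : Matrix (Fin p) (Option ι) ℂ :=
      Matrix.of fun a j => j.elim (v' a) (fun i => M' a i) with hN'def
    have key : ∀ (W : Matrix (Fin p) ι ℂ) (w : Fin p → ℂ), Wᵀ * W = 1 →
        Wᵀ.mulVec w = 0 → w ⬝ᵥ w = 1 →
        (Matrix.of fun a j => (j : Option ι).elim (w a) (fun i => W a i))ᵀ *
          (Matrix.of fun a j => (j : Option ι).elim (w a) (fun i => W a i)) = 1 := by
      intro W w hW hw0 hw1
      ext i j
      have hWe : ∀ i j : ι, ∑ a, W a i * W a j = (1 : Matrix ι ι ℂ) i j := by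
        intro i j
        have := congrFun (congrFun hW i) j
        simpa [mul_apply] using this
      have hwe : ∀ i : ι, ∑ a, W a i * w a = 0 := by
        intro i
        have := congrFun hw0 i
        simpa [mulVec, dotProduct] using this
      match i, j with
      | some i, some j =>
        simpa [mul_apply, one_apply] using hWe i j
      | some i, none =>
        simpa [mul_apply, one_apply] using hwe i
      | none, some j =>
        have := hwe j
        simp only [mul_apply, Matrix.of_apply, transpose_apply, Option.elim, one_apply]
        rw [show ∑ a, w a * W a j = ∑ a, W a j * w a from Finset.sum_congr rfl
          (fun a _ => mul_comm _ _), this]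
        simp
      | none, none =>
        simpa [mul_apply, one_apply, dotProduct] using hw1
    have hN : Nᵀ * N = 1 := key M v hM hv0 hv1
    have hN' : N'ᵀ * N' = 1 := key M' v' hM' hv0' hv1'
    obtain ⟨k, hk, hkN⟩ := ih (Option ι) (by simp [Fintype.card_option]; omega) N N' hN hN'
    refine ⟨k, hk, ?_⟩
    ext a i
    have := congrFun (congrFun hkN a) (some i)
    simpa [hNdef, hN'def, mul_apply] using this

end NullConeAux

/-- In the stable range `2n < p`, the full-rank locus of the null cone
`{A ∈ M_{p,n}(ℂ) : AᵀA = 0}` is a single orbit under left multiplication by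
the complex orthogonal group `O(p,ℂ)`. -/
theorem nullConeO_full_rank_single_orbit (p n : ℕ) (hp : 0 < p) (hn : 0 < n)
    (h : 2 * n < p) (A A' : Matrix (Fin p) (Fin n) ℂ)
    (hA : Aᵀ * A = 0) (hA' : A'ᵀ * A' = 0)
    (hrA : A.rank = n) (hrA' : A'.rank = n) :
    ∃ k : Matrix (Fin p) (Fin p) ℂ, kᵀ * k = 1 ∧ A' = k * A := by
  -- Step 1: for each isotropic full-rank matrix, find a "dual" isotropic matrix B
  -- with AᵀB = 1 and BᵀB = 0.
  have dual : ∀ W : Matrix (Fin p) (Fin n) ℂ, Wᵀ * W = 0 → W.rank = n →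
      ∃ B : Matrix (Fin p) (Fin n) ℂ, Wᵀ * B = 1 ∧ Bᵀ * B = 0 := by
    intro W hW hrW
    -- Wᵀ is surjective as a linear map
    have hrange : LinearMap.range Wᵀ.mulVecLin = ⊤ := by
      apply Submodule.eq_top_of_finrank_eq
      have h1 : Module.finrank ℂ (LinearMap.range Wᵀ.mulVecLin) = Wᵀ.rank := rfl
      rw [h1, Matrix.rank_transpose, hrW, Module.finrank_fintype_fun_eq_card,
        Fintype.card_fin]
    have hsurj : Function.Surjective Wᵀ.mulVecLin := by
      rw [← LinearMap.range_eq_top]; exact hrange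
    choose c hc using fun j : Fin n => hsurj (Pi.single j 1)
    set C : Matrix (Fin p) (Fin n) ℂ := Matrix.of fun a j => c j a with hCdef
    have hWC : Wᵀ * C = 1 := by
      ext i j
      have := congrFun (hc j) i
      simp only [mulVecLin_apply] at this
      simp only [mul_apply, hCdef, Matrix.of_apply, one_apply]
      rw [show ∑ a, Wᵀ i a * c j a = Wᵀ.mulVec (c j) i from rfl, this,
        Pi.single_apply]
    have hCW : Cᵀ * W = 1 := by
      have := congrArg Matrix.transpose hWC
      simpa [transpose_mul] using this
    set S : Matrix (Fin n) (Fin n) ℂ := Cᵀ * C with hSdef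
    have hSsymm : Sᵀ = S := by rw [hSdef, transpose_mul, transpose_transpose]
    refine ⟨C - W * ((2⁻¹ : ℂ) • S), ?_, ?_⟩
    · rw [Matrix.mul_sub, hWC, ← Matrix.mul_assoc, hW, Matrix.zero_mul, sub_zero]
    · rw [transpose_sub, transpose_mul, transpose_smul, hSsymm]
      rw [Matrix.sub_mul, Matrix.mul_sub, Matrix.mul_sub]
      simp only [Matrix.smul_mul, Matrix.mul_smul, smul_smul]
      rw [← Matrix.mul_assoc Cᵀ W S, hCW, Matrix.one_mul,
        Matrix.mul_assoc S Wᵀ C, hWC, Matrix.mul_one,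
        show S * Wᵀ * (W * S) = S * (Wᵀ * W) * S by
          simp only [hSdef, Matrix.mul_assoc], hW]
      simp only [Matrix.mul_zero, Matrix.zero_mul, smul_zero, sub_zero, ← hSdef]
      module
  obtain ⟨B, hAB, hBB⟩ := dual A hA hrA
  obtain ⟨B', hAB', hBB'⟩ := dual A' hA' hrA'
  have hBA : Bᵀ * A = 1 := by
    have := congrArg Matrix.transpose hAB
    simpa [transpose_mul] using this
  have hBA' : B'ᵀ * A' = 1 := by
    have := congrArg Matrix.transpose hAB'
    simpa [transpose_mul] using this
  -- Step 2: choose square roots s² = 1/2, t² = -1/2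
  obtain ⟨s, hs⟩ := IsAlgClosed.exists_pow_nat_eq (k := ℂ) (2⁻¹ : ℂ) two_pos
  obtain ⟨t, ht⟩ := IsAlgClosed.exists_pow_nat_eq (k := ℂ) (-(2⁻¹ : ℂ)) two_pos
  have hsne : s ≠ 0 := by intro h0; rw [h0] at hs; norm_num at hs
  have htne : t ≠ 0 := by intro h0; rw [h0] at ht; norm_num at ht
  -- Step 3: build orthonormal 2n-column matrices
  have mkG : ∀ (W B : Matrix (Fin p) (Fin n) ℂ), Wᵀ * W = 0 → Bᵀ * B = 0 →
      Wᵀ * B = 1 → Bᵀ * W = 1 →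
      (fromCols (s • (W + B)) (t • (W - B)))ᵀ *
        (fromCols (s • (W + B)) (t • (W - B))) = 1 := by
    intro W B hW hB hWB hBW
    rw [transpose_fromCols, fromRows_mul_fromCols]
    have e1 : (s • (W + B))ᵀ * (s • (W + B)) = 1 := by
      rw [transpose_smul, Matrix.smul_mul, Matrix.mul_smul, smul_smul,
        transpose_add, Matrix.add_mul, Matrix.mul_add, Matrix.mul_add,
        hW, hB, hWB, hBW]
      rw [show s * s = (2⁻¹ : ℂ) by rw [← sq]; exact hs]
      module
    have e2 : (t • (W - B))ᵀ * (t • (W - B)) = 1 := by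
      rw [transpose_smul, Matrix.smul_mul, Matrix.mul_smul, smul_smul,
        transpose_sub, Matrix.sub_mul, Matrix.mul_sub, Matrix.mul_sub,
        hW, hB, hWB, hBW]
      rw [show t * t = -(2⁻¹ : ℂ) by rw [← sq]; exact ht]
      module
    have e3 : (s • (W + B))ᵀ * (t • (W - B)) = 0 := by
      rw [transpose_smul, Matrix.smul_mul, Matrix.mul_smul, smul_smul,
        transpose_add, Matrix.add_mul, Matrix.mul_sub, Matrix.mul_sub,
        hW, hB, hWB, hBW]
      module
    have e4 : (t • (W - B))ᵀ * (s • (W + B)) = 0 := by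
      rw [transpose_smul, Matrix.smul_mul, Matrix.mul_smul, smul_smul,
        transpose_sub, Matrix.sub_mul, Matrix.mul_add, Matrix.mul_add,
        hW, hB, hWB, hBW]
      module
    rw [e1, e2, e3, e4, fromBlocks_one]
  have hG : _ := mkG A B hA hBB hAB hBA
  have hG' : _ := mkG A' B' hA' hBB' hAB' hBA'
  -- Step 4: apply the orthogonal extension lemma
  obtain ⟨k, hk, hkG⟩ := NullConeAux.exists_orthogonal_map (p - 2 * n)
    (Fin n ⊕ Fin n) (by simp [Fintype.card_sum]; omega) _ _ hG hG'
  rw [mul_fromCols] at hkG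
  obtain ⟨hX, hY⟩ := Matrix.fromCols_inj hkG
  refine ⟨k, hk, ?_⟩
  -- Step 5: recover A from the two columns blocks
  have hrecover : ∀ W B : Matrix (Fin p) (Fin n) ℂ,
      W = (2⁻¹ * s⁻¹) • (s • (W + B)) + (2⁻¹ * t⁻¹) • (t • (W - B)) := by
    intro W B
    rw [smul_smul, smul_smul]
    have h1 : 2⁻¹ * s⁻¹ * s = (2⁻¹ : ℂ) := by
      rw [mul_assoc, inv_mul_cancel₀ hsne, mul_one]
    have h2 : 2⁻¹ * t⁻¹ * t = (2⁻¹ : ℂ) := by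
      rw [mul_assoc, inv_mul_cancel₀ htne, mul_one]
    rw [h1, h2]
    module
  calc A' = (2⁻¹ * s⁻¹) • (s • (A' + B')) + (2⁻¹ * t⁻¹) • (t • (A' - B')) :=
        hrecover A' B'
    _ = (2⁻¹ * s⁻¹) • (k * (s • (A + B))) + (2⁻¹ * t⁻¹) • (k * (t • (A - B))) := by
        rw [hX, hY]
    _ = k * ((2⁻¹ * s⁻¹) • (s • (A + B)) + (2⁻¹ * t⁻¹) • (t • (A - B))) := by
        simp only [Matrix.mul_add, Matrix.mul_smul]
    _ = k * A := by rw [← hrecover A B]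
end

section
/- Let p, m, n be positive integers with m + n ≤ p, and let (A,B), (A',B') ∈ M_{p,m}(ℂ) × M_{p,n}(ℂ) satisfy AᵀB = 0, A'ᵀB' = 0, rank A = rank A' and rank B = rank B'. Then there exist g ∈ GL_p(ℂ), h₁ ∈ GL_m(ℂ) and h₂ ∈ GL_n(ℂ) such that A' = g A h₁ᵀ and B' = (gᵀ)^{−1} B h₂^{−1}. (That is, the GL_p(ℂ) × (GL_m(ℂ) × GL_n(ℂ))-orbits in the null cone {(A,B) : AᵀB = 0} under the action (g,h₁,h₂)·(A,B) = (gAh₁ᵀ, (gᵀ)^{−1}Bh₂^{−1}) are exactly classified by the pair (rank A, rank B).) -/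
set_option maxHeartbeats 1000000
set_option synthInstance.maxHeartbeats 200000

open Matrix Module Submodule

namespace NullConeAux

/-- canonical rank-`a` matrix -/
def canA (p m a : ℕ) : Matrix (Fin p) (Fin m) ℂ :=
  Matrix.of fun i j => if (i : ℕ) = (j : ℕ) ∧ (j : ℕ) < a then 1 else 0

def canB (p n a b : ℕ) : Matrix (Fin p) (Fin n) ℂ :=
  Matrix.of fun i j => if (i : ℕ) = a + (j : ℕ) ∧ (j : ℕ) < b then 1 else 0

lemma exists_adapted {p q : ℕ} (M : Matrix (Fin p) (Fin q) ℂ) {a : ℕ}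
    (ha : M.rank = a) (haq : a ≤ q) :
    ∃ x : Fin q → (Fin q → ℂ),
      LinearIndependent ℂ x ∧
      LinearIndependent ℂ (fun i : Fin a => M.mulVec (x (Fin.castLE haq i))) ∧
      ∀ j : Fin q, a ≤ (j : ℕ) → M.mulVec (x j) = 0 := by
  set f := M.mulVecLin with hf
  have hrange : finrank ℂ (LinearMap.range f) = a := ha
  have hq : finrank ℂ (Fin q → ℂ) = q := by simp
  have hker : finrank ℂ (LinearMap.ker f) = q - a := by
    have h1 := LinearMap.finrank_range_add_finrank_ker f
    rw [hrange, hq] at h1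
    omega
  obtain ⟨S, hS⟩ := Submodule.exists_isCompl (LinearMap.ker f)
  have hfinS : finrank ℂ S = a := by
    have h1 := Submodule.finrank_add_eq_of_isCompl hS
    rw [hker, hq] at h1
    omega
  set s : Basis (Fin a) ℂ S := Module.finBasisOfFinrankEq ℂ S hfinS with hs
  set t : Basis (Fin (q - a)) ℂ (LinearMap.ker f) := Module.finBasisOfFinrankEq ℂ _ hker with ht
  set s' : Fin a → (Fin q → ℂ) := fun i => (s i : Fin q → ℂ) with hs'
  set t' : Fin (q - a) → (Fin q → ℂ) := fun i => (t i : Fin q → ℂ) with ht'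
  have hs'ind : LinearIndependent ℂ s' := s.linearIndependent.map' S.subtype S.ker_subtype
  have ht'ind : LinearIndependent ℂ t' :=
    t.linearIndependent.map' (LinearMap.ker f).subtype (LinearMap.ker f).ker_subtype
  have hs'span : span ℂ (Set.range s') = S := by
    have h1 : Set.range s' = S.subtype '' Set.range s := by
      rw [← Set.range_comp]; rfl
    rw [h1, Submodule.span_image, Basis.span_eq, Submodule.map_subtype_top]
  have ht'span : span ℂ (Set.range t') = LinearMap.ker f := by
    have h1 : Set.range t' = (LinearMap.ker f).subtype '' Set.range t := by
      rw [← Set.range_comp]; rfl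
    rw [h1, Submodule.span_image, Basis.span_eq, Submodule.map_subtype_top]
  have hq' : a + (q - a) = q := by omega
  set e : (Fin a ⊕ Fin (q - a)) ≃ Fin q := finSumFinEquiv.trans (finCongr hq') with he
  set x : Fin q → (Fin q → ℂ) := (Sum.elim s' t') ∘ e.symm with hx
  have hxl : ∀ i : Fin a, x (Fin.castLE haq i) = s' i := by
    intro i
    have h1 : e.symm (Fin.castLE haq i) = Sum.inl i := by
      rw [Equiv.symm_apply_eq]
      apply Fin.ext
      simp [he]
    simp [hx, h1]
  have hxr : ∀ j : Fin q, a ≤ (j : ℕ) → x j ∈ LinearMap.ker f := by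
    intro j hj
    have hjq : (j : ℕ) < q := j.isLt
    have h1 : e.symm j = Sum.inr ⟨(j : ℕ) - a, by omega⟩ := by
      rw [Equiv.symm_apply_eq]
      apply Fin.ext
      simp [he]
      omega
    rw [hx]
    simp only [Function.comp_apply, h1, Sum.elim_inr, ht']
    exact SetLike.coe_mem _
  refine ⟨x, ?_, ?_, ?_⟩
  · apply (linearIndependent_equiv e.symm).mpr
    exact hs'ind.sum_type ht'ind (by rw [hs'span, ht'span]; exact hS.symm.disjoint)
  · have heq : (fun i : Fin a => M.mulVec (x (Fin.castLE haq i))) = f ∘ s' := by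
      funext i; rw [hxl]; rfl
    rw [heq]
    exact hs'ind.map (by rw [hs'span]; exact hS.symm.disjoint)
  · intro j hj
    exact LinearMap.mem_ker.mp (hxr j hj)

lemma nf {p m n : ℕ} (hmn : m + n ≤ p)
    (A : Matrix (Fin p) (Fin m) ℂ) (B : Matrix (Fin p) (Fin n) ℂ)
    (hAB : Aᵀ * B = 0) {a b : ℕ} (ha : A.rank = a) (hb : B.rank = b) :
    ∃ (g : Matrix (Fin p) (Fin p) ℂ) (h₁ : Matrix (Fin m) (Fin m) ℂ)
      (h₂ : Matrix (Fin n) (Fin n) ℂ),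
      IsUnit g ∧ IsUnit h₁ ∧ IsUnit h₂ ∧
        g * A * h₁ᵀ = canA p m a ∧ (gᵀ)⁻¹ * B * h₂⁻¹ = canB p n a b := by
  have ham : a ≤ m := ha ▸ A.rank_le_width
  have hbn : b ≤ n := hb ▸ B.rank_le_width
  have hab : a + b ≤ p := le_trans (Nat.add_le_add ham hbn) hmn
  obtain ⟨x, hxind, huind, hxker⟩ := exists_adapted A ha ham
  obtain ⟨y, hyind, hwind, hyker⟩ := exists_adapted B hb hbn
  set u : Fin a → (Fin p → ℂ) := fun i => A.mulVec (x (Fin.castLE ham i)) with hu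
  set w : Fin b → (Fin p → ℂ) := fun j => B.mulVec (y (Fin.castLE hbn j)) with hw
  have hudotw : ∀ i j, u i ⬝ᵥ w j = 0 := by
    intro i j
    show A.mulVec _ ⬝ᵥ B.mulVec _ = 0
    rw [dotProduct_mulVec, ← vecMul_transpose, vecMul_vecMul, hAB, vecMul_zero,
      zero_dotProduct]
  have huval : ∀ i, u i = A.mulVec (x (Fin.castLE ham i)) := fun _ => rfl
  have hwval : ∀ j, w j = B.mulVec (y (Fin.castLE hbn j)) := fun _ => rfl
  clear hu hw
  clear_value u w
  -- the matrix with columns `u` and a left inverse for it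
  set Umat : Matrix (Fin p) (Fin a) ℂ := Matrix.of fun i k => u k i with hUmat
  have hUmv : ∀ cc : Fin a → ℂ, Umat.mulVec cc = ∑ k, cc k • u k := by
    intro cc; funext i
    simp [Matrix.mulVec, dotProduct, Finset.sum_apply, mul_comm, hUmat]
  have hUker : LinearMap.ker Umat.mulVecLin = ⊥ := by
    rw [LinearMap.ker_eq_bot']
    intro cc hcc
    have h0 : ∑ k, cc k • u k = 0 := by rw [← hUmv]; exact hcc
    funext k
    exact Fintype.linearIndependent_iff.mp huind cc h0 k
  obtain ⟨φ, hφ⟩ := LinearMap.exists_leftInverse_of_injective Umat.mulVecLin hUker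
  set d : Fin a → (Fin p → ℂ) := fun k => (LinearMap.toMatrix' φ) k with hd
  have hdu : ∀ k i, d k ⬝ᵥ u i = if k = i then 1 else 0 := by
    intro k i
    have h1 : Umat.mulVec (Pi.single i 1) = u i := by
      funext l; simp [Matrix.mulVec_single, hUmat]
    have h2 : (LinearMap.toMatrix' φ).mulVec (u i) = φ (u i) := by
      rw [← Matrix.toLin'_apply, Matrix.toLin'_toMatrix']
    have h3 : φ (u i) = Pi.single i 1 := by
      rw [← h1]
      simpa using LinearMap.congr_fun hφ (Pi.single i 1)
    have h4 : d k ⬝ᵥ u i = φ (u i) k := by rw [← h2]; rfl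
    rw [h4, h3, Pi.single_apply]
  clear hd hφ
  clear_value d
  -- the "orthogonal complement" of the span of `u`
  set Kmat : Matrix (Fin a) (Fin p) ℂ := Matrix.of u with hKmat
  set Up : Submodule ℂ (Fin p → ℂ) := LinearMap.ker Kmat.mulVecLin with hUp
  have hUp_mem : ∀ v : Fin p → ℂ, v ∈ Up ↔ ∀ k, u k ⬝ᵥ v = 0 := by
    intro v
    rw [hUp, LinearMap.mem_ker]
    constructor
    · intro hv k; exact congrFun hv k
    · intro hv; funext k; exact hv k
  have hKrank : Kmat.rank = a := by
    rw [← Matrix.rank_transpose, Matrix.rank_eq_finrank_span_cols]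
    show finrank ℂ (span ℂ (Set.range u)) = a
    rw [finrank_span_eq_card huind, Fintype.card_fin]
  have hUpfin : finrank ℂ Up = p - a := by
    have h1 := LinearMap.finrank_range_add_finrank_ker Kmat.mulVecLin
    have h2 : finrank ℂ (LinearMap.range Kmat.mulVecLin) = a := hKrank
    have h3 : finrank ℂ (Fin p → ℂ) = p := by simp
    rw [h2, h3] at h1
    rw [hUp]
    omega
  clear hUp hKmat hKrank
  clear_value Up
  clear Kmat
  have hwUp : ∀ j, w j ∈ Up := fun j => (hUp_mem _).mpr fun k => hudotw k j
  set Wsub : Submodule ℂ (Fin p → ℂ) := span ℂ (Set.range w) with hWsub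
  have hWle : Wsub ≤ Up := span_le.mpr (Set.range_subset_iff.mpr hwUp)
  have hWfin : finrank ℂ Wsub = b := by
    rw [hWsub, finrank_span_eq_card hwind, Fintype.card_fin]
  obtain ⟨K, hK⟩ := Submodule.exists_isCompl Wsub
  set T : Submodule ℂ (Fin p → ℂ) := K ⊓ Up with hT
  have hTUp : T ≤ Up := inf_le_right
  have hdisjT : Disjoint Wsub T := hK.disjoint.mono_right inf_le_left
  have hsupT : Wsub ⊔ T = Up := by
    rw [hT, ← sup_inf_assoc_of_le _ hWle, hK.codisjoint.eq_top, top_inf_eq]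
  have hTfin : finrank ℂ T = p - a - b := by
    have h1 := Submodule.finrank_sup_add_finrank_inf_eq Wsub T
    rw [hsupT, hUpfin, hdisjT.eq_bot, finrank_bot, hWfin] at h1
    omega
  clear hT
  clear_value T
  clear hK K
  obtain ⟨c0⟩ : Nonempty (Basis (Fin (p - a - b)) ℂ T) :=
    ⟨Module.finBasisOfFinrankEq ℂ T hTfin⟩
  set c : Fin (p - a - b) → (Fin p → ℂ) := ⇑T.subtype ∘ ⇑c0 with hc
  have hcUp : ∀ l, c l ∈ Up := fun l => hTUp (SetLike.coe_mem _)
  have hcind : LinearIndependent ℂ c :=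
    c0.linearIndependent.map' T.subtype T.ker_subtype
  have hspanc : span ℂ (Set.range c) = T := by
    rw [hc, Set.range_comp, Submodule.span_image, Basis.span_eq,
      Submodule.map_subtype_top]
  clear hc
  clear_value c
  clear c0
  have hdisjwc : Disjoint Wsub (span ℂ (Set.range c)) := by
    rw [hspanc]; exact hdisjT
  have hpair : ∀ (α : Fin a → ℂ) (k : Fin a), (∑ i, α i • d i) ⬝ᵥ u k = α k := by
    intro α k
    have h0 : (∑ i, α i • d i) ⬝ᵥ u k = ∑ i, α i * (d i ⬝ᵥ u k) := by
      simp only [dotProduct, Finset.sum_apply, Pi.smul_apply, smul_eq_mul,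
        Finset.sum_mul, Finset.mul_sum, mul_assoc]
      exact Finset.sum_comm
    rw [h0]
    simp only [hdu, mul_ite, mul_one, mul_zero]
    simp [Finset.sum_ite_eq']
  have hdind : LinearIndependent ℂ d := by
    rw [Fintype.linearIndependent_iff]
    intro α hα k
    have h2 := hpair α k
    rw [hα, zero_dotProduct] at h2
    exact h2.symm
  have hdisjd : Disjoint (span ℂ (Set.range d)) (span ℂ (Set.range (Sum.elim w c))) := by
    have hle : span ℂ (Set.range (Sum.elim w c)) ≤ Up := by
      rw [span_le]
      rintro v ⟨i, rfl⟩
      cases i with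
      | inl j => exact hwUp j
      | inr l => exact hcUp l
    rw [Submodule.disjoint_def]
    intro v hvd hvwc
    have hvUp : v ∈ Up := hle hvwc
    obtain ⟨α, rfl⟩ := (mem_span_range_iff_exists_fun ℂ).mp hvd
    have hα : ∀ k, α k = 0 := by
      intro k
      have h3 := (hUp_mem _).mp hvUp k
      rw [dotProduct_comm] at h3
      rw [hpair α k] at h3
      exact h3
    simp [hα]
  set r : (Fin a ⊕ (Fin b ⊕ Fin (p - a - b))) → (Fin p → ℂ) := Sum.elim d (Sum.elim w c)
    with hrdef
  have hrind : LinearIndependent ℂ r :=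
    hdind.sum_type (hwind.sum_type hcind (hWsub ▸ hdisjwc)) hdisjd
  have hp' : a + (b + (p - a - b)) = p := by omega
  set ep : (Fin a ⊕ (Fin b ⊕ Fin (p - a - b))) ≃ Fin p :=
    ((Equiv.refl (Fin a)).sumCongr finSumFinEquiv).trans
      (finSumFinEquiv.trans (finCongr hp')) with hep
  have hep1 : ∀ k : Fin a, (ep (Sum.inl k) : ℕ) = (k : ℕ) := by
    intro k; simp [hep]
  have hep2 : ∀ j : Fin b, (ep (Sum.inr (Sum.inl j)) : ℕ) = a + (j : ℕ) := by
    intro j; simp [hep]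
  set g : Matrix (Fin p) (Fin p) ℂ := Matrix.of (fun i => r (ep.symm i)) with hg
  have hgrow : ∀ z, g (ep z) = r z := by
    intro z; show r (ep.symm (ep z)) = r z; rw [Equiv.symm_apply_apply]
  have hgind : LinearIndependent ℂ (fun i => g i) :=
    (linearIndependent_equiv ep.symm).mpr hrind
  have hgu : IsUnit g := Matrix.linearIndependent_rows_iff_isUnit.mp hgind
  have hgdet : IsUnit g.det := (Matrix.isUnit_iff_isUnit_det g).mp hgu
  have hgmulu : ∀ i : Fin a, g.mulVec (u i) = Pi.single (ep (Sum.inl i)) 1 := by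
    intro i; funext j
    obtain ⟨z, rfl⟩ := ep.surjective j
    have hrow : g.mulVec (u i) (ep z) = r z ⬝ᵥ u i := by
      show g (ep z) ⬝ᵥ u i = _
      rw [hgrow]
    rw [hrow, Pi.single_apply]
    rcases z with k | (j' | l)
    · have hiff : (ep (Sum.inl k) = ep (Sum.inl i)) ↔ (k = i) := by
        constructor
        · intro hh; exact Sum.inl.inj (ep.injective hh)
        · intro hh; rw [hh]
      simp only [hrdef, Sum.elim_inl]
      rw [hdu k i]
      by_cases hki : k = i <;> simp [hki, hiff]
    · have h0 : w j' ⬝ᵥ u i = 0 := by rw [dotProduct_comm]; exact hudotw i j'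
      have hne : ep (Sum.inr (Sum.inl j')) ≠ ep (Sum.inl i) := fun hh => by
        simpa using ep.injective hh
      simp [hrdef, h0, hne]
    · have h0 : c l ⬝ᵥ u i = 0 := by
        rw [dotProduct_comm]; exact (hUp_mem _).mp (hcUp l) i
      have hne : ep (Sum.inr (Sum.inr l)) ≠ ep (Sum.inl i) := fun hh => by
        simpa using ep.injective hh
      simp [hrdef, h0, hne]
  have hgt : ∀ j : Fin b, gᵀ.mulVec (Pi.single (ep (Sum.inr (Sum.inl j))) 1) = w j := by
    intro j; funext i
    rw [Matrix.mulVec_single]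
    show gᵀ i (ep (Sum.inr (Sum.inl j))) * 1 = w j i
    rw [mul_one, Matrix.transpose_apply, hgrow]
    rfl
  have hgtdet : IsUnit gᵀ.det := by rw [Matrix.det_transpose]; exact hgdet
  have hginvw : ∀ j : Fin b,
      (gᵀ)⁻¹.mulVec (w j) = Pi.single (ep (Sum.inr (Sum.inl j))) 1 := by
    intro j
    rw [← hgt j, Matrix.mulVec_mulVec, Matrix.nonsing_inv_mul _ hgtdet, Matrix.one_mulVec]
  -- the right factors
  set X : Matrix (Fin m) (Fin m) ℂ := Matrix.of fun i j => x j i with hX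
  have hXunit : IsUnit X := by
    rw [← Matrix.isUnit_transpose]
    exact Matrix.linearIndependent_rows_iff_isUnit.mp hxind
  set Y : Matrix (Fin n) (Fin n) ℂ := Matrix.of fun i j => y j i with hY
  have hYunit : IsUnit Y := by
    rw [← Matrix.isUnit_transpose]
    exact Matrix.linearIndependent_rows_iff_isUnit.mp hyind
  have hYdet : IsUnit Y.det := (Matrix.isUnit_iff_isUnit_det Y).mp hYunit
  -- the two normal forms
  have hgAX : g * A * X = canA p m a := by
    have hMX : ∀ (M : Matrix (Fin p) (Fin m) ℂ) (i : Fin p) (j : Fin m),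
        (M * X) i j = M.mulVec (x j) i := by
      intro M i j
      simp [Matrix.mul_apply, Matrix.mulVec, dotProduct, hX]
    ext i j
    rw [hMX (g * A) i j, ← Matrix.mulVec_mulVec]
    by_cases hj : (j : ℕ) < a
    · have hxj : x j = x (Fin.castLE ham ⟨(j : ℕ), hj⟩) := rfl
      rw [hxj, ← huval ⟨(j : ℕ), hj⟩]
      rw [hgmulu, Pi.single_apply]
      have hiff : (i = ep (Sum.inl ⟨(j : ℕ), hj⟩)) ↔ ((i : ℕ) = (j : ℕ)) := by
        rw [Fin.ext_iff, hep1]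
      simp only [canA, Matrix.of_apply]
      by_cases hij : (i : ℕ) = (j : ℕ) <;> simp [hij, hiff, hj]
    · rw [hxker j (not_lt.mp hj), Matrix.mulVec_zero]
      simp only [canA, Matrix.of_apply, Pi.zero_apply]
      simp [hj]
  have hgBY : (gᵀ)⁻¹ * B * Y = canB p n a b := by
    have hMY : ∀ (i : Fin p) (j : Fin n),
        ((gᵀ)⁻¹ * B * Y) i j = (gᵀ)⁻¹.mulVec (B.mulVec (y j)) i := by
      intro i j
      have h1 : ((gᵀ)⁻¹ * B * Y) i j = ((gᵀ)⁻¹ * B).mulVec (y j) i := by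
        simp [Matrix.mul_apply, Matrix.mulVec, dotProduct, hY]
      rw [h1, ← Matrix.mulVec_mulVec]
    ext i j
    rw [hMY i j]
    by_cases hj : (j : ℕ) < b
    · have hyj : y j = y (Fin.castLE hbn ⟨(j : ℕ), hj⟩) := rfl
      rw [hyj, ← hwval ⟨(j : ℕ), hj⟩]
      rw [hginvw, Pi.single_apply]
      have hiff : (i = ep (Sum.inr (Sum.inl ⟨(j : ℕ), hj⟩))) ↔ ((i : ℕ) = a + (j : ℕ)) := by
        rw [Fin.ext_iff, hep2]
      simp only [canB, Matrix.of_apply]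
      by_cases hij : (i : ℕ) = a + (j : ℕ) <;> simp [hij, hiff, hj]
    · rw [hyker j (not_lt.mp hj), Matrix.mulVec_zero]
      simp only [canB, Matrix.of_apply, Pi.zero_apply]
      simp [hj]
  refine ⟨g, Xᵀ, Y⁻¹, hgu, (Matrix.isUnit_transpose X).mpr hXunit,
    Matrix.isUnit_nonsing_inv_iff.mpr hYunit, ?_, ?_⟩
  · rw [Matrix.transpose_transpose]; exact hgAX
  · rw [Matrix.nonsing_inv_nonsing_inv Y hYdet]; exact hgBY

end NullConeAux

/-- In the stable range `m + n ≤ p`, two pairs in the null cone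
`{(A,B) ∈ M_{p,m}(ℂ) × M_{p,n}(ℂ) : AᵀB = 0}` with the same pair of ranks lie in
the same `GL_p(ℂ) × (GL_m(ℂ) × GL_n(ℂ))`-orbit under the action
`(g,h₁,h₂)·(A,B) = (gAh₁ᵀ, (gᵀ)⁻¹Bh₂⁻¹)`. -/
theorem nullConeU_orbits_classified_by_rank (p m n : ℕ) (hp : 0 < p) (hm : 0 < m)
    (hn : 0 < n) (h : m + n ≤ p)
    (A A' : Matrix (Fin p) (Fin m) ℂ) (B B' : Matrix (Fin p) (Fin n) ℂ)
    (hAB : Aᵀ * B = 0) (hAB' : A'ᵀ * B' = 0)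
    (hrA : A.rank = A'.rank) (hrB : B.rank = B'.rank) :
    ∃ (g : Matrix (Fin p) (Fin p) ℂ) (h₁ : Matrix (Fin m) (Fin m) ℂ)
      (h₂ : Matrix (Fin n) (Fin n) ℂ),
      IsUnit g ∧ IsUnit h₁ ∧ IsUnit h₂ ∧
        A' = g * A * h₁ᵀ ∧ B' = (gᵀ)⁻¹ * B * h₂⁻¹ := by
  obtain ⟨g, h₁, h₂, hgu, h1u, h2u, hA1, hB1⟩ :=
    NullConeAux.nf h A B hAB rfl rfl
  obtain ⟨g', h₁', h₂', hgu', h1u', h2u', hA2, hB2⟩ :=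
    NullConeAux.nf h A' B' hAB' hrA.symm hrB.symm
  have hgd' : IsUnit g'.det := (Matrix.isUnit_iff_isUnit_det g').mp hgu'
  have h1d' : IsUnit h₁'.det := (Matrix.isUnit_iff_isUnit_det h₁').mp h1u'
  have h2d' : IsUnit h₂'.det := (Matrix.isUnit_iff_isUnit_det h₂').mp h2u'
  have hgtd' : IsUnit g'ᵀ.det := by rw [Matrix.det_transpose]; exact hgd'
  have h1td' : IsUnit h₁'ᵀ.det := by rw [Matrix.det_transpose]; exact h1d'
  refine ⟨g'⁻¹ * g, h₁'⁻¹ * h₁, h₂'⁻¹ * h₂, ?_, ?_, ?_, ?_, ?_⟩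
  · exact ((Matrix.isUnit_nonsing_inv_iff).mpr hgu').mul hgu
  · exact ((Matrix.isUnit_nonsing_inv_iff).mpr h1u').mul h1u
  · exact ((Matrix.isUnit_nonsing_inv_iff).mpr h2u').mul h2u
  · have heq : g' * A' * h₁'ᵀ = g * A * h₁ᵀ := by rw [hA1, hA2]
    have e1 : (h₁'⁻¹ * h₁)ᵀ = h₁ᵀ * (h₁'ᵀ)⁻¹ := by
      rw [Matrix.transpose_mul, Matrix.transpose_nonsing_inv]
    rw [e1]
    calc A' = (g'⁻¹ * g') * A' * (h₁'ᵀ * (h₁'ᵀ)⁻¹) := by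
          rw [Matrix.nonsing_inv_mul _ hgd', Matrix.mul_nonsing_inv _ h1td',
            Matrix.one_mul, Matrix.mul_one]
      _ = g'⁻¹ * (g' * A' * h₁'ᵀ) * (h₁'ᵀ)⁻¹ := by simp only [Matrix.mul_assoc]
      _ = g'⁻¹ * (g * A * h₁ᵀ) * (h₁'ᵀ)⁻¹ := by rw [heq]
      _ = (g'⁻¹ * g) * A * (h₁ᵀ * (h₁'ᵀ)⁻¹) := by simp only [Matrix.mul_assoc]
  · have heq : (g'ᵀ)⁻¹ * B' * h₂'⁻¹ = (gᵀ)⁻¹ * B * h₂⁻¹ := by rw [hB1, hB2]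
    have e1 : ((g'⁻¹ * g)ᵀ)⁻¹ = g'ᵀ * (gᵀ)⁻¹ := by
      rw [Matrix.transpose_mul, Matrix.transpose_nonsing_inv, Matrix.mul_inv_rev,
        Matrix.nonsing_inv_nonsing_inv _ hgtd']
    have e2 : (h₂'⁻¹ * h₂)⁻¹ = h₂⁻¹ * h₂' := by
      rw [Matrix.mul_inv_rev, Matrix.nonsing_inv_nonsing_inv _ h2d']
    rw [e1, e2]
    calc B' = (g'ᵀ * (g'ᵀ)⁻¹) * B' * (h₂'⁻¹ * h₂') := by
          rw [Matrix.mul_nonsing_inv _ hgtd', Matrix.nonsing_inv_mul _ h2d',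
            Matrix.one_mul, Matrix.mul_one]
      _ = g'ᵀ * ((g'ᵀ)⁻¹ * B' * h₂'⁻¹) * h₂' := by simp only [Matrix.mul_assoc]
      _ = g'ᵀ * ((gᵀ)⁻¹ * B * h₂⁻¹) * h₂' := by rw [heq]
      _ = (g'ᵀ * (gᵀ)⁻¹) * B * (h₂⁻¹ * h₂') := by simp only [Matrix.mul_assoc]
end

section
/- Let p, n be positive integers with n ≤ p, and let A, A' ∈ M_{2p,n}(ℂ) satisfy AᵀJ_pA = 0, A'ᵀJ_pA' = 0 and rank A = rank A'. Then there exist a complex symplectic matrix k ∈ Sp(2p,ℂ) (i.e. k ∈ M_{2p}(ℂ) with kᵀJ_pk = J_p) and g ∈ GL_n(ℂ) such that A' = k A gᵀ. (That is, the Sp(2p,ℂ) × GL_n(ℂ)-orbits in the null cone {A : AᵀJ_pA = 0} under the action (k,g)·A = kAgᵀ are exactly classified by rank.) -/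
open Matrix

/-- The standard symplectic form matrix `J_p = [[0, 1_p], [-1_p, 0]]`
of size `2p × 2p`. -/
noncomputable def Jmat (p : ℕ) : Matrix (Fin (2 * p)) (Fin (2 * p)) ℂ :=
  Matrix.of fun i j =>
    if (i : ℕ) + p = (j : ℕ) then 1
    else if (j : ℕ) + p = (i : ℕ) then -1
    else 0

namespace SpAux

variable {p n r : ℕ}




noncomputable def J (p : ℕ) : Matrix (Fin p ⊕ Fin p) (Fin p ⊕ Fin p) ℂ :=
  Matrix.fromBlocks 0 1 (-1) 0

def Sp {p : ℕ} (k : Matrix (Fin p ⊕ Fin p) (Fin p ⊕ Fin p) ℂ) : Prop :=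
  kᵀ * J p * k = J p

lemma negJ_mul_J : (-(J p)) * J p = 1 := by
  simp only [J, Matrix.neg_mul, Matrix.fromBlocks_multiply]
  ext (i|i) (j|j) <;> simp [Matrix.fromBlocks, Matrix.one_apply]

lemma Sp_one : Sp (1 : Matrix (Fin p ⊕ Fin p) (Fin p ⊕ Fin p) ℂ) := by
  simp [Sp]

lemma Sp.mul {k k' : Matrix (Fin p ⊕ Fin p) (Fin p ⊕ Fin p) ℂ}
    (h : Sp k) (h' : Sp k') : Sp (k * k') := by
  unfold Sp at *
  calc (k * k')ᵀ * J p * (k * k') = k'ᵀ * (kᵀ * J p * k) * k' := by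
        simp only [Matrix.transpose_mul, Matrix.mul_assoc]
    _ = J p := by rw [h, h']

lemma Sp.inv {k : Matrix (Fin p ⊕ Fin p) (Fin p ⊕ Fin p) ℂ} (h : Sp k) :
    ∃ ki, k * ki = 1 ∧ ki * k = 1 ∧ Sp ki := by
  refine ⟨(-(J p)) * kᵀ * J p, ?_, ?_, ?_⟩
  · rw [mul_eq_one_comm]
    calc (-(J p)) * kᵀ * J p * k = (-(J p)) * (kᵀ * J p * k) := by
          simp only [Matrix.mul_assoc]
      _ = 1 := by rw [h]; exact negJ_mul_J
  · calc (-(J p)) * kᵀ * J p * k = (-(J p)) * (kᵀ * J p * k) := by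
          simp only [Matrix.mul_assoc]
      _ = 1 := by rw [h]; exact negJ_mul_J
  · have h1 : ((-(J p)) * kᵀ * J p) * k = 1 := by
      calc (-(J p)) * kᵀ * J p * k = (-(J p)) * (kᵀ * J p * k) := by
            simp only [Matrix.mul_assoc]
        _ = 1 := by rw [h]; exact negJ_mul_J
    have h2 : k * ((-(J p)) * kᵀ * J p) = 1 := mul_eq_one_comm.mpr h1
    unfold Sp
    calc ((-(J p)) * kᵀ * J p)ᵀ * J p * ((-(J p)) * kᵀ * J p)
        = ((-(J p)) * kᵀ * J p)ᵀ * (kᵀ * J p * k) * ((-(J p)) * kᵀ * J p) := by rw [h]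
      _ = (k * ((-(J p)) * kᵀ * J p))ᵀ * J p * (k * ((-(J p)) * kᵀ * J p)) := by
          simp only [Matrix.transpose_mul, Matrix.mul_assoc]
      _ = J p := by rw [h2]; simp

lemma Sp_GL (Q Qi : Matrix (Fin p) (Fin p) ℂ) (h1 : Q * Qi = 1) (h2 : Qi * Q = 1) :
    Sp (Matrix.fromBlocks Q 0 0 Qiᵀ) := by
  unfold Sp J
  rw [Matrix.fromBlocks_transpose, Matrix.fromBlocks_multiply, Matrix.fromBlocks_multiply]
  congr 1 <;> simp [← Matrix.transpose_mul, h2]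

lemma Sp_shear (S : Matrix (Fin p) (Fin p) ℂ) (hS : Sᵀ = S) :
    Sp (Matrix.fromBlocks 1 0 S 1) := by
  unfold Sp J
  rw [Matrix.fromBlocks_transpose, Matrix.fromBlocks_multiply, Matrix.fromBlocks_multiply]
  congr 1 <;> simp [hS]





lemma vmv_mul (a b c d : Fin p → ℂ) :
    vecMulVec a b * vecMulVec c d = (b ⬝ᵥ c) • vecMulVec a d := by
  ext i j
  simp only [Matrix.mul_apply, vecMulVec_apply, Matrix.smul_apply, smul_eq_mul, dotProduct]
  rw [Finset.sum_mul]
  exact Finset.sum_congr rfl (fun k _ => by ring)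

lemma vmv_add (a a' b : Fin p → ℂ) :
    vecMulVec (a + a') b = vecMulVec a b + vecMulVec a' b := by
  ext i j; simp [vecMulVec_apply, add_mul]

lemma vmv_smul (c : ℂ) (a b : Fin p → ℂ) :
    vecMulVec (c • a) b = c • vecMulVec a b := by
  ext i j; simp [vecMulVec_apply]; ring

lemma vmv_zero (b : Fin p → ℂ) : vecMulVec (0 : Fin p → ℂ) b = 0 := by
  ext i j; simp [vecMulVec_apply]

lemma vmv_transpose (a b : Fin p → ℂ) : (vecMulVec a b)ᵀ = vecMulVec b a := by
  ext i j; simp [vecMulVec_apply, mul_comm]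

lemma vmv_mulVec (a b v : Fin p → ℂ) :
    (vecMulVec a b).mulVec v = (b ⬝ᵥ v) • a := by
  ext i
  simp only [Matrix.mulVec, vecMulVec_apply, dotProduct, Pi.smul_apply, smul_eq_mul]
  rw [Finset.sum_mul]
  exact Finset.sum_congr rfl (fun k _ => by ring)

/-- elementary matrix: identity with column `t` replaced by `w`. -/
noncomputable def elem (w : Fin p → ℂ) (t : Fin p) : Matrix (Fin p) (Fin p) ℂ :=
  1 + vecMulVec (w - Pi.single t 1) (Pi.single t 1)

noncomputable def elemi (w : Fin p → ℂ) (t : Fin p) : Matrix (Fin p) (Fin p) ℂ :=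
  1 + vecMulVec ((-(w t)⁻¹) • (w - Pi.single t 1)) (Pi.single t 1)

lemma elem_key (u v : Fin p → ℂ) (t : Fin p) :
    (1 + vecMulVec u (Pi.single t 1)) * (1 + vecMulVec v (Pi.single t 1))
      = 1 + vecMulVec (u + v + v t • u) (Pi.single t 1) := by
  simp only [mul_add, add_mul, mul_one, one_mul, Matrix.mul_one, Matrix.one_mul, vmv_mul]
  have : Pi.single t (1:ℂ) ⬝ᵥ v = v t := by simp
  rw [this, vmv_add, vmv_add, vmv_smul]
  abel

lemma elem_mul_elemi (w : Fin p → ℂ) (t : Fin p) (hw : w t ≠ 0) :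
    elem w t * elemi w t = 1 := by
  unfold elem elemi
  set z : Fin p → ℂ := w - Pi.single t 1 with hzdef
  rw [elem_key]
  have ht : z t = w t - 1 := by simp [hzdef]
  have hz : z + (-(w t)⁻¹) • z + ((-(w t)⁻¹) • z) t • z = 0 := by
    funext i
    simp only [Pi.add_apply, Pi.smul_apply, smul_eq_mul, Pi.zero_apply, ht]
    field_simp
    ring
  rw [hz, vmv_zero, add_zero]

lemma elemi_mul_elem (w : Fin p → ℂ) (t : Fin p) (hw : w t ≠ 0) :
    elemi w t * elem w t = 1 := by
  unfold elem elemi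
  set z : Fin p → ℂ := w - Pi.single t 1 with hzdef
  rw [elem_key]
  have ht : z t = w t - 1 := by simp [hzdef]
  have hz : (-(w t)⁻¹) • z + z + z t • ((-(w t)⁻¹) • z) = 0 := by
    funext i
    simp only [Pi.add_apply, Pi.smul_apply, smul_eq_mul, Pi.zero_apply, ht]
    field_simp
    ring
  rw [hz, vmv_zero, add_zero]

lemma elem_mulVec (w : Fin p → ℂ) (t : Fin p) (v : Fin p → ℂ) :
    (elem w t).mulVec v = v + v t • (w - Pi.single t 1) := by
  unfold elem
  rw [Matrix.add_mulVec, Matrix.one_mulVec, vmv_mulVec]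
  simp

/-- permutation matrix for the transposition (t₁ t₂) -/
noncomputable def swapM (t₁ t₂ : Fin p) : Matrix (Fin p) (Fin p) ℂ :=
  (1 : Matrix (Fin p) (Fin p) ℂ).submatrix id (Equiv.swap t₁ t₂)

lemma swapM_mulVec (t₁ t₂ : Fin p) (v : Fin p → ℂ) :
    (swapM t₁ t₂).mulVec v = fun i => v (Equiv.swap t₁ t₂ i) := by
  funext i
  simp only [swapM, Matrix.mulVec, dotProduct, Matrix.submatrix_apply, id_eq, Matrix.one_apply]
  rw [Finset.sum_eq_single (Equiv.swap t₁ t₂ i)]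
  · simp
  · intro k _ hk
    have : i ≠ Equiv.swap t₁ t₂ k := by
      intro h; exact hk (by rw [h, Equiv.swap_apply_self])
    simp [this]
  · intro h; exact absurd (Finset.mem_univ _) h

lemma swapM_mul_swapM (t₁ t₂ : Fin p) : swapM t₁ t₂ * swapM t₁ t₂ = 1 := by
  ext i j
  rw [Matrix.mul_apply]
  simp only [swapM, Matrix.submatrix_apply, id_eq, Matrix.one_apply]
  rw [Finset.sum_eq_single (Equiv.swap t₁ t₂ j)]
  · simp [Equiv.swap_apply_self, eq_comm]
  · intro k _ hk
    have : k ≠ Equiv.swap t₁ t₂ j := hk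
    simp [this]
  · intro h; exact absurd (Finset.mem_univ _) h





/-- the standard isotropic frame: columns `e_0, ..., e_{r-1}` (inl part). -/
noncomputable def Emat (p r : ℕ) : Matrix (Fin p ⊕ Fin p) (Fin r) ℂ :=
  Matrix.of fun i j => Sum.elim (fun a : Fin p => if (a:ℕ) = (j:ℕ) then (1:ℂ) else 0)
    (fun _ => 0) i

lemma Emat_col (hr : r ≤ p) (j : Fin r) :
    (fun i => Emat p r i j) = Pi.single (Sum.inl (Fin.castLE hr j)) (1:ℂ) := by
  funext i
  cases i with
  | inl a =>
    simp only [Emat, Matrix.of_apply, Sum.elim_inl, Pi.single_apply, Sum.inl.injEq]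
    by_cases h : (a:ℕ) = (j:ℕ)
    · rw [if_pos h, if_pos (by ext; simpa using h)]
    · rw [if_neg h, if_neg (by intro hh; exact h (by simpa [Fin.ext_iff] using hh))]
  | inr a => simp [Emat, Pi.single_apply]

lemma mul_col {X Y : Type*} [Fintype Y] {s : ℕ} (M : Matrix X Y ℂ) (N : Matrix Y (Fin s) ℂ)
    (j : Fin s) : (fun i => (M * N) i j) = M.mulVec (fun k => N k j) := by
  funext i
  simp [Matrix.mul_apply, Matrix.mulVec, dotProduct]

lemma ext_col {X : Type*} {s : ℕ} {M N : Matrix X (Fin s) ℂ}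
    (h : ∀ j, (fun i => M i j) = fun i => N i j) : M = N := by
  ext i j; exact congrFun (h j) i

lemma single_inl_comp_inl (c : Fin p) :
    (Pi.single (Sum.inl c) (1:ℂ) : Fin p ⊕ Fin p → ℂ) ∘ Sum.inl = Pi.single c 1 := by
  funext i; simp [Pi.single_apply]

lemma single_inl_comp_inr (c : Fin p) :
    (Pi.single (Sum.inl c) (1:ℂ) : Fin p ⊕ Fin p → ℂ) ∘ Sum.inr = 0 := by
  funext i; simp [Pi.single_apply]

lemma elim_comp_inl (f g : Fin p → ℂ) : (Sum.elim f g : Fin p ⊕ Fin p → ℂ) ∘ Sum.inl = f := rfl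
lemma elim_comp_inr (f g : Fin p → ℂ) : (Sum.elim f g : Fin p ⊕ Fin p → ℂ) ∘ Sum.inr = g := rfl

lemma single_inl_eq_elim (c : Fin p) :
    (Pi.single (Sum.inl c) (1:ℂ) : Fin p ⊕ Fin p → ℂ) = Sum.elim (Pi.single c 1) 0 := by
  funext i; cases i <;> simp [Pi.single_apply]

/-- indicator diagonal matrix for indices < r -/
noncomputable def D1 (p r : ℕ) : Matrix (Fin p) (Fin p) ℂ :=
  Matrix.diagonal (fun i : Fin p => if (i:ℕ) < r then 1 else 0)

lemma D1_mul_D1 : D1 p r * D1 p r = D1 p r := by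
  rw [D1, Matrix.diagonal_mul_diagonal]
  have : (fun i : Fin p => (if (i:ℕ) < r then (1:ℂ) else 0) * (if (i:ℕ) < r then (1:ℂ) else 0))
      = fun i : Fin p => if (i:ℕ) < r then (1:ℂ) else 0 := by
    funext i; split_ifs <;> simp
  rw [this]

lemma D1_transpose : (D1 p r)ᵀ = D1 p r := Matrix.diagonal_transpose _

lemma D1_mulVec (v : Fin p → ℂ) :
    (D1 p r).mulVec v = fun i : Fin p => if (i:ℕ) < r then v i else 0 := by
  funext i
  rw [D1, Matrix.mulVec_diagonal]
  split_ifs <;> simp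

/-- the partial swap symplectic matrix: acts as `(q,p) ↦ (p,-q)`-ish on pairs `≥ r`. -/
noncomputable def kSwap (p r : ℕ) : Matrix (Fin p ⊕ Fin p) (Fin p ⊕ Fin p) ℂ :=
  Matrix.fromBlocks (D1 p r) (1 - D1 p r) (-(1 - D1 p r)) (D1 p r)

lemma Sp_kSwap : Sp (kSwap p r) := by
  have hD := D1_mul_D1 (p := p) (r := r)
  set D := D1 p r with hDdef
  have hDT : Dᵀ = D := D1_transpose
  have h22 : (1 - D) * (1 - D) = 1 - D := by
    rw [sub_mul, mul_sub, mul_sub, hD]; simp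
  have h12 : D * (1 - D) = 0 := by rw [mul_sub, hD]; simp
  have h21 : (1 - D) * D = 0 := by rw [sub_mul, hD]; simp
  unfold Sp J kSwap
  rw [← hDdef]
  rw [Matrix.fromBlocks_transpose, Matrix.fromBlocks_multiply, Matrix.fromBlocks_multiply]
  rw [Matrix.transpose_neg, Matrix.transpose_sub, Matrix.transpose_one, hDT]
  congr 1 <;>
    simp [Matrix.mul_neg, Matrix.neg_mul, h22, h12, h21, hD, mul_sub, sub_mul] <;>
    abel


lemma swap_single (t₁ t₂ c : Fin p) :
    (fun i => (Pi.single c (1:ℂ) : Fin p → ℂ) (Equiv.swap t₁ t₂ i))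
      = Pi.single (Equiv.swap t₁ t₂ c) 1 := by
  funext i
  rw [Pi.single_apply, Pi.single_apply]
  congr 1
  rw [eq_iff_iff]
  constructor
  · intro h; rw [← h, Equiv.swap_apply_self]
  · intro h; rw [h, Equiv.swap_apply_self]

lemma dot_disjoint {f g : Fin p → ℂ} (hf : ∀ i : Fin p, (i:ℕ) < r → f i = 0)
    (hg : ∀ i : Fin p, ¬((i:ℕ) < r) → g i = 0) : f ⬝ᵥ g = 0 := by
  apply Finset.sum_eq_zero
  intro i _
  by_cases hi : (i:ℕ) < r
  · rw [hf i hi, zero_mul]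
  · rw [hg i hi, mul_zero]

lemma GL_mulVec (Q R : Matrix (Fin p) (Fin p) ℂ) (f g : Fin p → ℂ) :
    (Matrix.fromBlocks Q 0 0 R).mulVec (Sum.elim f g)
      = Sum.elim (Q.mulVec f) (R.mulVec g) := by
  rw [Matrix.fromBlocks_mulVec, elim_comp_inl, elim_comp_inr]
  simp

lemma shear_mulVec (S : Matrix (Fin p) (Fin p) ℂ) (f g : Fin p → ℂ) :
    (Matrix.fromBlocks 1 0 S 1).mulVec (Sum.elim f g)
      = Sum.elim f (S.mulVec f + g) := by
  rw [Matrix.fromBlocks_mulVec, elim_comp_inl, elim_comp_inr]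
  simp

lemma kSwap_mulVec (f g : Fin p → ℂ) :
    (kSwap p r).mulVec (Sum.elim f g)
      = Sum.elim ((D1 p r).mulVec f + (1 - D1 p r).mulVec g)
          (-((1 - D1 p r).mulVec f) + (D1 p r).mulVec g) := by
  rw [kSwap, Matrix.fromBlocks_mulVec, elim_comp_inl, elim_comp_inr, Matrix.neg_mulVec]

lemma D1_mulVec_low {a : Fin p → ℂ} (ha : ∀ i : Fin p, ¬((i:ℕ) < r) → a i = 0) :
    (D1 p r).mulVec a = a := by
  rw [D1_mulVec]
  funext i
  by_cases hi : (i:ℕ) < r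
  · simp [hi]
  · simp [hi, ha i hi]

lemma D1_mulVec_high {a : Fin p → ℂ} (ha : ∀ i : Fin p, (i:ℕ) < r → a i = 0) :
    (D1 p r).mulVec a = 0 := by
  rw [D1_mulVec]
  funext i
  by_cases hi : (i:ℕ) < r
  · simp [hi, ha i hi]
  · simp [hi]

lemma build_Q (hr : r < p) (w : Fin p → ℂ) (t : Fin p) (hw : w t ≠ 0)
    (hsupp : ∀ i : Fin p, (i:ℕ) < r → w i = 0) :
    ∃ Q Qi : Matrix (Fin p) (Fin p) ℂ, Q * Qi = 1 ∧ Qi * Q = 1 ∧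
      (∀ c : Fin p, (c:ℕ) < r → Q.mulVec (Pi.single c 1) = Pi.single c 1) ∧
      Q.mulVec (Pi.single ⟨r, hr⟩ 1) = w ∧
      (∀ a : Fin p → ℂ, (∀ i : Fin p, ¬((i:ℕ) < r) → a i = 0) → Q.mulVec a = a) := by
  have ht : r ≤ (t:ℕ) := by
    by_contra hc
    exact hw (hsupp t (by omega))
  set rp : Fin p := ⟨r, hr⟩ with hrp
  have hrpval : (rp:ℕ) = r := rfl
  refine ⟨elem w t * swapM rp t, swapM rp t * elemi w t, ?_, ?_, ?_, ?_, ?_⟩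
  · calc elem w t * swapM rp t * (swapM rp t * elemi w t)
        = elem w t * (swapM rp t * swapM rp t) * elemi w t := by
          simp only [Matrix.mul_assoc]
      _ = 1 := by rw [swapM_mul_swapM, Matrix.mul_one, elem_mul_elemi w t hw]
  · calc swapM rp t * elemi w t * (elem w t * swapM rp t)
        = swapM rp t * (elemi w t * elem w t) * swapM rp t := by
          simp only [Matrix.mul_assoc]
      _ = 1 := by rw [elemi_mul_elem w t hw, Matrix.mul_one, swapM_mul_swapM]
  · intro c hc
    have hc1 : c ≠ rp := by intro h; rw [h] at hc; exact absurd hc (lt_irrefl r)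
    have hc2 : c ≠ t := by intro h; rw [h] at hc; omega
    rw [← Matrix.mulVec_mulVec, swapM_mulVec, swap_single,
      Equiv.swap_apply_of_ne_of_ne hc1 hc2, elem_mulVec]
    rw [Pi.single_eq_of_ne (Ne.symm hc2)]
    simp
  · rw [← Matrix.mulVec_mulVec, swapM_mulVec, swap_single, Equiv.swap_apply_left, elem_mulVec]
    simp
  · intro a ha
    have h1 : (swapM rp t).mulVec a = a := by
      rw [swapM_mulVec]
      funext i
      by_cases h1 : i = rp
      · rw [h1, Equiv.swap_apply_left, ha t (by omega), ha rp (lt_irrefl r)]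
      by_cases h2 : i = t
      · rw [h2, Equiv.swap_apply_right, ha t (by omega), ha rp (lt_irrefl r)]
      · rw [Equiv.swap_apply_of_ne_of_ne h1 h2]
    rw [← Matrix.mulVec_mulVec, h1, elem_mulVec, ha t (by omega)]
    simp

lemma frame_step (hr : r < p) (α β : Fin p → ℂ)
    (hα : ∀ i : Fin p, (i:ℕ) < r → α i = 0)
    (hβ : ∀ i : Fin p, (i:ℕ) < r → β i = 0)
    (hv : ¬(α = 0 ∧ β = 0)) :
    ∃ kv : Matrix (Fin p ⊕ Fin p) (Fin p ⊕ Fin p) ℂ, Sp kv ∧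
      (∀ c : Fin p, (c:ℕ) < r →
        kv.mulVec (Pi.single (Sum.inl c) 1) = Pi.single (Sum.inl c) 1) ∧
      kv.mulVec (Pi.single (Sum.inl ⟨r, hr⟩) 1) = Sum.elim α β ∧
      (∀ a : Fin p → ℂ, (∀ i : Fin p, ¬((i:ℕ) < r) → a i = 0) →
        kv.mulVec (Sum.elim a 0) = Sum.elim a 0) := by
  set rp : Fin p := ⟨r, hr⟩ with hrp
  have hrpnotlow : ¬((rp:ℕ) < r) := Nat.lt_irrefl r
  by_cases hα0 : α = 0
  · -- case α = 0, use partial swap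
    have hβ0 : β ≠ 0 := fun h => hv ⟨hα0, h⟩
    obtain ⟨t, hβt⟩ : ∃ t, β t ≠ 0 := by
      by_contra hc
      push_neg at hc
      exact hβ0 (funext hc)
    obtain ⟨Q, Qi, hQ1, hQ2, hQcol, hQrp, hQa⟩ :=
      build_Q hr (-β) t (by simpa using hβt) (fun i hi => by simp [hβ i hi])
    refine ⟨kSwap p r * Matrix.fromBlocks Q 0 0 Qiᵀ, (Sp_kSwap).mul (Sp_GL Q Qi hQ1 hQ2),
      ?_, ?_, ?_⟩
    · intro c hc
      rw [← Matrix.mulVec_mulVec, single_inl_eq_elim, GL_mulVec, hQcol c hc,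
        Matrix.mulVec_zero, kSwap_mulVec]
      have hD1 : (D1 p r).mulVec (Pi.single c 1) = Pi.single c 1 :=
        D1_mulVec_low (fun i hi => Pi.single_eq_of_ne (by intro h; rw [h] at hi; omega) 1)
      have hD2 : (1 - D1 p r).mulVec (Pi.single c 1) = 0 := by
        rw [Matrix.sub_mulVec, hD1, Matrix.one_mulVec, sub_self]
      rw [hD1, hD2, neg_zero, Matrix.mulVec_zero]
      simp
    · rw [← Matrix.mulVec_mulVec, single_inl_eq_elim, GL_mulVec, hQrp,
        Matrix.mulVec_zero, kSwap_mulVec]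
      have hD1 : (D1 p r).mulVec (-β) = 0 :=
        D1_mulVec_high (fun i hi => by simp [hβ i hi])
      have hD2 : (1 - D1 p r).mulVec (-β) = -β := by
        rw [Matrix.sub_mulVec, hD1, Matrix.one_mulVec, sub_zero]
      rw [hD1, hD2, neg_neg, hα0, Matrix.mulVec_zero]
      simp
    · intro a ha
      rw [← Matrix.mulVec_mulVec, GL_mulVec, hQa a ha, Matrix.mulVec_zero, kSwap_mulVec]
      have hD1 : (D1 p r).mulVec a = a := D1_mulVec_low ha
      have hD2 : (1 - D1 p r).mulVec a = 0 := by
        rw [Matrix.sub_mulVec, hD1, Matrix.one_mulVec, sub_self]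
      rw [hD1, hD2, neg_zero, Matrix.mulVec_zero]
      simp
  · -- case α ≠ 0
    obtain ⟨t, hαt⟩ : ∃ t, α t ≠ 0 := by
      by_contra hc
      push_neg at hc
      exact hα0 (funext hc)
    obtain ⟨Q, Qi, hQ1, hQ2, hQcol, hQrp, hQa⟩ := build_Q hr α t hαt hα
    set β' : Fin p → ℂ := Qᵀ.mulVec β with hβ'def
    have hβ'c : ∀ c : Fin p, (c:ℕ) < r → β' c = 0 := by
      intro c hc
      have hcol : Qᵀ c = Pi.single c 1 := by
        show Q.col c = _
        rw [← Matrix.mulVec_single_one]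
        exact hQcol c hc
      have hval : β' c = Qᵀ c ⬝ᵥ β := rfl
      rw [hval, hcol]
      simp [hβ c hc]
    set er : Fin p → ℂ := Pi.single rp 1 with herdef
    set S : Matrix (Fin p) (Fin p) ℂ :=
      vecMulVec β' er + vecMulVec er β' - β' rp • vecMulVec er er with hSdef
    have hST : Sᵀ = S := by
      rw [hSdef, Matrix.transpose_sub, Matrix.transpose_add, Matrix.transpose_smul,
        vmv_transpose, vmv_transpose, vmv_transpose]
      abel
    have hSmv : ∀ x : Fin p → ℂ, S.mulVec x
        = (er ⬝ᵥ x) • β' + ((β' ⬝ᵥ x) - β' rp * (er ⬝ᵥ x)) • er := by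
      intro x
      rw [hSdef, Matrix.sub_mulVec, Matrix.add_mulVec, vmv_mulVec, vmv_mulVec,
        Matrix.smul_mulVec, vmv_mulVec, sub_smul, smul_smul]
      abel
    have hScol : ∀ c : Fin p, (c:ℕ) < r → S.mulVec (Pi.single c 1) = 0 := by
      intro c hc
      rw [hSmv]
      have h1 : er ⬝ᵥ Pi.single c 1 = 0 := by
        rw [herdef]
        simp [Pi.single_apply]
        intro h
        rw [h] at hc; omega
      have h2 : β' ⬝ᵥ Pi.single c 1 = 0 := by
        simp [hβ'c c hc]
      rw [h1, h2]
      simp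
    have hSer : S.mulVec er = β' := by
      rw [hSmv]
      have h1 : er ⬝ᵥ er = 1 := by simp [herdef]
      have h2 : β' ⬝ᵥ er = β' rp := by simp [herdef]
      rw [h1, h2]
      simp
    have hSa : ∀ a : Fin p → ℂ, (∀ i : Fin p, ¬((i:ℕ) < r) → a i = 0) → S.mulVec a = 0 := by
      intro a ha
      rw [hSmv]
      have h1 : er ⬝ᵥ a = 0 := by
        rw [herdef]
        simp [ha rp hrpnotlow]
      have h2 : β' ⬝ᵥ a = 0 := dot_disjoint hβ'c ha
      rw [h1, h2]
      simp
    refine ⟨Matrix.fromBlocks Q 0 0 Qiᵀ * Matrix.fromBlocks 1 0 S 1,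
      (Sp_GL Q Qi hQ1 hQ2).mul (Sp_shear S hST), ?_, ?_, ?_⟩
    · intro c hc
      rw [← Matrix.mulVec_mulVec, single_inl_eq_elim, shear_mulVec, hScol c hc, zero_add,
        GL_mulVec, hQcol c hc, Matrix.mulVec_zero]
    · rw [← Matrix.mulVec_mulVec, single_inl_eq_elim, shear_mulVec, hSer, add_zero,
        GL_mulVec, hQrp]
      have : Qiᵀ.mulVec β' = β := by
        rw [hβ'def, Matrix.mulVec_mulVec, ← Matrix.transpose_mul, hQ1, Matrix.transpose_one,
          Matrix.one_mulVec]
      rw [this]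
    · intro a ha
      rw [← Matrix.mulVec_mulVec, shear_mulVec, hSa a ha, zero_add, GL_mulVec, hQa a ha,
        Matrix.mulVec_zero]

lemma submatrix_row_mul {X Y Z W : Type*} [Fintype Y]
    (M : Matrix X Y ℂ) (N : Matrix Y Z ℂ) (f : W → X) :
    (M.submatrix f id) * N = (M * N).submatrix f id := by
  ext i j; simp [Matrix.mul_apply]

lemma mul_submatrix_col {X Y Z W : Type*} [Fintype Y]
    (M : Matrix X Y ℂ) (N : Matrix Y Z ℂ) (g : W → Z) :
    M * (N.submatrix id g) = (M * N).submatrix id g := by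
  ext i j; simp [Matrix.mul_apply]

lemma submatrix_mul_submatrix {X Y Z W W' : Type*} [Fintype Y]
    (M : Matrix X Y ℂ) (N : Matrix Y Z ℂ) (f : W → X) (g : W' → Z) :
    (M.submatrix f id) * (N.submatrix id g) = (M * N).submatrix f g := by
  ext i j; simp [Matrix.mul_apply]

lemma sum_single (hr' : r ≤ p) (c : Fin r → ℂ) :
    (∑ j : Fin r, c j • (Pi.single (Sum.inl (Fin.castLE hr' j)) (1:ℂ) : Fin p ⊕ Fin p → ℂ))
      = Sum.elim (fun i : Fin p => if h : (i:ℕ) < r then c ⟨(i:ℕ), h⟩ else 0) 0 := by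
  funext i0
  rw [Finset.sum_apply]
  simp only [Pi.smul_apply, smul_eq_mul]
  cases i0 with
  | inl i =>
    have hterm : ∀ b : Fin r,
        c b * (Pi.single (Sum.inl (Fin.castLE hr' b)) (1:ℂ) : Fin p ⊕ Fin p → ℂ) (Sum.inl i)
          = if i = Fin.castLE hr' b then c b else 0 := by
      intro b
      rw [Pi.single_apply]
      by_cases h : (Sum.inl i : Fin p ⊕ Fin p) = Sum.inl (Fin.castLE hr' b)
      · have h1 : i = Fin.castLE hr' b := by injection h
        rw [if_pos h, if_pos h1, mul_one]
      · have h1 : ¬(i = Fin.castLE hr' b) := fun hh => h (by rw [hh])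
        rw [if_neg h, if_neg h1, mul_zero]
    rw [Finset.sum_congr rfl (fun b _ => hterm b)]
    by_cases hi : (i:ℕ) < r
    · rw [Finset.sum_eq_single (⟨(i:ℕ), hi⟩ : Fin r)]
      · have h1 : i = Fin.castLE hr' (⟨(i:ℕ), hi⟩ : Fin r) := by ext; rfl
        rw [if_pos h1, Sum.elim_inl, dif_pos hi]
      · intro b _ hb
        have h1 : ¬(i = Fin.castLE hr' b) := by
          intro hh
          apply hb
          ext
          exact (congrArg Fin.val hh).symm
        rw [if_neg h1]
      · intro h; exact absurd (Finset.mem_univ _) h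
    · rw [Finset.sum_eq_zero]
      · rw [Sum.elim_inl, dif_neg hi]
      · intro b _
        have h1 : ¬(i = Fin.castLE hr' b) := by
          intro hh
          rw [hh] at hi
          exact hi (by simpa using b.isLt)
        rw [if_neg h1]
  | inr i =>
    rw [Finset.sum_eq_zero]
    · simp
    · intro b _
      have h1 : (Pi.single (Sum.inl (Fin.castLE hr' b)) (1:ℂ) : Fin p ⊕ Fin p → ℂ)
          (Sum.inr i) = 0 := by
        simp [Pi.single_apply]
      rw [h1, mul_zero]

lemma extend_isotropic_frame (p : ℕ) : ∀ (r : ℕ), r ≤ p →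
    ∀ (x : Matrix (Fin p ⊕ Fin p) (Fin r) ℂ),
      LinearIndependent ℂ (fun j => xᵀ j) → xᵀ * J p * x = 0 →
      ∃ k : Matrix (Fin p ⊕ Fin p) (Fin p ⊕ Fin p) ℂ, Sp k ∧ k * Emat p r = x := by
  intro r
  induction r with
  | zero =>
    intro _ x _ _
    refine ⟨1, Sp_one, ?_⟩
    rw [Matrix.one_mul]
    ext i j
    exact j.elim0
  | succ r IH =>
    intro hr1 x hind hiso
    have hrp : r < p := hr1
    have hr' : r ≤ p := le_of_lt hrp
    set x₁ : Matrix (Fin p ⊕ Fin p) (Fin r) ℂ := x.submatrix id Fin.castSucc with hx₁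
    have hind₁ : LinearIndependent ℂ (fun j => x₁ᵀ j) := by
      have he : (fun j : Fin r => x₁ᵀ j) = (fun j : Fin (r+1) => xᵀ j) ∘ Fin.castSucc := rfl
      rw [he]
      exact hind.comp _ (Fin.castSucc_injective r)
    have hiso₁ : x₁ᵀ * J p * x₁ = 0 := by
      have h2 : x₁ᵀ = xᵀ.submatrix Fin.castSucc id := rfl
      rw [h2, hx₁, submatrix_row_mul, submatrix_mul_submatrix, hiso]
      ext i j; simp
    obtain ⟨k₀, hk₀, hk₀E⟩ := IH hr' x₁ hind₁ hiso₁
    obtain ⟨ki, hki1, hki2, hkiSp⟩ := hk₀.inv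
    set y := ki * x with hy
    have hyx : k₀ * y = x := by rw [hy, ← Matrix.mul_assoc, hki1, Matrix.one_mul]
    have hyE : y.submatrix id Fin.castSucc = Emat p r := by
      have h4 : y.submatrix id Fin.castSucc = ki * x₁ := by rw [hy, hx₁, mul_submatrix_col]
      rw [h4, ← hk₀E, ← Matrix.mul_assoc, hki2, Matrix.one_mul]
    have hyiso : yᵀ * J p * y = 0 := by
      have h3 : yᵀ * J p * y = xᵀ * (kiᵀ * J p * ki) * x := by
        rw [hy]; simp only [Matrix.transpose_mul, Matrix.mul_assoc]
      rw [h3, hkiSp, hiso]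
    have hyind : LinearIndependent ℂ (fun j => yᵀ j) := by
      have he : (fun j : Fin (r+1) => yᵀ j) = fun j => ki.mulVecLin (xᵀ j) := by
        funext j; funext i
        simp [hy, Matrix.mul_apply, Matrix.mulVec, dotProduct]
      rw [he]
      refine LinearIndependent.map' hind ki.mulVecLin ?_
      rw [Matrix.ker_mulVecLin_eq_bot_iff]
      intro v hv
      have h5 : (k₀ * ki).mulVec v = 0 := by
        rw [← Matrix.mulVec_mulVec, hv, Matrix.mulVec_zero]
      rwa [hki1, Matrix.one_mulVec] at h5
    set u : Fin p ⊕ Fin p → ℂ := fun i => y i (Fin.last r) with hu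
    have hcolcast : ∀ j : Fin r,
        (fun i => y i (Fin.castSucc j)) = Pi.single (Sum.inl (Fin.castLE hr' j)) (1:ℂ) := by
      intro j
      have h6 : (fun i => y i (Fin.castSucc j)) = fun i => Emat p r i j := by
        funext i; exact congrFun (congrFun hyE i) j
      rw [h6, Emat_col hr' j]
    set uL : Fin p → ℂ := fun i => u (Sum.inl i) with huL
    set uR : Fin p → ℂ := fun i => u (Sum.inr i) with huR
    have husum : u = Sum.elim uL uR := by funext i; cases i <;> rfl
    have hJu : (J p).mulVec u = Sum.elim uR (-uL) := by
      rw [husum, J, Matrix.fromBlocks_mulVec, elim_comp_inl, elim_comp_inr]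
      simp [Matrix.neg_mulVec]
    have hu_inr : ∀ i : Fin p, (i:ℕ) < r → uR i = 0 := by
      intro i hi
      have hz : (yᵀ * J p * y) (Fin.castSucc ⟨(i:ℕ), hi⟩) (Fin.last r) = 0 := by
        rw [hyiso]; rfl
      have hentry : (yᵀ * J p * y) (Fin.castSucc ⟨(i:ℕ), hi⟩) (Fin.last r)
          = (fun i' => y i' (Fin.castSucc ⟨(i:ℕ), hi⟩)) ⬝ᵥ ((J p).mulVec u) := by
        rw [Matrix.mul_assoc, Matrix.mul_apply]
        simp only [Matrix.transpose_apply, dotProduct, Matrix.mulVec, Matrix.mul_apply, hu]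
      rw [hentry, hcolcast ⟨(i:ℕ), hi⟩, hJu] at hz
      have hcast : Fin.castLE hr' (⟨(i:ℕ), hi⟩ : Fin r) = i := by ext; rfl
      rw [hcast] at hz
      simpa using hz
    set av : Fin p → ℂ := fun i => if (i:ℕ) < r then uL i else 0 with hav
    set α : Fin p → ℂ := fun i => if (i:ℕ) < r then 0 else uL i with hαdef
    have hαlow : ∀ i : Fin p, (i:ℕ) < r → α i = 0 := by
      intro i hi; simp [hαdef, hi]
    have hav_high : ∀ i : Fin p, ¬((i:ℕ) < r) → av i = 0 := by
      intro i hi; simp [hav, hi]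
    have hnondeg : ¬(α = 0 ∧ uR = 0) := by
      rintro ⟨hα0, hβ0⟩
      have husum2 : u = ∑ j : Fin r,
          uL (Fin.castLE hr' j) • (Pi.single (Sum.inl (Fin.castLE hr' j)) (1:ℂ) :
            Fin p ⊕ Fin p → ℂ) := by
        rw [sum_single hr' (fun j => uL (Fin.castLE hr' j))]
        funext i0
        cases i0 with
        | inl i =>
          simp only [Sum.elim_inl]
          by_cases hi : (i:ℕ) < r
          · have hcc : Fin.castLE hr' (⟨(i:ℕ), hi⟩ : Fin r) = i := by ext; rfl
            rw [dif_pos hi, hcc]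
          · rw [dif_neg hi]
            have h0 := congrFun hα0 i
            simp only [Pi.zero_apply, hαdef] at h0
            rw [if_neg hi] at h0
            exact h0
        | inr i =>
          simp only [Sum.elim_inr]
          exact congrFun hβ0 i
      rw [Fintype.linearIndependent_iff] at hyind
      set g : Fin (r+1) → ℂ :=
        fun j => if h : (j:ℕ) < r then uL (Fin.castLE hr' ⟨(j:ℕ), h⟩) else -1 with hg
      have hzero : ∑ j : Fin (r+1), g j • yᵀ j = 0 := by
        rw [Fin.sum_univ_castSucc]
        have hlast : ¬((Fin.last r : ℕ) < r) := by simp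
        have hglast : g (Fin.last r) = -1 := by simp only [hg]; exact dif_neg hlast
        have hterm : ∀ j : Fin r, g (Fin.castSucc j) • yᵀ (Fin.castSucc j)
            = uL (Fin.castLE hr' j) • (Pi.single (Sum.inl (Fin.castLE hr' j)) (1:ℂ) :
                Fin p ⊕ Fin p → ℂ) := by
          intro j
          have hjlt : ((Fin.castSucc j : Fin (r+1)):ℕ) < r := j.isLt
          have hgj : g (Fin.castSucc j) = uL (Fin.castLE hr' j) := by
            simp only [hg]
            rw [dif_pos hjlt]
            rfl
          rw [hgj]
          congr 1
          exact hcolcast j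
        rw [Finset.sum_congr rfl (fun j _ => hterm j), hglast, ← husum2]
        have hulast : yᵀ (Fin.last r) = u := rfl
        rw [hulast]
        simp
      have := hyind g hzero (Fin.last r)
      simp only [hg] at this
      rw [dif_neg (by simp : ¬((Fin.last r : ℕ) < r))] at this
      exact absurd this (by norm_num)
    obtain ⟨kv, hkvSp, hkvcol, hkvrp, hkva⟩ := frame_step hrp α uR hαlow hu_inr hnondeg
    -- build ka
    have ha_rp : av ⟨r, hrp⟩ = 0 := by simp [hav]
    set er : Fin p → ℂ := Pi.single ⟨r, hrp⟩ 1 with herdef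
    set Pa : Matrix (Fin p) (Fin p) ℂ := 1 + vecMulVec av er with hPa
    set Pai : Matrix (Fin p) (Fin p) ℂ := 1 + vecMulVec (-av) er with hPai
    have hcomb1 : av + -av + (-av) ⟨r, hrp⟩ • av = 0 := by
      rw [Pi.neg_apply, ha_rp, neg_zero, zero_smul, add_zero, add_neg_cancel]
    have hcomb2 : -av + av + av ⟨r, hrp⟩ • (-av) = 0 := by
      rw [ha_rp, zero_smul, add_zero, neg_add_cancel]
    have hPa1 : Pa * Pai = 1 := by
      rw [hPa, hPai, herdef, elem_key, hcomb1, vmv_zero, add_zero]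
    have hPa2 : Pai * Pa = 1 := by
      rw [hPa, hPai, herdef, elem_key, hcomb2, vmv_zero, add_zero]
    set ka : Matrix (Fin p ⊕ Fin p) (Fin p ⊕ Fin p) ℂ :=
      Matrix.fromBlocks Pa 0 0 Paiᵀ with hka
    have hkaSp : Sp ka := Sp_GL Pa Pai hPa1 hPa2
    have hka_col : ∀ c : Fin p, (c:ℕ) < r →
        ka.mulVec (Pi.single (Sum.inl c) 1) = Pi.single (Sum.inl c) 1 := by
      intro c hc
      rw [hka, single_inl_eq_elim, GL_mulVec, Matrix.mulVec_zero]
      have h9 : Pa.mulVec (Pi.single c 1) = Pi.single c 1 := by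
        rw [hPa, Matrix.add_mulVec, Matrix.one_mulVec, vmv_mulVec]
        have h10 : er ⬝ᵥ Pi.single c 1 = 0 := by
          rw [herdef]
          have hne : c ≠ ⟨r, hrp⟩ := by intro h; rw [h] at hc; exact absurd hc (lt_irrefl r)
          simp [Pi.single_apply, hne]
        rw [h10, zero_smul, add_zero]
      rw [h9]
    have hka_rp : ka.mulVec (Pi.single (Sum.inl ⟨r, hrp⟩) 1) = Sum.elim (er + av) 0 := by
      rw [hka, single_inl_eq_elim, GL_mulVec, Matrix.mulVec_zero]
      have h9 : Pa.mulVec (Pi.single ⟨r, hrp⟩ 1) = er + av := by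
        rw [hPa, Matrix.add_mulVec, Matrix.one_mulVec, vmv_mulVec]
        have h10 : er ⬝ᵥ Pi.single (⟨r, hrp⟩ : Fin p) 1 = 1 := by
          rw [herdef]; simp
        rw [h10, one_smul, herdef]
      rw [h9]
    -- final column identity
    have hk1E : (kv * ka) * Emat p (r+1) = y := by
      apply ext_col
      intro j
      rw [mul_col, Emat_col hr1 j, ← Matrix.mulVec_mulVec]
      by_cases hj : (j:ℕ) < r
      · have hcast1 : Fin.castLE hr1 j = Fin.castLE hr' (⟨(j:ℕ), hj⟩ : Fin r) := by ext; rfl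
        rw [hcast1, hka_col _ (by simpa using hj), hkvcol _ (by simpa using hj)]
        exact (hcolcast ⟨(j:ℕ), hj⟩).symm
      · have hjr : (j:ℕ) = r := by omega
        have hcast2 : Fin.castLE hr1 j = (⟨r, hrp⟩ : Fin p) := by ext; exact hjr
        rw [hcast2, hka_rp]
        have hsplit : (Sum.elim (er + av) 0 : Fin p ⊕ Fin p → ℂ)
            = Pi.single (Sum.inl (⟨r, hrp⟩ : Fin p)) 1 + Sum.elim av 0 := by
          funext i0
          cases i0 with
          | inl c => simp [herdef, Pi.single_apply]
          | inr c => simp [Pi.single_apply]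
        rw [hsplit, Matrix.mulVec_add, hkvrp, hkva av hav_high]
        have hjlast : j = Fin.last r := by ext; exact hjr
        rw [hjlast]
        funext i0
        cases i0 with
        | inl c =>
          simp only [Pi.add_apply, Sum.elim_inl, hαdef, hav]
          by_cases hc : (c:ℕ) < r
          · rw [if_pos hc, if_pos hc, zero_add]
          · rw [if_neg hc, if_neg hc, add_zero]
        | inr c =>
          simp only [Pi.add_apply, Sum.elim_inr, Pi.zero_apply, add_zero]
          rfl
    refine ⟨k₀ * (kv * ka), hk₀.mul (hkvSp.mul hkaSp), ?_⟩
    rw [Matrix.mul_assoc, hk1E, hyx]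

lemma exists_g {r n : ℕ} (c c' : Matrix (Fin r) (Fin n) ℂ)
    (hc : Function.Surjective c.mulVecLin) (hc' : Function.Surjective c'.mulVecLin) :
    ∃ g : Matrix (Fin n) (Fin n) ℂ, IsUnit g ∧ c * g = c' := by
  set f := c.mulVecLin with hf
  set f' := c'.mulVecLin with hf'
  obtain ⟨s, hs⟩ := f.exists_rightInverse_of_surjective (LinearMap.range_eq_top.2 hc)
  obtain ⟨s', hs'⟩ := f'.exists_rightInverse_of_surjective (LinearMap.range_eq_top.2 hc')
  have hd : Module.finrank ℂ (LinearMap.ker f') = Module.finrank ℂ (LinearMap.ker f) := by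
    have h1 := LinearMap.finrank_range_add_finrank_ker f
    have h2 := LinearMap.finrank_range_add_finrank_ker f'
    rw [LinearMap.range_eq_top.2 hc, finrank_top] at h1
    rw [LinearMap.range_eq_top.2 hc', finrank_top] at h2
    omega
  have κ := LinearEquiv.ofFinrankEq (R := ℂ) _ _ hd
  set ψ : (Fin n → ℂ) →ₗ[ℂ] (Fin n → ℂ) := LinearMap.id - s' ∘ₗ f' with hψ
  have hψval : ∀ w, ψ w = w - s' (f' w) := fun w => rfl
  have hmem : ∀ w, ψ w ∈ LinearMap.ker f' := by
    intro w
    rw [LinearMap.mem_ker, hψval]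
    have h3 : f' (s' (f' w)) = f' w := LinearMap.ext_iff.1 hs' (f' w)
    simp [h3]
  set π' : (Fin n → ℂ) →ₗ[ℂ] (LinearMap.ker f') :=
    ψ.codRestrict (LinearMap.ker f') hmem with hπ'
  have hπ'val : ∀ w, ((π' w : Fin n → ℂ)) = w - s' (f' w) := fun w => rfl
  set φ : (Fin n → ℂ) →ₗ[ℂ] (Fin n → ℂ) :=
    (s ∘ₗ f') + (LinearMap.ker f).subtype ∘ₗ (κ : LinearMap.ker f' →ₗ[ℂ] LinearMap.ker f) ∘ₗ π'
    with hφ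
  have hφval : ∀ w, φ w = s (f' w) + ((κ (π' w) : Fin n → ℂ)) := fun w => rfl
  have hfφ : ∀ w, f (φ w) = f' w := by
    intro w
    rw [hφval, map_add]
    have h1 : f (s (f' w)) = f' w := LinearMap.ext_iff.1 hs (f' w)
    have h2 : f ((κ (π' w) : Fin n → ℂ)) = 0 := (κ (π' w)).2
    rw [h1, h2, add_zero]
  have hinj : Function.Injective φ := by
    rw [injective_iff_map_eq_zero]
    intro w hw
    have h1 : f' w = 0 := by rw [← hfφ w, hw, map_zero]
    have h2 : ((κ (π' w) : Fin n → ℂ)) = 0 := by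
      have := hφval w
      rw [hw, h1, map_zero, zero_add] at this
      exact this.symm
    have h3 : κ (π' w) = 0 := Subtype.ext h2
    have h0 : κ (0 : LinearMap.ker f') = 0 :=
      (κ : LinearMap.ker f' →ₗ[ℂ] LinearMap.ker f).map_zero
    have h4 : π' w = 0 := κ.injective (by rw [h3, h0])
    have h5 : (0 : Fin n → ℂ) = w - s' (f' w) := by
      rw [← hπ'val, h4]
      rfl
    rw [h1, map_zero, sub_zero] at h5
    exact h5.symm
  have hsurj : Function.Surjective φ :=
    (LinearMap.injective_iff_surjective_of_finrank_eq_finrank rfl).1 hinj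
  set e := LinearEquiv.ofBijective φ ⟨hinj, hsurj⟩ with he
  set g := LinearMap.toMatrix' φ with hg
  set gi := LinearMap.toMatrix' (e.symm : (Fin n → ℂ) →ₗ[ℂ] (Fin n → ℂ)) with hgi
  have hgmv : g.mulVecLin = φ := by
    rw [← Matrix.toLin'_apply', hg, Matrix.toLin'_toMatrix']
  have hgg : g * gi = 1 := by
    rw [hg, hgi, ← LinearMap.toMatrix'_comp]
    have hcomp : φ ∘ₗ (e.symm : (Fin n → ℂ) →ₗ[ℂ] (Fin n → ℂ)) = LinearMap.id := by
      apply LinearMap.ext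
      intro w
      have h6 : φ (e.symm w) = e (e.symm w) := rfl
      rw [LinearMap.comp_apply, LinearMap.id_apply]
      rw [show ((e.symm : (Fin n → ℂ) →ₗ[ℂ] (Fin n → ℂ)) w) = e.symm w from rfl, h6,
        e.apply_symm_apply]
    rw [hcomp, LinearMap.toMatrix'_id]
  have hgg2 : gi * g = 1 := by
    rw [hg, hgi, ← LinearMap.toMatrix'_comp]
    have hcomp : (e.symm : (Fin n → ℂ) →ₗ[ℂ] (Fin n → ℂ)) ∘ₗ φ = LinearMap.id := by
      apply LinearMap.ext
      intro w
      have h6 : φ w = e w := rfl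
      rw [LinearMap.comp_apply, LinearMap.id_apply, h6]
      exact e.symm_apply_apply w
    rw [hcomp, LinearMap.toMatrix'_id]
  refine ⟨g, ⟨⟨g, gi, hgg, hgg2⟩, rfl⟩, ?_⟩
  have hmv : (c * g).mulVecLin = c'.mulVecLin := by
    rw [Matrix.mulVecLin_mul, hgmv]
    apply LinearMap.ext
    intro w
    rw [LinearMap.comp_apply]
    exact hfφ w
  ext i j
  have h7 := congrFun (congrArg (fun (h : (Fin n → ℂ) →ₗ[ℂ] (Fin r → ℂ)) =>
    h (Pi.single j 1)) hmv) i
  simp only [Matrix.mulVecLin_apply, Matrix.mulVec_single_one] at h7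
  exact h7

lemma reduce (p n : ℕ) (hn : n ≤ p) (A : Matrix (Fin p ⊕ Fin p) (Fin n) ℂ)
    (hA : Aᵀ * J p * A = 0) :
    ∀ r, A.rank = r →
    ∃ (k : Matrix (Fin p ⊕ Fin p) (Fin p ⊕ Fin p) ℂ) (c : Matrix (Fin r) (Fin n) ℂ),
      Sp k ∧ Function.Surjective c.mulVecLin ∧ A = k * Emat p r * c := by
  intro r hrk
  set W := LinearMap.range A.mulVecLin with hW
  have hfr : Module.finrank ℂ W = r := hrk
  set b := (Module.finBasis ℂ W).reindex (finCongr hfr) with hb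
  set x : Matrix (Fin p ⊕ Fin p) (Fin r) ℂ :=
    Matrix.of (fun i j => ((b j : (Fin p ⊕ Fin p) → ℂ) i)) with hx
  have hx_col : ∀ j, (fun i => x i j) = ((b j : (Fin p ⊕ Fin p) → ℂ)) := fun j => rfl
  have hx_ind : LinearIndependent ℂ (fun j => xᵀ j) := by
    have h1 : (fun j : Fin r => xᵀ j) = fun j => W.subtype (b j) := rfl
    rw [h1]
    exact b.linearIndependent.map' W.subtype (Submodule.ker_subtype W)
  have hx_iso : xᵀ * J p * x = 0 := by
    have hc : ∀ j : Fin r, ∃ w, A.mulVec w = (b j : (Fin p ⊕ Fin p) → ℂ) := by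
      intro j
      obtain ⟨w, hw⟩ := LinearMap.mem_range.mp (b j).2
      exact ⟨w, hw⟩
    choose wv hwv using hc
    have hxd : x = A * Matrix.of (fun i j => wv j i) := by
      ext i j
      have h4 : x i j = (A.mulVec (wv j)) i := (congrFun (hwv j) i).symm
      rw [Matrix.mul_apply, h4]
      simp [Matrix.mulVec, dotProduct]
    rw [hxd]
    calc (A * Matrix.of (fun i j => wv j i))ᵀ * J p * (A * Matrix.of (fun i j => wv j i))
        = (Matrix.of (fun i j => wv j i))ᵀ * (Aᵀ * J p * A) * Matrix.of (fun i j => wv j i) := by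
          simp only [Matrix.transpose_mul, Matrix.mul_assoc]
      _ = 0 := by rw [hA]; simp
  have hrle : r ≤ p := by
    have h3 := A.rank_le_card_width
    simp only [Fintype.card_fin] at h3
    omega
  obtain ⟨k, hkSp, hkE⟩ := extend_isotropic_frame p r hrle x hx_ind hx_iso
  have memW : ∀ j : Fin n, (fun i' => A i' j) ∈ W := by
    intro j
    refine ⟨Pi.single j 1, ?_⟩
    have := Matrix.mulVec_single_one A j
    simpa [Matrix.mulVecLin_apply, Matrix.col_apply'] using this
  set c : Matrix (Fin r) (Fin n) ℂ :=
    Matrix.of (fun i j => (b.repr ⟨fun i' => A i' j, memW j⟩) i) with hcdef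
  have hAxc : A = x * c := by
    ext i j
    have hbj := b.sum_repr ⟨fun i' => A i' j, memW j⟩
    have h3 := congrArg (fun z : W => (z : (Fin p ⊕ Fin p) → ℂ) i) hbj
    simp only [AddSubmonoidClass.coe_finset_sum, SetLike.val_smul, Finset.sum_apply,
      Pi.smul_apply, smul_eq_mul] at h3
    rw [Matrix.mul_apply]
    calc A i j = ∑ k : Fin r, (b.repr ⟨fun i' => A i' j, memW j⟩) k
          * ((b k : (Fin p ⊕ Fin p) → ℂ) i) := h3.symm
      _ = ∑ k : Fin r, x i k * c k j := by
          exact Finset.sum_congr rfl (fun k _ => mul_comm _ _)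
  have hc_surj : Function.Surjective c.mulVecLin := by
    intro t
    have hmemx : x.mulVec t ∈ W := by
      have hform : x.mulVec t = ∑ j : Fin r, t j • ((b j : (Fin p ⊕ Fin p) → ℂ)) := by
        funext i
        simp only [Matrix.mulVec, dotProduct, Finset.sum_apply, Pi.smul_apply, smul_eq_mul]
        exact Finset.sum_congr rfl (fun k _ => mul_comm _ _)
      rw [hform]
      exact Submodule.sum_mem W (fun j _ => Submodule.smul_mem W _ (b j).2)
    obtain ⟨w, hw⟩ := LinearMap.mem_range.mp hmemx
    refine ⟨w, ?_⟩
    have hinj : Function.Injective x.mulVec := Matrix.mulVec_injective_iff.mpr hx_ind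
    have h5 : x.mulVec (c.mulVec w) = x.mulVec t := by
      rw [Matrix.mulVec_mulVec, ← hAxc]
      simpa [Matrix.mulVecLin_apply] using hw
    exact hinj h5
  exact ⟨k, c, hkSp, hc_surj, by rw [hAxc, ← hkE, Matrix.mul_assoc]⟩

lemma main_sum (p n r : ℕ) (hn : n ≤ p) (A A' : Matrix (Fin p ⊕ Fin p) (Fin n) ℂ)
    (hA : Aᵀ * J p * A = 0) (hA' : A'ᵀ * J p * A' = 0)
    (hrA : A.rank = r) (hrA' : A'.rank = r) :
    ∃ (k : Matrix (Fin p ⊕ Fin p) (Fin p ⊕ Fin p) ℂ) (g : Matrix (Fin n) (Fin n) ℂ),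
      Sp k ∧ IsUnit g ∧ A' = k * A * g := by
  obtain ⟨k, c, hk, hc, hAe⟩ := reduce p n hn A hA r hrA
  obtain ⟨k', c', hk', hc', hAe'⟩ := reduce p n hn A' hA' r hrA'
  obtain ⟨g, hg, hcg⟩ := exists_g c c' hc hc'
  obtain ⟨ki, hki1, hki2, hkiSp⟩ := hk.inv
  refine ⟨k' * ki, g, hk'.mul hkiSp, hg, ?_⟩
  have hEc : Emat p r * c = ki * A := by
    rw [hAe, ← Matrix.mul_assoc, ← Matrix.mul_assoc, hki2, Matrix.one_mul]
  have hfin : k' * ki * A * g = k' * Emat p r * c' := by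
    rw [← hcg]
    calc k' * ki * A * g = k' * (ki * A) * g := by rw [Matrix.mul_assoc k' ki A]
      _ = k' * (Emat p r * c) * g := by rw [← hEc]
      _ = k' * Emat p r * (c * g) := by simp only [Matrix.mul_assoc]
  rw [hfin, ← hAe']

noncomputable def σe (p : ℕ) : (Fin p ⊕ Fin p) ≃ Fin (2 * p) :=
  finSumFinEquiv.trans (finCongr (two_mul p).symm)

lemma σe_inl (p : ℕ) (a : Fin p) : ((σe p (Sum.inl a)) : ℕ) = (a : ℕ) := by
  simp [σe]

lemma σe_inr (p : ℕ) (a : Fin p) : ((σe p (Sum.inr a)) : ℕ) = p + (a : ℕ) := by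
  simp [σe]
  omega

lemma J_eq (p : ℕ) : SpAux.J p = (Jmat p).submatrix (σe p) (σe p) := by
  ext i j
  cases i with
  | inl a =>
    cases j with
    | inl b =>
      have hva := σe_inl p a
      have hvb := σe_inl p b
      have hbp := b.isLt
      simp only [SpAux.J, Matrix.fromBlocks_apply₁₁, Matrix.submatrix_apply, Jmat,
        Matrix.of_apply]
      rw [if_neg (by omega), if_neg (by omega)]
      simp
    | inr b =>
      have hva := σe_inl p a
      have hvb := σe_inr p b
      simp only [SpAux.J, Matrix.fromBlocks_apply₁₂, Matrix.submatrix_apply, Jmat,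
        Matrix.of_apply]
      by_cases hab : a = b
      · subst hab
        rw [if_pos (by omega)]
        simp
      · have hne : (a:ℕ) ≠ (b:ℕ) := fun h => hab (Fin.ext h)
        have hap := a.isLt
        rw [if_neg (by omega), if_neg (by omega)]
        simp [Matrix.one_apply, hab]
  | inr a =>
    cases j with
    | inl b =>
      have hva := σe_inr p a
      have hvb := σe_inl p b
      have hbp := b.isLt
      simp only [SpAux.J, Matrix.fromBlocks_apply₂₁, Matrix.submatrix_apply, Jmat,
        Matrix.of_apply]
      by_cases hab : a = b
      · subst hab
        rw [if_neg (by omega), if_pos (by omega)]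
        simp
      · have hne : (a:ℕ) ≠ (b:ℕ) := fun h => hab (Fin.ext h)
        rw [if_neg (by omega), if_neg (by omega)]
        simp [Matrix.one_apply, hab]
    | inr b =>
      have hva := σe_inr p a
      have hvb := σe_inr p b
      have hap := a.isLt
      have hbp := b.isLt
      simp only [SpAux.J, Matrix.fromBlocks_apply₂₂, Matrix.submatrix_apply, Jmat,
        Matrix.of_apply]
      rw [if_neg (by omega), if_neg (by omega)]
      simp

lemma rank_row_equiv {m m' n' : Type*} [Fintype m] [Fintype m'] [Fintype n'] [DecidableEq n']
    (e : m' ≃ m) (B : Matrix m n' ℂ) : (B.submatrix ⇑e id).rank = B.rank := by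
  rw [Matrix.rank, Matrix.rank]
  have h1 : (B.submatrix ⇑e id) = B.submatrix ⇑e ⇑(Equiv.refl n') := rfl
  rw [h1, Matrix.mulVecLin_submatrix]
  have h2 : (LinearMap.funLeft ℂ ℂ ⇑(Equiv.refl n').symm) = LinearMap.id := by
    apply LinearMap.ext; intro v; rfl
  rw [h2, LinearMap.comp_id, LinearMap.range_comp]
  rw [show (LinearMap.funLeft ℂ ℂ ⇑e)
    = ((LinearEquiv.funCongrLeft ℂ ℂ e : (m → ℂ) ≃ₗ[ℂ] (m' → ℂ)) :
        (m → ℂ) →ₗ[ℂ] (m' → ℂ)) from rfl]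
  exact LinearEquiv.finrank_map_eq _ _

end SpAux


open SpAux

/-- In the stable range `n ≤ p`, two matrices in the null cone
`{A ∈ M_{2p,n}(ℂ) : AᵀJ_pA = 0}` of the same rank lie in the same
`Sp(2p,ℂ) × GL_n(ℂ)`-orbit under the action `(k,g)·A = kAgᵀ`. -/
theorem nullConeSp_orbits_classified_by_rank (p n : ℕ) (hp : 0 < p) (hn : 0 < n)
    (h : n ≤ p) (A A' : Matrix (Fin (2 * p)) (Fin n) ℂ)
    (hA : Aᵀ * Jmat p * A = 0) (hA' : A'ᵀ * Jmat p * A' = 0)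
    (hrank : A.rank = A'.rank) :
    ∃ (k : Matrix (Fin (2 * p)) (Fin (2 * p)) ℂ) (g : Matrix (Fin n) (Fin n) ℂ),
      kᵀ * Jmat p * k = Jmat p ∧ IsUnit g ∧ A' = k * A * gᵀ := by
  set σ := σe p with hσ
  set B := A.submatrix ⇑σ id with hB
  set B' := A'.submatrix ⇑σ id with hB'
  have hiso : ∀ (C : Matrix (Fin (2*p)) (Fin n) ℂ), Cᵀ * Jmat p * C = 0 →
      (C.submatrix ⇑σ id)ᵀ * SpAux.J p * (C.submatrix ⇑σ id) = 0 := by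
    intro C hC
    have h1 : (C.submatrix ⇑σ id)ᵀ = Cᵀ.submatrix id ⇑σ := rfl
    rw [h1, J_eq p, Matrix.submatrix_mul_equiv, Matrix.submatrix_mul_equiv, hC]
    ext i j; simp
  have hiB := hiso A hA
  have hiB' := hiso A' hA'
  have hrB : B.rank = A.rank := rank_row_equiv σ A
  have hrB' : B'.rank = A.rank := by rw [hB', rank_row_equiv σ A', hrank]
  obtain ⟨kt, g, hktSp, hg, heq⟩ := main_sum p n A.rank h B B' hiB hiB' hrB hrB'
  set k := kt.submatrix ⇑σ.symm ⇑σ.symm with hk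
  have hktk : kt = k.submatrix ⇑σ ⇑σ := by
    rw [hk, Matrix.submatrix_submatrix]
    have h2 : (⇑σ.symm ∘ ⇑σ) = id := by funext z; simp
    rw [h2, Matrix.submatrix_id_id]
  have hJm : Jmat p = (SpAux.J p).submatrix ⇑σ.symm ⇑σ.symm := by
    rw [J_eq p, Matrix.submatrix_submatrix]
    have h2 : (⇑σ ∘ ⇑σ.symm) = id := by funext z; simp
    rw [h2, Matrix.submatrix_id_id]
  refine ⟨k, gᵀ, ?_, ?_, ?_⟩
  · have h1 : kᵀ = ktᵀ.submatrix ⇑σ.symm ⇑σ.symm := by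
      rw [hk, Matrix.transpose_submatrix]
    rw [h1, hJm, Matrix.submatrix_mul_equiv, hk, Matrix.submatrix_mul_equiv, hktSp]
  · exact (Matrix.isUnit_iff_isUnit_det _).2 (by
      rw [Matrix.det_transpose]
      exact (Matrix.isUnit_iff_isUnit_det _).1 hg)
  · rw [Matrix.transpose_transpose]
    have h5 : B' = ((k * A) * g).submatrix ⇑σ id := by
      rw [heq, hktk, hB, Matrix.submatrix_mul_equiv, submatrix_row_mul]
    ext i j
    have h6 := congrFun (congrFun (hB' ▸ h5) (σ.symm i)) j
    simp only [Matrix.submatrix_apply, id_eq, Equiv.apply_symm_apply] at h6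
    rw [Matrix.mul_assoc] at h6 ⊢
    exact h6
end
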